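/- arXiv:math/0504472 — 6 statements merged into one kernel-verified Lean document; each statement's English description precedes it below -/
import Mathlib

section
/- Szemerédi regularity lemma (probabilistic version): Let ε > 0, m ≥ 0, let F : ℝ⁺ → ℝ⁺ be a monotone increasing function, and let I be a finite index set. Then there exists a real number M₀ = M₀(ε, F, m) with the following property. For every probability space (Ω, B_max, P), every collection (B_{i,max})_{i∈I} of sub-σ-algebras of B_max, and every random variable X ∈ L²(B_max) with ‖X‖_{L²} ≤ 1, there exist finite sub-σ-algebras B_i ⊆ B'_i ⊆ B_{i,max} for each i ∈ I and a real number M with m ≤ M ≤ M₀ such that: (complexity bound) complex(B_i) ≤ M for all i ∈ I; (coarse and fine approximations are close) ‖E(X | ⋁_{i∈I} B'_i) − E(X | ⋁_{i∈I} B_i)‖_{L²} ≤ ε; and (fine approximation is extremely accurate) for every collection of events (A_i)_{i∈I} with A_i ∈ B_{i,max} for all i ∈ I, |E( (X − E(X | ⋁_{i∈I} B'_i)) · ∏_{i∈I} 1_{A_i} )| ≤ 1/F(M). -/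
open MeasureTheory

open MeasurableSpace
open scoped RealInnerProductSpace ENNReal

/-- The complexity of a σ-algebra: the least number of sets needed to generate it. -/
noncomputable def complexity {Ω : Type*} (m : MeasurableSpace Ω) : ℕ :=
  sInf {n : ℕ | ∃ S : Finset (Set Ω), S.card = n ∧ MeasurableSpace.generateFrom (↑S) = m}

section Helpers

variable {α : Type*} {m m₁ m₂ m0 : MeasurableSpace α} {μ : Measure α}

lemma SzHelper.lpMeas_mono_meas (h : m₁ ≤ m₂) : lpMeas ℝ ℝ m₁ 2 μ ≤ lpMeas ℝ ℝ m₂ 2 μ := by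
  intro f hf
  rw [mem_lpMeas_iff_aestronglyMeasurable] at *
  exact hf.mono h

lemma SzHelper.condexpL2_inner_orth (hm : m ≤ m0) (f g : α →₂[μ] ℝ)
    (hg : g ∈ lpMeas ℝ ℝ m 2 μ) :
    ⟪f - (condExpL2 ℝ ℝ hm f : α →₂[μ] ℝ), g⟫ = 0 := by
  haveI : Fact (m ≤ m0) := ⟨hm⟩
  exact Submodule.starProjection_inner_eq_zero f g hg

/-- Pythagoras for nested conditional expectations. -/
lemma SzHelper.condexpL2_pyth (hm12 : m₁ ≤ m₂) (hm1 : m₁ ≤ m0) (hm2 : m₂ ≤ m0)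
    (f : α →₂[μ] ℝ) :
    ‖(condExpL2 ℝ ℝ hm2 f : α →₂[μ] ℝ)‖ ^ 2 =
      ‖(condExpL2 ℝ ℝ hm1 f : α →₂[μ] ℝ)‖ ^ 2 +
      ‖(condExpL2 ℝ ℝ hm2 f : α →₂[μ] ℝ) - (condExpL2 ℝ ℝ hm1 f : α →₂[μ] ℝ)‖ ^ 2 := by
  set a : α →₂[μ] ℝ := (condExpL2 ℝ ℝ hm1 f : α →₂[μ] ℝ) with ha
  set b : α →₂[μ] ℝ := (condExpL2 ℝ ℝ hm2 f : α →₂[μ] ℝ) - a with hb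
  have hamem : a ∈ lpMeas ℝ ℝ m₂ 2 μ :=
    SzHelper.lpMeas_mono_meas hm12 (condExpL2 ℝ ℝ hm1 f).2
  have h1 : ⟪f - a, a⟫ = 0 := SzHelper.condexpL2_inner_orth hm1 f a (condExpL2 ℝ ℝ hm1 f).2
  have h2 : ⟪f - (condExpL2 ℝ ℝ hm2 f : α →₂[μ] ℝ), a⟫ = 0 :=
    SzHelper.condexpL2_inner_orth hm2 f a hamem
  have hba : ⟪a, b⟫ = 0 := by
    have h3 : b = (f - a) - (f - (condExpL2 ℝ ℝ hm2 f : α →₂[μ] ℝ)) := by rw [hb]; abel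
    rw [real_inner_comm, h3, inner_sub_left, h1, h2, sub_zero]
  have hab : (condExpL2 ℝ ℝ hm2 f : α →₂[μ] ℝ) = a + b := by rw [hb]; abel
  rw [hab, @norm_add_sq_real, hba]
  ring

/-- The conditional expectation a.e. equals the L² projection. -/
lemma SzHelper.condexp_ae_eq_condexpL2 [IsFiniteMeasure μ] (hm : m ≤ m0) {X : α → ℝ}
    (hX : MemLp X 2 μ) :
    μ[X|m] =ᵐ[μ] (condExpL2 ℝ ℝ hm (hX.toLp X) : α →₂[μ] ℝ) := by
  haveI : SigmaFinite (μ.trim hm) := by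
    haveI := isFiniteMeasure_trim (μ := μ) hm
    infer_instance
  refine (ae_eq_condExp_of_forall_setIntegral_eq hm (hX.integrable one_le_two)
    (fun s _ hμs => integrableOn_condExpL2_of_measure_ne_top hm hμs.ne _)
    (fun s hs hμs => ?_) (aestronglyMeasurable_condExpL2 hm _)).symm
  refine (integral_condExpL2_eq_of_fin_meas_real _ hs hμs.ne).trans ?_
  exact setIntegral_congr_ae (hm s hs) ((hX.coeFn_toLp).mono fun x hx _ => hx)

/-- Correlation of `X - E[X|m₁]` against an `m₂`-measurable set is controlled by the
energy increment between levels `m₁ ≤ m₂`. -/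
lemma SzHelper.abs_integral_sub_condexp_le [IsProbabilityMeasure μ]
    (h12 : m₁ ≤ m₂) (h2 : m₂ ≤ m0) {X : α → ℝ} (hX : MemLp X 2 μ) {T : Set α}
    (hTm : MeasurableSet[m₂] T) :
    |∫ x, (X x - (μ[X|m₁]) x) * T.indicator (1 : α → ℝ) x ∂μ| ≤
      ‖(condExpL2 ℝ ℝ h2 (hX.toLp X) : α →₂[μ] ℝ) -
        (condExpL2 ℝ ℝ (h12.trans h2) (hX.toLp X) : α →₂[μ] ℝ)‖ := by
  set xl : α →₂[μ] ℝ := hX.toLp X with hxl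
  set P : α →₂[μ] ℝ := (condExpL2 ℝ ℝ (h12.trans h2) xl : α →₂[μ] ℝ) with hP
  have hT0 : MeasurableSet T := h2 T hTm
  have hμT : μ T ≠ ∞ := measure_ne_top μ T
  set g : α →₂[μ] ℝ := indicatorConstLp 2 hT0 hμT (1 : ℝ) with hg
  have hgmem : g ∈ lpMeas ℝ ℝ m₂ 2 μ := mem_lpMeas_indicatorConstLp h2 hTm hμT
  have eq1 : ∫ x, (X x - (μ[X|m₁]) x) * T.indicator (1 : α → ℝ) x ∂μ
      = ∫ x in T, (X x - (μ[X|m₁]) x) ∂μ := by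
    rw [← integral_indicator hT0]
    congr 1
    funext x
    by_cases hx : x ∈ T <;> simp [hx]
  have hae : (fun x => X x - (μ[X|m₁]) x) =ᵐ[μ] (xl - P : α →₂[μ] ℝ) := by
    filter_upwards [hX.coeFn_toLp, SzHelper.condexp_ae_eq_condexpL2 (μ := μ) (h12.trans h2) hX,
      Lp.coeFn_sub xl P] with x h1 h2' h3
    rw [h3]
    simp only [Pi.sub_apply, h1, h2']
    rw [← h1]
  have eq2 : ∫ x in T, (X x - (μ[X|m₁]) x) ∂μ = ∫ x in T, (xl - P : α →₂[μ] ℝ) x ∂μ :=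
    integral_congr_ae (ae_restrict_of_ae hae)
  have eq3 : ∫ x in T, (xl - P : α →₂[μ] ℝ) x ∂μ = ⟪xl - P, g⟫ := by
    rw [← L2.inner_indicatorConstLp_one hT0 hμT (xl - P), real_inner_comm]
  have eq4 : ⟪xl - P, g⟫ = ⟪(condExpL2 ℝ ℝ h2 xl : α →₂[μ] ℝ) - P, g⟫ := by
    rw [hP]
    have h2' : ⟪xl - (condExpL2 ℝ ℝ h2 xl : α →₂[μ] ℝ), g⟫ = 0 :=
      SzHelper.condexpL2_inner_orth h2 xl g hgmem
    have h4 : xl - (condExpL2 ℝ ℝ (h12.trans h2) xl : α →₂[μ] ℝ) =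
        (xl - (condExpL2 ℝ ℝ h2 xl : α →₂[μ] ℝ)) +
        ((condExpL2 ℝ ℝ h2 xl : α →₂[μ] ℝ) -
          (condExpL2 ℝ ℝ (h12.trans h2) xl : α →₂[μ] ℝ)) := by abel
    rw [h4, inner_add_left, h2', zero_add]
  rw [eq1, eq2, eq3, eq4]
  calc |⟪(condExpL2 ℝ ℝ h2 xl : α →₂[μ] ℝ) - P, g⟫|
      ≤ ‖(condExpL2 ℝ ℝ h2 xl : α →₂[μ] ℝ) - P‖ * ‖g‖ := abs_real_inner_le_norm _ _
    _ ≤ ‖(condExpL2 ℝ ℝ h2 xl : α →₂[μ] ℝ) - P‖ * 1 := by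
        refine mul_le_mul_of_nonneg_left ?_ (norm_nonneg _)
        rw [hg, norm_indicatorConstLp two_ne_zero ENNReal.ofNat_ne_top]
        simp only [norm_one, one_mul]
        refine Real.rpow_le_one ENNReal.toReal_nonneg ?_ (by norm_num)
        simpa using ENNReal.toReal_mono ENNReal.one_ne_top prob_le_one
    _ = _ := mul_one _

end Helpers

/-- The σ-algebra generated by finitely many sets is finite. -/
lemma SzHelper.finite_measurableSet_generateFrom {Ω : Type*} {S : Set (Set Ω)}
    (hS : S.Finite) :
    {s : Set Ω | MeasurableSet[generateFrom S] s}.Finite := by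
  haveI : Finite ↥S := hS
  set φ : Ω → (↥S → Prop) := fun x s => x ∈ (s : Set Ω) with hφ
  have hle : generateFrom S ≤ MeasurableSpace.comap φ ⊤ := by
    refine generateFrom_le fun t ht => ?_
    exact ⟨{f | f ⟨t, ht⟩}, trivial, rfl⟩
  refine Set.Finite.subset ?_ (fun t ht => hle t ht)
  have hsub : {s : Set Ω | MeasurableSet[MeasurableSpace.comap φ ⊤] s} ⊆
      Set.range (fun G : Set (↥S → Prop) => φ ⁻¹' G) := by
    rintro t ⟨G, -, rfl⟩
    exact ⟨G, rfl⟩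
  exact (Set.finite_range _).subset hsub

lemma SzHelper.complexity_le_card {Ω : Type*} (S : Finset (Set Ω)) :
    complexity (generateFrom (↑S : Set (Set Ω))) ≤ S.card :=
  Nat.sInf_le ⟨S, rfl, rfl⟩

lemma SzHelper.prod_indicator_iInter {Ω : Type*} {I : Type} [Fintype I]
    (A : I → Set Ω) (x : Ω) :
    ∏ i, (A i).indicator (1 : Ω → ℝ) x = (⋂ i, A i).indicator (1 : Ω → ℝ) x := by
  by_cases h : x ∈ ⋂ i, A i
  · rw [Set.indicator_of_mem h]
    refine Finset.prod_eq_one fun i _ => ?_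
    rw [Set.indicator_of_mem (by exact Set.mem_iInter.mp h i)]
    rfl
  · rw [Set.indicator_of_notMem h]
    obtain ⟨i, hi⟩ : ∃ i, x ∉ A i := by simpa [Set.mem_iInter] using h
    exact Finset.prod_eq_zero (Finset.mem_univ i) (Set.indicator_of_notMem hi _)

/-- The sequence of complexity bounds used in the regularity lemma. -/
noncomputable def SzHelper.nseq (F : ℝ → ℝ) (m : ℝ) : ℕ → ℕ
  | 0 => 0
  | j + 1 => SzHelper.nseq F m j + 3 + ⌈4 * F (max m (SzHelper.nseq F m j)) ^ 2⌉₊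

lemma SzHelper.nseq_mono (F : ℝ → ℝ) (m : ℝ) : Monotone (SzHelper.nseq F m) :=
  monotone_nat_of_le_succ fun n =>
    (Nat.le_add_right _ 3).trans (Nat.le_add_right _ _)

set_option maxHeartbeats 2000000 in
/-- Szemerédi regularity lemma, probabilistic version. -/
theorem szemeredi_regularity_probabilistic
    (ε : ℝ) (hε : 0 < ε) (m : ℝ) (hm : 0 ≤ m)
    (F : ℝ → ℝ) (hF : Monotone F) (hFpos : ∀ x, 0 < F x)
    (I : Type) [Fintype I] :
    ∃ M₀ : ℝ,
      ∀ (Ω : Type) [mΩ : MeasurableSpace Ω] (μ : Measure Ω) [IsProbabilityMeasure μ]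
        (Bmax : I → MeasurableSpace Ω), (∀ i, Bmax i ≤ mΩ) →
        ∀ X : Ω → ℝ, MemLp X 2 μ → eLpNorm X 2 μ ≤ 1 →
        ∃ (B B' : I → MeasurableSpace Ω) (M : ℝ),
          -- B_i ⊆ B'_i ⊆ B_{i,max}, all finite σ-algebras
          (∀ i, B i ≤ B' i) ∧
          (∀ i, B' i ≤ Bmax i) ∧
          (∀ i, {s : Set Ω | MeasurableSet[B i] s}.Finite) ∧
          (∀ i, {s : Set Ω | MeasurableSet[B' i] s}.Finite) ∧
          -- size of M
          m ≤ M ∧ M ≤ M₀ ∧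
          -- complexity bound
          (∀ i, (complexity (B i) : ℝ) ≤ M) ∧
          -- coarse and fine approximations are close
          eLpNorm (μ[X| ⨆ i, B' i] - μ[X| ⨆ i, B i]) 2 μ ≤ ENNReal.ofReal ε ∧
          -- fine approximation is extremely accurate
          (∀ A : I → Set Ω, (∀ i, MeasurableSet[Bmax i] (A i)) →
            |∫ x, (X x - (μ[X| ⨆ i, B' i]) x) * ∏ i, (A i).indicator (1 : Ω → ℝ) x ∂μ|
              ≤ 1 / F M) := by
  classical
  set J : ℕ := ⌈2 / ε ^ 2⌉₊ + 1 with hJ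
  refine ⟨max m ((SzHelper.nseq F m J : ℕ) : ℝ), ?_⟩
  intro Ω mΩ μ _ Bmax hBle X hX hX1
  set xl : Ω →₂[μ] ℝ := hX.toLp X with hxl
  have hxnorm : ‖xl‖ ≤ 1 := by
    rw [hxl, Lp.norm_toLp]
    simpa using ENNReal.toReal_mono ENNReal.one_ne_top hX1
  -- energy of a finite family of generating sets
  set En : (I → Finset (Set Ω)) → ℝ := fun S =>
    if h : (⨆ i, generateFrom (↑(S i) : Set (Set Ω))) ≤ mΩ then
      ‖(condExpL2 ℝ ℝ h xl : Ω →₂[μ] ℝ)‖ ^ 2 else 0 with hEn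
  have En_eq : ∀ S (h : (⨆ i, generateFrom (↑(S i) : Set (Set Ω))) ≤ mΩ),
      En S = ‖(condExpL2 ℝ ℝ h xl : Ω →₂[μ] ℝ)‖ ^ 2 := fun S h => dif_pos h
  have En_nonneg : ∀ S, 0 ≤ En S := by
    intro S
    rw [hEn]
    dsimp only
    split
    · exact sq_nonneg _
    · exact le_refl 0
  have En_le_one : ∀ S, En S ≤ 1 := by
    intro S
    rw [hEn]
    dsimp only
    split
    · rename_i h
      have h1 : ‖(condExpL2 ℝ ℝ h xl : Ω →₂[μ] ℝ)‖ ≤ 1 :=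
        (norm_condExpL2_coe_le h xl).trans hxnorm
      nlinarith [norm_nonneg ((condExpL2 ℝ ℝ h xl : Ω →₂[μ] ℝ))]
    · norm_num
  have hMle : ∀ S : I → Finset (Set Ω), (∀ i, ∀ s ∈ S i, MeasurableSet[Bmax i] s) →
      (⨆ i, generateFrom (↑(S i) : Set (Set Ω))) ≤ mΩ := fun S hv =>
    iSup_le fun i => (generateFrom_le fun s hs => hv i s (by exact_mod_cast hs)).trans (hBle i)
  -- energy levels
  set ESet : ℕ → Set ℝ := fun k =>
    {r | ∃ S : I → Finset (Set Ω), (∀ i, ∀ s ∈ S i, MeasurableSet[Bmax i] s) ∧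
      (∀ i, (S i).card ≤ k) ∧ r = En S} with hESet
  have hempty_mem : ∀ k, En (fun _ => (∅ : Finset (Set Ω))) ∈ ESet k := fun k =>
    ⟨fun _ => ∅, fun i s hs => absurd hs (Finset.notMem_empty s), fun i => by simp, rfl⟩
  have hENE : ∀ k, (ESet k).Nonempty := fun k => ⟨_, hempty_mem k⟩
  have hEBdd : ∀ k, BddAbove (ESet k) := fun k =>
    ⟨1, by rintro r ⟨S, -, -, rfl⟩; exact En_le_one S⟩
  set e : ℕ → ℝ := fun k => sSup (ESet k) with he
  have he_le_one : ∀ k, e k ≤ 1 := fun k =>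
    csSup_le (hENE k) (by rintro r ⟨S, -, -, rfl⟩; exact En_le_one S)
  have he_nonneg : ∀ k, 0 ≤ e k := fun k =>
    (En_nonneg _).trans (le_csSup (hEBdd k) (hempty_mem k))
  -- pigeonhole
  obtain ⟨j, hjJ, hgap⟩ : ∃ j < J,
      e (SzHelper.nseq F m (j + 1)) ≤ e (SzHelper.nseq F m j) + ε ^ 2 / 2 := by
    by_contra hcon
    push_neg at hcon
    have key : ∀ k, k ≤ J →
        e (SzHelper.nseq F m 0) + k * (ε ^ 2 / 2) ≤ e (SzHelper.nseq F m k) := by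
      intro k
      induction k with
      | zero => intro _; simp
      | succ k ih =>
        intro hk
        have h1 := ih (Nat.le_of_succ_le hk)
        have h2 := hcon k (by omega)
        push_cast
        nlinarith
    have h1 := key J le_rfl
    have h2 : (2 / ε ^ 2 : ℝ) ≤ (⌈2 / ε ^ 2⌉₊ : ℝ) := Nat.le_ceil _
    have h3 : (J : ℝ) = (⌈2 / ε ^ 2⌉₊ : ℝ) + 1 := by rw [hJ]; push_cast; ring
    have h4 := he_le_one (SzHelper.nseq F m J)
    have h5 := he_nonneg (SzHelper.nseq F m 0)
    have hε2 : (0 : ℝ) < ε ^ 2 := by positivity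
    have h6 : (2 / ε ^ 2 + 1) * (ε ^ 2 / 2) = 1 + ε ^ 2 / 2 := by field_simp
    have h7 : (2 / ε ^ 2 + 1 : ℝ) ≤ (J : ℝ) := by rw [h3]; linarith
    have h8 : (2 / ε ^ 2 + 1) * (ε ^ 2 / 2) ≤ (J : ℝ) * (ε ^ 2 / 2) :=
      mul_le_mul_of_nonneg_right h7 (by positivity)
    linarith
  set n : ℕ := SzHelper.nseq F m j with hn
  set n' : ℕ := SzHelper.nseq F m (j + 1) with hn'
  set M : ℝ := max m (n : ℝ) with hM
  have hFM : 0 < F M := hFpos M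
  set δ : ℝ := 1 / F M with hδ
  have hδpos : 0 < δ := by positivity
  have hδ2pos : (0 : ℝ) < δ ^ 2 := by positivity
  -- choose near-optimal coarse family
  obtain ⟨r, hrmem, hrgt⟩ := exists_lt_of_lt_csSup (hENE n)
    (show e n - ε ^ 2 / 2 < e n by nlinarith)
  obtain ⟨S, hSvalid, hScard, rfl⟩ := hrmem
  -- penalized sup over refinements
  set mc : (I → Finset (Set Ω)) → ℕ := fun T => Finset.univ.sup fun i => (T i).card with hmc
  set PSet : Set ℝ := {r | ∃ T : I → Finset (Set Ω),
    (∀ i, ∀ s ∈ T i, MeasurableSet[Bmax i] s) ∧ (∀ i, S i ⊆ T i) ∧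
    r = En T - δ ^ 2 / 4 * (mc T : ℝ)} with hPSet
  have hPNE : PSet.Nonempty := ⟨_, S, hSvalid, fun i => subset_rfl, rfl⟩
  have hPBdd : BddAbove PSet := by
    refine ⟨1, ?_⟩
    rintro r ⟨T, -, -, rfl⟩
    have h1 := En_le_one T
    have h2 : (0 : ℝ) ≤ δ ^ 2 / 4 * (mc T : ℝ) := by positivity
    linarith
  obtain ⟨r', hr'mem, hr'gt⟩ := exists_lt_of_lt_csSup hPNE
    (show sSup PSet - 3 / 4 * δ ^ 2 < sSup PSet by nlinarith)
  obtain ⟨S', hS'valid, hSsub, rfl⟩ := hr'mem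
  have hσ_ge_S : En S - δ ^ 2 / 4 * (mc S : ℝ) ≤ sSup PSet :=
    le_csSup hPBdd ⟨S, hSvalid, fun i => subset_rfl, rfl⟩
  have hmcS : (mc S : ℝ) ≤ (n : ℝ) := by
    have : mc S ≤ n := Finset.sup_le fun i _ => hScard i
    exact_mod_cast this
  -- complexity bound for the fine family
  have hmcS'R : (mc S' : ℝ) ≤ (n' : ℝ) := by
    have h1 : δ ^ 2 / 4 * (mc S' : ℝ) ≤ 1 + δ ^ 2 / 4 * (n : ℝ) + 3 / 4 * δ ^ 2 := by
      have hp := mul_le_mul_of_nonneg_left hmcS (le_of_lt (by positivity : (0:ℝ) < δ ^ 2 / 4))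
      nlinarith [En_le_one S', En_nonneg S]
    have h4 : δ ^ 2 * (mc S' : ℝ) ≤ 4 + δ ^ 2 * (n : ℝ) + 3 * δ ^ 2 := by linarith
    have h5 : (mc S' : ℝ) ≤ 4 / δ ^ 2 + (n : ℝ) + 3 := by
      rw [← sub_nonneg]
      have h6 : 4 / δ ^ 2 + (n : ℝ) + 3 - (mc S' : ℝ)
          = (4 + δ ^ 2 * (n : ℝ) + 3 * δ ^ 2 - δ ^ 2 * (mc S' : ℝ)) / δ ^ 2 := by
        field_simp
      rw [h6]
      exact div_nonneg (by linarith) (le_of_lt hδ2pos)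
    have h7 : 4 / δ ^ 2 = 4 * F M ^ 2 := by
      rw [hδ]
      field_simp
    have h8 : (4 * F M ^ 2 : ℝ) ≤ (⌈4 * F M ^ 2⌉₊ : ℝ) := Nat.le_ceil _
    have h9 : (n' : ℝ) = (n : ℝ) + 3 + (⌈4 * F M ^ 2⌉₊ : ℝ) := by
      rw [hn', SzHelper.nseq]
      push_cast
      rw [hM, hn]
    linarith
  have hmcS' : mc S' ≤ n' := by exact_mod_cast hmcS'R
  have hcardS' : ∀ i, (S' i).card ≤ n' := fun i => by
    exact le_trans (Finset.le_sup (f := fun i => (S' i).card) (Finset.mem_univ i)) hmcS'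
  -- σ-algebra inequalities
  have hMS : (⨆ i, generateFrom (↑(S i) : Set (Set Ω))) ≤ mΩ := hMle S hSvalid
  have hMS' : (⨆ i, generateFrom (↑(S' i) : Set (Set Ω))) ≤ mΩ := hMle S' hS'valid
  have hMSS' : (⨆ i, generateFrom (↑(S i) : Set (Set Ω))) ≤
      ⨆ i, generateFrom (↑(S' i) : Set (Set Ω)) :=
    iSup_mono fun i => generateFrom_mono (Finset.coe_subset.mpr (hSsub i))
  have hEnS'_le : En S' ≤ e n' := le_csSup (hEBdd n') ⟨S', hS'valid, hcardS', rfl⟩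
  refine ⟨fun i => generateFrom (↑(S i) : Set (Set Ω)),
    fun i => generateFrom (↑(S' i) : Set (Set Ω)), M,
    fun i => generateFrom_mono (Finset.coe_subset.mpr (hSsub i)),
    fun i => generateFrom_le fun s hs => hS'valid i s (by exact_mod_cast hs),
    fun i => SzHelper.finite_measurableSet_generateFrom (S i).finite_toSet,
    fun i => SzHelper.finite_measurableSet_generateFrom (S' i).finite_toSet,
    le_max_left _ _, ?_, ?_, ?_, ?_⟩
  · exact max_le_max le_rfl (Nat.cast_le.mpr (SzHelper.nseq_mono F m hjJ.le))
  · intro i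
    have h1 : complexity (generateFrom (↑(S i) : Set (Set Ω))) ≤ (S i).card :=
      SzHelper.complexity_le_card (S i)
    have h2 : (S i).card ≤ n := hScard i
    calc (complexity (generateFrom (↑(S i) : Set (Set Ω))) : ℝ)
        ≤ (n : ℝ) := by exact_mod_cast h1.trans h2
      _ ≤ M := le_max_right _ _
  · -- eLpNorm closeness
    have hpyth := SzHelper.condexpL2_pyth hMSS' hMS hMS' xl
    set D : Ω →₂[μ] ℝ :=
      (condExpL2 ℝ ℝ hMS' xl : Ω →₂[μ] ℝ) - (condExpL2 ℝ ℝ hMS xl : Ω →₂[μ] ℝ) with hD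
    have hD2 : ‖D‖ ^ 2 ≤ ε ^ 2 := by
      have hES := En_eq S hMS
      have hES' := En_eq S' hMS'
      nlinarith [hEnS'_le, le_of_lt hrgt, hgap]
    have hDε : ‖D‖ ≤ ε := by nlinarith [norm_nonneg D]
    have hae : (μ[X| ⨆ i, generateFrom (↑(S' i) : Set (Set Ω))] -
        μ[X| ⨆ i, generateFrom (↑(S i) : Set (Set Ω))]) =ᵐ[μ] ⇑D := by
      filter_upwards [SzHelper.condexp_ae_eq_condexpL2 (μ := μ) hMS' hX,
        SzHelper.condexp_ae_eq_condexpL2 (μ := μ) hMS hX,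
        Lp.coeFn_sub ((condExpL2 ℝ ℝ hMS' xl : Ω →₂[μ] ℝ))
          ((condExpL2 ℝ ℝ hMS xl : Ω →₂[μ] ℝ))] with x h1 h2 h3
      rw [hD]
      simp only [Pi.sub_apply, h1, h2, h3]
      rfl
    rw [eLpNorm_congr_ae hae]
    have hnorm : eLpNorm (⇑D) 2 μ = ENNReal.ofReal ‖D‖ := by
      rw [Lp.norm_def, ENNReal.ofReal_toReal (Lp.eLpNorm_ne_top D)]
    rw [hnorm]
    exact ENNReal.ofReal_le_ofReal hDε
  · -- fine accuracy
    intro A hA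
    set T : I → Finset (Set Ω) := fun i => insert (A i) (S' i) with hT
    have hTvalid : ∀ i, ∀ s ∈ T i, MeasurableSet[Bmax i] s := by
      intro i s hs
      rcases Finset.mem_insert.mp hs with h | h
      · rw [h]; exact hA i
      · exact hS'valid i s h
    have hMT : (⨆ i, generateFrom (↑(T i) : Set (Set Ω))) ≤ mΩ := hMle T hTvalid
    have hS'T : (⨆ i, generateFrom (↑(S' i) : Set (Set Ω))) ≤
        ⨆ i, generateFrom (↑(T i) : Set (Set Ω)) :=
      iSup_mono fun i => generateFrom_mono (by
        rw [hT]
        simp only [Finset.coe_insert]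
        exact Set.subset_insert _ _)
    have hTmem : En T - δ ^ 2 / 4 * (mc T : ℝ) ≤ sSup PSet :=
      le_csSup hPBdd ⟨T, hTvalid, fun i => (hSsub i).trans (Finset.subset_insert _ _), rfl⟩
    have hmcT : (mc T : ℝ) ≤ (mc S' : ℝ) + 1 := by
      have h1 : mc T ≤ mc S' + 1 := by
        refine Finset.sup_le fun i _ => ?_
        exact (Finset.card_insert_le _ _).trans
          (Nat.succ_le_succ (Finset.le_sup (f := fun i => (S' i).card) (Finset.mem_univ i)))
      exact_mod_cast h1
    have hgain : En T - En S' ≤ δ ^ 2 := by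
      have hp := mul_le_mul_of_nonneg_left hmcT (le_of_lt (by positivity : (0:ℝ) < δ ^ 2 / 4))
      nlinarith [hr'gt, hTmem]
    have hTi : MeasurableSet[⨆ i, generateFrom (↑(T i) : Set (Set Ω))] (⋂ i, A i) := by
      refine MeasurableSet.iInter fun i => ?_
      refine le_iSup (fun i => generateFrom (↑(T i) : Set (Set Ω))) i _ ?_
      exact measurableSet_generateFrom (by rw [hT]; simp)
    have hcorr := SzHelper.abs_integral_sub_condexp_le (μ := μ) hS'T hMT hX hTi
    simp only [SzHelper.prod_indicator_iInter]
    refine le_trans hcorr ?_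
    have hnorm2 : ‖(condExpL2 ℝ ℝ hMT xl : Ω →₂[μ] ℝ) -
        (condExpL2 ℝ ℝ (hS'T.trans hMT) xl : Ω →₂[μ] ℝ)‖ ^ 2 = En T - En S' := by
      have hp := SzHelper.condexpL2_pyth hS'T (hS'T.trans hMT) hMT xl
      rw [En_eq T hMT, En_eq S' (hS'T.trans hMT)]
      linarith
    rw [show (1 / F M : ℝ) = δ from hδ.symm]
    nlinarith [hgain, hnorm2,
      norm_nonneg ((condExpL2 ℝ ℝ hMT xl : Ω →₂[μ] ℝ) -
        (condExpL2 ℝ ℝ (hS'T.trans hMT) xl : Ω →₂[μ] ℝ))]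
end

section
/- Quantitative bound in the probabilistic regularity lemma: In the setting of the probabilistic Szemerédi regularity lemma (ε > 0, m ≥ 0, F : ℝ⁺ → ℝ⁺ monotone increasing, I a finite index set, (Ω, B_max, P) a probability space with sub-σ-algebras (B_{i,max})_{i∈I}, and X ∈ L²(B_max) with ‖X‖_{L²} ≤ 1), the bound M₀ on the quantity M may be taken to be the value obtained by applying ⌊1/ε²⌋ iterations of the map M ↦ M + F(M)²/ε² + 1 to the initial value m. That is, there exist finite sub-σ-algebras B_i ⊆ B'_i ⊆ B_{i,max} and a real M with m ≤ M ≤ G^{(⌊1/ε²⌋)}(m), where G(x) := x + F(x)²/ε² + 1, such that complex(B_i) ≤ M for all i ∈ I, ‖E(X | ⋁_{i∈I} B'_i) − E(X | ⋁_{i∈I} B_i)‖_{L²} ≤ ε, and for all events A_i ∈ B_{i,max} (i ∈ I), |E( (X − E(X | ⋁_{i∈I} B'_i)) ∏_{i∈I} 1_{A_i} )| ≤ 1/F(M). -/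
open MeasureTheory
open scoped RealInnerProductSpace ENNReal

namespace SzAux
set_option linter.unusedSectionVars false
section core

variable {Ω : Type} {m m' : MeasurableSpace Ω} [mΩ : MeasurableSpace Ω]
  (μ : Measure Ω) [IsProbabilityMeasure μ]

noncomputable def proj (hm : m ≤ mΩ) (f : Lp ℝ 2 μ) : Lp ℝ 2 μ :=
  (condExpL2 ℝ ℝ hm f : Lp ℝ 2 μ)
lemma proj_meas (hm : m ≤ mΩ) (f : Lp ℝ 2 μ) :
    AEStronglyMeasurable[m] (proj μ hm f) μ := aestronglyMeasurable_condExpL2 hm f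
lemma inner_sub_proj (hm : m ≤ mΩ) (f g : Lp ℝ 2 μ)
    (hg : AEStronglyMeasurable[m] g μ) :
    ⟪f - proj μ hm f, g⟫ = 0 := by
  haveI : Fact (m ≤ mΩ) := ⟨hm⟩
  have hgm : g ∈ lpMeas ℝ ℝ m 2 μ := mem_lpMeas_iff_aestronglyMeasurable.mpr hg
  have := Submodule.starProjection_inner_eq_zero (K := lpMeas ℝ ℝ m 2 μ) f g hgm
  simpa [proj, condExpL2] using this
lemma lpMeas_mono (h : m ≤ m') :
    lpMeas ℝ ℝ m 2 μ ≤ lpMeas ℝ ℝ m' 2 μ := by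
  intro f hf
  rw [mem_lpMeas_iff_aestronglyMeasurable] at hf ⊢
  exact hf.mono h
lemma proj_proj (hmm' : m ≤ m') (hm' : m' ≤ mΩ) (f : Lp ℝ 2 μ) :
    proj μ (hmm'.trans hm') (proj μ hm' f) = proj μ (hmm'.trans hm') f := by
  haveI : Fact (m ≤ mΩ) := ⟨hmm'.trans hm'⟩
  haveI : Fact (m' ≤ mΩ) := ⟨hm'⟩
  have := Submodule.orthogonalProjectionOnto_starProjection_of_le (𝕜 := ℝ)
    (lpMeas_mono μ hmm') f
  simp only [proj, condExpL2]
  exact congrArg _ this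

lemma pythagoras (hmm' : m ≤ m') (hm' : m' ≤ mΩ) (f : Lp ℝ 2 μ) :
    ‖proj μ hm' f‖ ^ 2
      = ‖proj μ (hmm'.trans hm') f‖ ^ 2
        + ‖proj μ hm' f - proj μ (hmm'.trans hm') f‖ ^ 2 := by
  have horth : ⟪proj μ hm' f - proj μ (hmm'.trans hm') f,
      proj μ (hmm'.trans hm') f⟫ = 0 := by
    have h := inner_sub_proj μ (hmm'.trans hm') (proj μ hm' f)
      (proj μ (hmm'.trans hm') f) (proj_meas μ (hmm'.trans hm') f)
    rwa [proj_proj μ hmm' hm' f] at h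
  have hdec : proj μ hm' f
      = proj μ (hmm'.trans hm') f + (proj μ hm' f - proj μ (hmm'.trans hm') f) := by
    abel
  conv_lhs => rw [hdec]
  rw [norm_add_sq_real, real_inner_comm, horth]
  ring

lemma norm_proj_le (hm : m ≤ mΩ) (f : Lp ℝ 2 μ) :
    ‖proj μ hm f‖ ≤ ‖f‖ :=
  norm_condExpL2_coe_le hm f


/-- bridge: the L² projection is a.e. the conditional expectation -/
lemma proj_ae_condexp (hm : m ≤ mΩ) {X : Ω → ℝ} (hX : MemLp X 2 μ) :
    ⇑(proj μ hm (hX.toLp X)) =ᵐ[μ] μ[X|m] := by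
  unfold proj
  refine ae_eq_condExp_of_forall_setIntegral_eq hm (hX.integrable one_le_two)
    (fun s hs hμs => ?_) (fun s hs hμs => ?_) ?_
  · exact integrableOn_condExpL2_of_measure_ne_top hm hμs.ne _
  · rw [integral_condExpL2_eq_of_fin_meas_real _ hs hμs.ne]
    exact setIntegral_congr_ae (hm s hs) ((hX.coeFn_toLp).mono fun x hx _ => hx)
  · exact aestronglyMeasurable_condExpL2 hm _

lemma inner_indicator (f : Lp ℝ 2 μ) {A : Set Ω} (hA : MeasurableSet A) :
    ⟪f, indicatorConstLp 2 hA (measure_ne_top μ A) (1 : ℝ)⟫ = ∫ x in A, f x ∂μ := by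
  rw [real_inner_comm]
  exact L2.inner_indicatorConstLp_one hA (measure_ne_top μ A) f

lemma norm_indicator_le_one {A : Set Ω} (hA : MeasurableSet A) :
    ‖indicatorConstLp 2 hA (measure_ne_top μ A) (1 : ℝ)‖ ≤ 1 := by
  rw [norm_indicatorConstLp (by norm_num) (by norm_num)]
  simp only [norm_one, one_mul]
  refine Real.rpow_le_one ENNReal.toReal_nonneg ?_ (by positivity)
  simpa using ENNReal.toReal_mono ENNReal.one_ne_top prob_le_one

lemma indicator_mem (hm : m ≤ mΩ) {A : Set Ω} (hAm : MeasurableSet[m] A) :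
    AEStronglyMeasurable[m]
      (indicatorConstLp 2 (hm A hAm) (measure_ne_top μ A) (1 : ℝ)) μ :=
  ⟨A.indicator (fun _ => (1 : ℝ)), stronglyMeasurable_const.indicator hAm,
    indicatorConstLp_coeFn⟩

lemma sub_proj_ae (hm : m ≤ mΩ) {X : Ω → ℝ} (hX : MemLp X 2 μ) :
    ⇑(hX.toLp X - proj μ hm (hX.toLp X)) =ᵐ[μ] fun x => X x - (μ[X|m]) x := by
  filter_upwards [Lp.coeFn_sub (hX.toLp X) (proj μ hm (hX.toLp X)),
    hX.coeFn_toLp, proj_ae_condexp μ hm hX] with x h1 h2 h3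
  rw [h1, Pi.sub_apply, h2, h3]

lemma integral_bridge (hm : m ≤ mΩ) {X : Ω → ℝ} (hX : MemLp X 2 μ)
    {A : Set Ω} (hA : MeasurableSet A) :
    ∫ x, (X x - (μ[X|m]) x) * A.indicator (1 : Ω → ℝ) x ∂μ
      = ⟪hX.toLp X - proj μ hm (hX.toLp X),
          indicatorConstLp 2 hA (measure_ne_top μ A) (1 : ℝ)⟫ := by
  rw [inner_indicator]
  have h1 : ∫ x, (X x - (μ[X|m]) x) * A.indicator (1 : Ω → ℝ) x ∂μ
      = ∫ x, A.indicator (fun y => X y - (μ[X|m]) y) x ∂μ := by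
    refine integral_congr_ae (Filter.Eventually.of_forall fun x => ?_)
    by_cases hx : x ∈ A <;>
      simp [Set.indicator_of_mem, Set.indicator_of_notMem, hx]
  rw [h1, integral_indicator hA]
  exact (setIntegral_congr_ae hA ((sub_proj_ae μ hm hX).mono fun x hx _ => hx)).symm


end core



lemma finite_generateFrom {Ω : Type} (S : Finset (Set Ω)) :
    {s : Set Ω | MeasurableSet[MeasurableSpace.generateFrom (↑S : Set (Set Ω))] s}.Finite := by
  classical
  set φ : Ω → ({x // x ∈ S} → Prop) := fun x s => x ∈ (s : Set Ω) with hφ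
  have hle : MeasurableSpace.generateFrom (↑S : Set (Set Ω))
      ≤ MeasurableSpace.comap φ ⊤ := by
    refine MeasurableSpace.generateFrom_le fun s hs => ?_
    exact ⟨{p | p ⟨s, hs⟩}, trivial, by ext x; simp [hφ]⟩
  have h2 : {s : Set Ω | MeasurableSet[MeasurableSpace.comap φ ⊤] s}
      ⊆ Set.range (fun T : Set ({x // x ∈ S} → Prop) => φ ⁻¹' T) := by
    rintro s ⟨t, -, ht⟩
    exact ⟨t, ht⟩
  exact ((Set.finite_range _).subset h2).subset fun s hs => hle s hs

lemma complexity_le_card {Ω : Type} (S : Finset (Set Ω)) :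
    complexity (MeasurableSpace.generateFrom (↑S : Set (Set Ω))) ≤ S.card :=
  Nat.sInf_le ⟨S, rfl, rfl⟩

/-- product of indicators is the indicator of the intersection -/
lemma prodIndAux {Ω I : Type} [Fintype I] (A : I → Set Ω) (x : Ω) :
    ∏ i, (A i).indicator (1 : Ω → ℝ) x
      = (⋂ i, A i).indicator (1 : Ω → ℝ) x := by
  by_cases hx : x ∈ ⋂ i, A i
  · rw [Set.indicator_of_mem hx]
    rw [Finset.prod_eq_one fun i _ => ?_]
    · rfl
    · rw [Set.indicator_of_mem (Set.mem_iInter.mp hx i)]; rfl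
  · rw [Set.indicator_of_notMem hx]
    obtain ⟨i, hi⟩ : ∃ i, x ∉ A i := by
      simpa [Set.mem_iInter] using hx
    exact Finset.prod_eq_zero (Finset.mem_univ i) (Set.indicator_of_notMem hi _)


lemma pythagoras' {Ω : Type} {m m' : MeasurableSpace Ω} [mΩ : MeasurableSpace Ω]
    (μ : Measure Ω) [IsProbabilityMeasure μ]
    (hm : m ≤ mΩ) (hm' : m' ≤ mΩ) (hmm' : m ≤ m') (f : Lp ℝ 2 μ) :
    ‖proj μ hm' f‖ ^ 2 = ‖proj μ hm f‖ ^ 2 + ‖proj μ hm' f - proj μ hm f‖ ^ 2 :=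
  pythagoras μ hmm' hm' f

section drivers

variable {I : Type} [Fintype I] {Ω : Type} {m' D : MeasurableSpace Ω}
  [mΩ : MeasurableSpace Ω] {μ : Measure Ω} [IsProbabilityMeasure μ]
  {Bmax : I → MeasurableSpace Ω} {X : Ω → ℝ}

lemma key_ineq (hm' : m' ≤ mΩ) (hD : D ≤ mΩ) (hm'D : m' ≤ D)
    (hX : MemLp X 2 μ) {T : Set Ω} (hT : MeasurableSet[D] T) :
    |∫ x, (X x - (μ[X|m']) x) * T.indicator (1 : Ω → ℝ) x ∂μ|
      ≤ ‖proj μ hD (hX.toLp X) - proj μ hm' (hX.toLp X)‖ := by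
  set x₀ := hX.toLp X with hx₀
  set oneT := indicatorConstLp 2 (hD T hT) (measure_ne_top μ T) (1 : ℝ) with honeT
  rw [integral_bridge μ hm' hX (hD T hT)]
  have hsplit : x₀ - proj μ hm' x₀
      = (x₀ - proj μ hD x₀) + (proj μ hD x₀ - proj μ hm' x₀) := by abel
  rw [hsplit, inner_add_left, inner_sub_proj μ hD x₀ oneT (indicator_mem μ hD hT),
    zero_add]
  calc |⟪proj μ hD x₀ - proj μ hm' x₀, oneT⟫|
      ≤ ‖proj μ hD x₀ - proj μ hm' x₀‖ * ‖oneT‖ := abs_real_inner_le_norm _ _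
    _ ≤ ‖proj μ hD x₀ - proj μ hm' x₀‖ * 1 := by
        exact mul_le_mul_of_nonneg_left (norm_indicator_le_one μ (hD T hT))
          (norm_nonneg _)
    _ = _ := mul_one _

/-- admissibility of a tuple of finite set-families -/
def adm (Bmax : I → MeasurableSpace Ω) (S : I → Finset (Set Ω)) : Prop :=
  ∀ i, ∀ s ∈ S i, MeasurableSet[Bmax i] s

/-- the σ-algebra generated by a tuple -/
def msp (S : I → Finset (Set Ω)) : MeasurableSpace Ω :=
  ⨆ i, MeasurableSpace.generateFrom (↑(S i) : Set (Set Ω))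

lemma msp_le (hBmax : ∀ i, Bmax i ≤ mΩ) {S : I → Finset (Set Ω)}
    (hS : adm Bmax S) : msp S ≤ mΩ :=
  iSup_le fun i => MeasurableSpace.generateFrom_le fun s hs => hBmax i s (hS i s hs)

lemma msp_mono {S S' : I → Finset (Set Ω)} (h : ∀ i, S i ⊆ S' i) :
    msp S ≤ msp S' :=
  iSup_mono fun i => MeasurableSpace.generateFrom_mono (Finset.coe_subset.mpr (h i))

lemma inner_loop (hBmax : ∀ i, Bmax i ≤ mΩ) (hX : MemLp X 2 μ)
    (hx1 : ‖hX.toLp X‖ ≤ 1) (τ : ℝ) (hτ : 0 < τ) :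
    ∀ (n : ℕ) (S : I → Finset (Set Ω)) (hS : adm Bmax S),
      1 - ‖proj μ (msp_le hBmax hS) (hX.toLp X)‖ ^ 2 < n * τ ^ 2 →
      ∃ (S' : I → Finset (Set Ω)) (hS' : adm Bmax S'),
        (∀ i, S i ⊆ S' i) ∧ (∀ i, (S' i).card ≤ (S i).card + n) ∧
        ∀ A : I → Set Ω, (∀ i, MeasurableSet[Bmax i] (A i)) →
          |∫ x, (X x - (μ[X| msp S']) x) * ∏ i, (A i).indicator (1 : Ω → ℝ) x ∂μ|
            ≤ τ := by
  intro n
  induction n with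
  | zero =>
    intro S hS h
    exfalso
    have h1 : ‖proj μ (msp_le hBmax hS) (hX.toLp X)‖ ≤ 1 :=
      (norm_proj_le μ _ _).trans hx1
    have h2 : (0:ℝ) ≤ ‖proj μ (msp_le hBmax hS) (hX.toLp X)‖ := norm_nonneg _
    push_cast at h
    nlinarith
  | succ n ih =>
    intro S hS h
    classical
    by_cases hval : ∀ A : I → Set Ω, (∀ i, MeasurableSet[Bmax i] (A i)) →
        |∫ x, (X x - (μ[X| msp S]) x) * ∏ i, (A i).indicator (1 : Ω → ℝ) x ∂μ| ≤ τ
    · exact ⟨S, hS, fun i => subset_rfl, fun i => Nat.le_add_right _ _, hval⟩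
    · push_neg at hval
      obtain ⟨A, hA, hgt⟩ := hval
      set S'' : I → Finset (Set Ω) := fun i => insert (A i) (S i) with hS''def
      have hS'' : adm Bmax S'' := by
        intro i s hs
        rcases Finset.mem_insert.mp hs with h1 | h1
        · exact h1 ▸ hA i
        · exact hS i s h1
      have hsub : ∀ i, S i ⊆ S'' i := fun i => Finset.subset_insert _ _
      have hmm'' : msp S ≤ msp S'' := msp_mono hsub
      have hT : MeasurableSet[msp S''] (⋂ i, A i) := by
        refine MeasurableSet.iInter fun i => ?_
        refine le_iSup (fun i => MeasurableSpace.generateFrom (↑(S'' i) : Set (Set Ω))) i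
          _ ?_
        exact MeasurableSpace.measurableSet_generateFrom (by simp [hS''def])
      have hint : ∫ x, (X x - (μ[X| msp S]) x) * ∏ i, (A i).indicator (1 : Ω → ℝ) x ∂μ
          = ∫ x, (X x - (μ[X| msp S]) x) * (⋂ i, A i).indicator (1 : Ω → ℝ) x ∂μ := by
        simp only [prodIndAux]
      have hkey := key_ineq (msp_le hBmax hS) (msp_le hBmax hS'') hmm'' hX hT
      rw [hint] at hgt
      have hd : τ < ‖proj μ (msp_le hBmax hS'') (hX.toLp X)
          - proj μ (msp_le hBmax hS) (hX.toLp X)‖ := lt_of_lt_of_le hgt hkey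
      have hpyth := pythagoras' μ (msp_le hBmax hS) (msp_le hBmax hS'') hmm''
        (hX.toLp X)
      have hnew : 1 - ‖proj μ (msp_le hBmax hS'') (hX.toLp X)‖ ^ 2 < n * τ ^ 2 := by
        have hd2 : τ ^ 2 < ‖proj μ (msp_le hBmax hS'') (hX.toLp X)
            - proj μ (msp_le hBmax hS) (hX.toLp X)‖ ^ 2 :=
          pow_lt_pow_left₀ hd hτ.le (by norm_num)
        push_cast at h ⊢
        nlinarith
      obtain ⟨S', hS', hsub', hcard', hval'⟩ := ih S'' hS'' hnew
      refine ⟨S', hS', fun i => (hsub i).trans (hsub' i), fun i => ?_, hval'⟩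
      calc (S' i).card ≤ (S'' i).card + n := hcard' i
        _ ≤ (S i).card + 1 + n := by
            exact Nat.add_le_add_right (Finset.card_insert_le _ _) n
        _ = (S i).card + (n + 1) := by omega

lemma le_iterate {G : ℝ → ℝ} (hG : ∀ x, x ≤ G x) : ∀ (j : ℕ) (x : ℝ), x ≤ G^[j] x := by
  intro j
  induction j with
  | zero => simp
  | succ j ih =>
    intro x
    rw [Function.iterate_succ_apply]
    exact (hG x).trans (ih (G x))

lemma conclude (hBmax : ∀ i, Bmax i ≤ mΩ) (hX : MemLp X 2 μ)
    (F : ℝ → ℝ) (m M bound ε : ℝ)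
    {S S' : I → Finset (Set Ω)} (hS : adm Bmax S) (hS' : adm Bmax S')
    (hsub : ∀ i, S i ⊆ S' i)
    (hcard : ∀ i, ((S i).card : ℝ) ≤ M) (hmM : m ≤ M) (hMb : M ≤ bound)
    (hval : ∀ A : I → Set Ω, (∀ i, MeasurableSet[Bmax i] (A i)) →
      |∫ x, (X x - (μ[X| msp S']) x) * ∏ i, (A i).indicator (1 : Ω → ℝ) x ∂μ|
        ≤ 1 / F M)
    (hd : ‖proj μ (msp_le hBmax hS') (hX.toLp X)
        - proj μ (msp_le hBmax hS) (hX.toLp X)‖ ≤ ε) :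
    ∃ (B B' : I → MeasurableSpace Ω) (M' : ℝ),
      (∀ i, B i ≤ B' i) ∧ (∀ i, B' i ≤ Bmax i) ∧
      (∀ i, {s : Set Ω | MeasurableSet[B i] s}.Finite) ∧
      (∀ i, {s : Set Ω | MeasurableSet[B' i] s}.Finite) ∧
      m ≤ M' ∧ M' ≤ bound ∧
      (∀ i, (complexity (B i) : ℝ) ≤ M') ∧
      eLpNorm (μ[X| ⨆ i, B' i] - μ[X| ⨆ i, B i]) 2 μ ≤ ENNReal.ofReal ε ∧
      (∀ A : I → Set Ω, (∀ i, MeasurableSet[Bmax i] (A i)) →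
        |∫ x, (X x - (μ[X| ⨆ i, B' i]) x) * ∏ i, (A i).indicator (1 : Ω → ℝ) x ∂μ|
          ≤ 1 / F M') := by
  refine ⟨fun i => MeasurableSpace.generateFrom ↑(S i),
    fun i => MeasurableSpace.generateFrom ↑(S' i), M,
    fun i => MeasurableSpace.generateFrom_mono (Finset.coe_subset.mpr (hsub i)),
    fun i => MeasurableSpace.generateFrom_le fun s hs => hS' i s hs,
    fun i => finite_generateFrom (S i),
    fun i => finite_generateFrom (S' i),
    hmM, hMb,
    fun i => le_trans (Nat.cast_le.mpr (complexity_le_card (S i))) (hcard i),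
    ?_, hval⟩
  show eLpNorm (μ[X| msp S'] - μ[X| msp S]) 2 μ ≤ ENNReal.ofReal ε
  have h1 : (μ[X| msp S'] - μ[X| msp S])
      =ᵐ[μ] ⇑(proj μ (msp_le hBmax hS') (hX.toLp X)
        - proj μ (msp_le hBmax hS) (hX.toLp X)) := by
    filter_upwards [Lp.coeFn_sub (proj μ (msp_le hBmax hS') (hX.toLp X))
        (proj μ (msp_le hBmax hS) (hX.toLp X)),
      proj_ae_condexp μ (msp_le hBmax hS') hX,
      proj_ae_condexp μ (msp_le hBmax hS) hX] with x ha hb hc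
    rw [Pi.sub_apply, ha, Pi.sub_apply, hb, hc]
  calc eLpNorm (μ[X| msp S'] - μ[X| msp S]) 2 μ
      = eLpNorm (⇑(proj μ (msp_le hBmax hS') (hX.toLp X)
          - proj μ (msp_le hBmax hS) (hX.toLp X))) 2 μ := eLpNorm_congr_ae h1
    _ = ENNReal.ofReal ‖proj μ (msp_le hBmax hS') (hX.toLp X)
          - proj μ (msp_le hBmax hS) (hX.toLp X)‖ := by
        rw [Lp.norm_def, ENNReal.ofReal_toReal (Lp.eLpNorm_ne_top _)]
    _ ≤ ENNReal.ofReal ε := ENNReal.ofReal_le_ofReal hd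

lemma outer_loop (hBmax : ∀ i, Bmax i ≤ mΩ) (hX : MemLp X 2 μ)
    (hx1 : ‖hX.toLp X‖ ≤ 1) (ε : ℝ) (hε : 0 < ε)
    (F : ℝ → ℝ) (hFpos : ∀ x, 0 < F x) (m : ℝ) :
    ∀ (j : ℕ) (S : I → Finset (Set Ω)) (hS : adm Bmax S) (M : ℝ),
      (∀ i, ((S i).card : ℝ) ≤ M) → m ≤ M →
      1 - ‖proj μ (msp_le hBmax hS) (hX.toLp X)‖ ^ 2 < ((j : ℝ) + 1) * ε ^ 2 →
      ∃ (B B' : I → MeasurableSpace Ω) (M' : ℝ),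
        (∀ i, B i ≤ B' i) ∧ (∀ i, B' i ≤ Bmax i) ∧
        (∀ i, {s : Set Ω | MeasurableSet[B i] s}.Finite) ∧
        (∀ i, {s : Set Ω | MeasurableSet[B' i] s}.Finite) ∧
        m ≤ M' ∧ M' ≤ (fun x : ℝ => x + F x ^ 2 / ε ^ 2 + 1)^[j] M ∧
        (∀ i, (complexity (B i) : ℝ) ≤ M') ∧
        eLpNorm (μ[X| ⨆ i, B' i] - μ[X| ⨆ i, B i]) 2 μ ≤ ENNReal.ofReal ε ∧
        (∀ A : I → Set Ω, (∀ i, MeasurableSet[Bmax i] (A i)) →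
          |∫ x, (X x - (μ[X| ⨆ i, B' i]) x) * ∏ i, (A i).indicator (1 : Ω → ℝ) x ∂μ|
            ≤ 1 / F M') := by
  intro j
  induction j with
  | zero =>
    intro S hS M hcard hmM hentry
    have hFM : 0 < F M := hFpos M
    have hF2 : (0:ℝ) < F M ^ 2 := by positivity
    set τ := 1 / F M with hτdef
    have hτ : 0 < τ := by positivity
    set n := ⌊F M ^ 2⌋₊ + 1 with hndef
    have h1 : F M ^ 2 < (n : ℝ) := by
      rw [hndef]; push_cast
      exact Nat.lt_floor_add_one _
    have hinner_hyp : 1 - ‖proj μ (msp_le hBmax hS) (hX.toLp X)‖ ^ 2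
        < (n : ℝ) * τ ^ 2 := by
      have h2 : (n : ℝ) * τ ^ 2 = (n : ℝ) / F M ^ 2 := by
        rw [hτdef]; field_simp
      have h3 : 1 < (n : ℝ) * τ ^ 2 := by
        rw [h2]; exact (one_lt_div hF2).mpr h1
      have h4 : 0 ≤ ‖proj μ (msp_le hBmax hS) (hX.toLp X)‖ ^ 2 := sq_nonneg _
      linarith
    obtain ⟨S', hS', hsub, hcard', hval⟩ :=
      inner_loop hBmax hX hx1 τ hτ n S hS hinner_hyp
    have hpyth := pythagoras' μ (msp_le hBmax hS) (msp_le hBmax hS')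
      (msp_mono hsub) (hX.toLp X)
    have hd : ‖proj μ (msp_le hBmax hS') (hX.toLp X)
        - proj μ (msp_le hBmax hS) (hX.toLp X)‖ ≤ ε := by
      have heS' : ‖proj μ (msp_le hBmax hS') (hX.toLp X)‖ ≤ 1 :=
        (norm_proj_le μ _ _).trans hx1
      have heS'0 : 0 ≤ ‖proj μ (msp_le hBmax hS') (hX.toLp X)‖ := norm_nonneg _
      have hd2 : ‖proj μ (msp_le hBmax hS') (hX.toLp X)
          - proj μ (msp_le hBmax hS) (hX.toLp X)‖ ^ 2 < ε ^ 2 := by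
        have h5 : ‖proj μ (msp_le hBmax hS') (hX.toLp X)‖ ^ 2 ≤ 1 :=
          pow_le_one₀ heS'0 heS'
        have hentry' : 1 - ‖proj μ (msp_le hBmax hS) (hX.toLp X)‖ ^ 2 < ε ^ 2 := by
          norm_num at hentry
          linarith
        linarith [hpyth, h5, hentry']
      exact le_of_lt (lt_of_pow_lt_pow_left₀ 2 hε.le hd2)
    have := conclude hBmax hX F m M ((fun x : ℝ => x + F x ^ 2 / ε ^ 2 + 1)^[0] M) ε
      hS hS' hsub hcard hmM (by simp) hval hd
    exact this
  | succ j ih =>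
    intro S hS M hcard hmM hentry
    have hFM : 0 < F M := hFpos M
    have hF2 : (0:ℝ) < F M ^ 2 := by positivity
    set τ := 1 / F M with hτdef
    have hτ : 0 < τ := by positivity
    set n := ⌊F M ^ 2⌋₊ + 1 with hndef
    have h1 : F M ^ 2 < (n : ℝ) := by
      rw [hndef]; push_cast
      exact Nat.lt_floor_add_one _
    have hinner_hyp : 1 - ‖proj μ (msp_le hBmax hS) (hX.toLp X)‖ ^ 2
        < (n : ℝ) * τ ^ 2 := by
      have h2 : (n : ℝ) * τ ^ 2 = (n : ℝ) / F M ^ 2 := by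
        rw [hτdef]; field_simp
      have h3 : 1 < (n : ℝ) * τ ^ 2 := by
        rw [h2]; exact (one_lt_div hF2).mpr h1
      have h4 : 0 ≤ ‖proj μ (msp_le hBmax hS) (hX.toLp X)‖ ^ 2 := sq_nonneg _
      linarith
    obtain ⟨S', hS', hsub, hcard', hval⟩ :=
      inner_loop hBmax hX hx1 τ hτ n S hS hinner_hyp
    have hpyth := pythagoras' μ (msp_le hBmax hS) (msp_le hBmax hS')
      (msp_mono hsub) (hX.toLp X)
    have heS' : ‖proj μ (msp_le hBmax hS') (hX.toLp X)‖ ≤ 1 :=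
      (norm_proj_le μ _ _).trans hx1
    have heS'0 : 0 ≤ ‖proj μ (msp_le hBmax hS') (hX.toLp X)‖ := norm_nonneg _
    have heS0 : 0 ≤ ‖proj μ (msp_le hBmax hS) (hX.toLp X)‖ := norm_nonneg _
    by_cases hd : ‖proj μ (msp_le hBmax hS') (hX.toLp X)
        - proj μ (msp_le hBmax hS) (hX.toLp X)‖ ≤ ε
    · have hGle : ∀ x : ℝ, x ≤ x + F x ^ 2 / ε ^ 2 + 1 := by
        intro x
        have h0 : (0:ℝ) ≤ F x ^ 2 / ε ^ 2 := by positivity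
        linarith
      exact conclude hBmax hX F m M ((fun x : ℝ => x + F x ^ 2 / ε ^ 2 + 1)^[j + 1] M) ε
        hS hS' hsub hcard hmM (le_iterate hGle (j + 1) M) hval hd
    · push_neg at hd
      have hP'le : ‖proj μ (msp_le hBmax hS') (hX.toLp X)‖ ^ 2 ≤ 1 :=
        pow_le_one₀ heS'0 heS'
      have hP0 : 0 ≤ ‖proj μ (msp_le hBmax hS) (hX.toLp X)‖ ^ 2 := sq_nonneg _
      have hε1 : ε ≤ 1 := by
        by_contra h1'
        push_neg at h1'
        have hdd : ‖proj μ (msp_le hBmax hS') (hX.toLp X)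
            - proj μ (msp_le hBmax hS) (hX.toLp X)‖ ^ 2 ≤ 1 := by
          linarith [hpyth]
        have hgt1 : 1 < ‖proj μ (msp_le hBmax hS') (hX.toLp X)
            - proj μ (msp_le hBmax hS) (hX.toLp X)‖ := lt_trans h1' hd
        nlinarith [hgt1]
      set M₁ := M + F M ^ 2 / ε ^ 2 + 1 with hM₁def
      have hcard₁ : ∀ i, ((S' i).card : ℝ) ≤ M₁ := by
        intro i
        have hc : ((S' i).card : ℝ) ≤ ((S i).card : ℝ) + (n : ℝ) := by
          exact_mod_cast hcard' i
        have hn : (n : ℝ) ≤ F M ^ 2 + 1 := by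
          rw [hndef]; push_cast
          have := Nat.floor_le (show (0:ℝ) ≤ F M ^ 2 by positivity)
          linarith
        have hε2 : ε ^ 2 ≤ 1 := pow_le_one₀ hε.le hε1
        have hdiv : F M ^ 2 ≤ F M ^ 2 / ε ^ 2 := by
          rw [le_div_iff₀ (by positivity)]
          nlinarith [mul_le_mul_of_nonneg_left hε2 hF2.le]
        have := hcard i
        rw [hM₁def]
        linarith
      have hm₁ : m ≤ M₁ := by
        have h0 : (0:ℝ) ≤ F M ^ 2 / ε ^ 2 := by positivity
        rw [hM₁def]; linarith
      have hnew : 1 - ‖proj μ (msp_le hBmax hS') (hX.toLp X)‖ ^ 2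
          < ((j : ℝ) + 1) * ε ^ 2 := by
        have hd2 : ε ^ 2 < ‖proj μ (msp_le hBmax hS') (hX.toLp X)
            - proj μ (msp_le hBmax hS) (hX.toLp X)‖ ^ 2 :=
          pow_lt_pow_left₀ hd hε.le (by norm_num)
        push_cast at hentry ⊢
        linarith [hpyth, hd2, hentry]
      have hres := ih S' hS' M₁ hcard₁ hm₁ hnew
      rw [Function.iterate_succ_apply]
      exact hres

end drivers
end SzAux


open SzAux

/-- Quantitative bound in the probabilistic Szemerédi regularity lemma: the bound `M₀`
may be taken to be `⌊1/ε²⌋` iterations of the map `G : x ↦ x + F(x)²/ε² + 1` applied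
to the initial value `m`. -/
theorem szemeredi_regularity_probabilistic_quantitative
    (ε : ℝ) (hε : 0 < ε) (m : ℝ) (hm : 0 ≤ m)
    (F : ℝ → ℝ) (hF : Monotone F) (hFpos : ∀ x, 0 < F x)
    (I : Type) [Fintype I]
    (Ω : Type) [mΩ : MeasurableSpace Ω] (μ : Measure Ω) [IsProbabilityMeasure μ]
    (Bmax : I → MeasurableSpace Ω) (hBmax : ∀ i, Bmax i ≤ mΩ)
    (X : Ω → ℝ) (hX : MemLp X 2 μ) (hXnorm : eLpNorm X 2 μ ≤ 1) :
    ∃ (B B' : I → MeasurableSpace Ω) (M : ℝ),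
      -- B_i ⊆ B'_i ⊆ B_{i,max}, all finite σ-algebras
      (∀ i, B i ≤ B' i) ∧
      (∀ i, B' i ≤ Bmax i) ∧
      (∀ i, {s : Set Ω | MeasurableSet[B i] s}.Finite) ∧
      (∀ i, {s : Set Ω | MeasurableSet[B' i] s}.Finite) ∧
      -- size of M: m ≤ M ≤ G^(⌊1/ε²⌋)(m) with G(x) = x + F(x)²/ε² + 1
      m ≤ M ∧
      M ≤ (fun x : ℝ => x + F x ^ 2 / ε ^ 2 + 1)^[⌊1 / ε ^ 2⌋₊] m ∧
      -- complexity bound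
      (∀ i, (complexity (B i) : ℝ) ≤ M) ∧
      -- coarse and fine approximations are close
      eLpNorm (μ[X| ⨆ i, B' i] - μ[X| ⨆ i, B i]) 2 μ ≤ ENNReal.ofReal ε ∧
      -- fine approximation is extremely accurate
      (∀ A : I → Set Ω, (∀ i, MeasurableSet[Bmax i] (A i)) →
        |∫ x, (X x - (μ[X| ⨆ i, B' i]) x) * ∏ i, (A i).indicator (1 : Ω → ℝ) x ∂μ|
          ≤ 1 / F M) := by
  classical
  have hx1 : ‖hX.toLp X‖ ≤ 1 := by
    rw [MeasureTheory.Lp.norm_toLp X hX]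
    calc (eLpNorm X 2 μ).toReal ≤ (1 : ℝ≥0∞).toReal :=
          ENNReal.toReal_mono ENNReal.one_ne_top hXnorm
      _ = 1 := by simp
  set S₀ : I → Finset (Set Ω) := fun _ => (∅ : Finset (Set Ω)) with hS₀def
  have hS₀ : adm Bmax S₀ := fun i s hs => absurd hs (Finset.notMem_empty s)
  have hcard₀ : ∀ i, ((S₀ i).card : ℝ) ≤ m := by simp [hS₀def, hm]
  have hentry : 1 - ‖proj μ (msp_le hBmax hS₀) (hX.toLp X)‖ ^ 2
      < ((⌊1 / ε ^ 2⌋₊ : ℝ) + 1) * ε ^ 2 := by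
    have h1 : 1 / ε ^ 2 < (⌊1 / ε ^ 2⌋₊ : ℝ) + 1 := Nat.lt_floor_add_one _
    have h2 : 1 < ((⌊1 / ε ^ 2⌋₊ : ℝ) + 1) * ε ^ 2 :=
      (div_lt_iff₀ (by positivity)).mp h1
    have h3 : 0 ≤ ‖proj μ (msp_le hBmax hS₀) (hX.toLp X)‖ ^ 2 := sq_nonneg _
    linarith
  exact outer_loop hBmax hX hx1 ε hε F hFpos m (⌊1 / ε ^ 2⌋₊) S₀ hS₀ m hcard₀
    le_rfl hentry
end

section
/- Lack of regularity implies energy increment: Let (Ω, B_max, P) be a probability space, I a finite index set, and X ∈ L²(B_max). Suppose for each i ∈ I we have a finite sub-σ-algebra B'_i ⊆ B_{i,max} ⊆ B_max and an event A_i ∈ B_{i,max}, and suppose that |E( (X − E(X | ⋁_{i∈I} B'_i)) · ∏_{i∈I} 1_{A_i} )| > δ for some δ > 0. Define B''_i := B'_i ∨ {∅, A_i, Ω \ A_i, Ω} (the σ-algebra generated by B'_i and A_i) for each i ∈ I. Then: (complexity increment) complex(B''_i) ≤ complex(B'_i) + 1 for all i ∈ I, and (energy increment) E(⋁_{i∈I}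 B''_i) ≥ E(⋁_{i∈I} B'_i) + δ². -/
open MeasureTheory

private lemma memℒp_two_condexp' {α : Type*} {m : MeasurableSpace α} [m0 : MeasurableSpace α]
    {μ : Measure α} [IsFiniteMeasure μ] (hm : m ≤ m0)
    {f : α → ℝ} (hf : MemLp f 2 μ) : MemLp (μ[f|m]) 2 μ := by
  haveI : SigmaFinite (μ.trim hm) := inferInstance
  have hL : MemLp ((condExpL2 ℝ ℝ hm (hf.toLp f) : α →₂[μ] ℝ) : α → ℝ) 2 μ := Lp.memLp _
  have heq : ((condExpL2 ℝ ℝ hm (hf.toLp f) : α →₂[μ] ℝ) : α → ℝ) =ᵐ[μ] μ[f|m] := by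
    refine ae_eq_condExp_of_forall_setIntegral_eq hm (hf.integrable one_le_two)
      (fun s hs hμs => integrableOn_condExpL2_of_measure_ne_top hm hμs.ne _)
      (fun s hs hμs => ?_) (aestronglyMeasurable_condExpL2 hm _)
    rw [integral_condExpL2_eq hm _ hs hμs.ne]
    have hs0 : MeasurableSet[m0] s := hm s hs
    exact setIntegral_congr_ae hs0 ((hf.coeFn_toLp).mono fun x hx _ => hx)
  exact hL.ae_eq heq

private lemma integrable_mul_of_memℒp_two' {α : Type*} [MeasurableSpace α] {μ : Measure α}
    {f g : α → ℝ} (hf : MemLp f 2 μ) (hg : MemLp g 2 μ) :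
    Integrable (fun x => f x * g x) μ := by
  have h := L2.integrable_inner (𝕜 := ℝ) (hf.toLp f) (hg.toLp g)
  refine h.congr ?_
  filter_upwards [hf.coeFn_toLp, hg.coeFn_toLp] with x h1 h2
  simp [RCLike.inner_apply, h1, h2, mul_comm]

private lemma abs_integral_mul_le' {α : Type*} [MeasurableSpace α] {μ : Measure α}
    {u h : α → ℝ} (hu : MemLp u 2 μ) (hh : MemLp h 2 μ) :
    |∫ x, u x * h x ∂μ|
      ≤ Real.sqrt (∫ x, u x ^ 2 ∂μ) * Real.sqrt (∫ x, h x ^ 2 ∂μ) := by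
  set U := hu.toLp u
  set H := hh.toLp h
  have hUH : ∫ x, u x * h x ∂μ = @inner ℝ _ _ U H := by
    rw [L2.inner_def]
    refine integral_congr_ae ?_
    filter_upwards [hu.coeFn_toLp, hh.coeFn_toLp] with x h1 h2
    simp [RCLike.inner_apply, U, H, h1, h2, mul_comm]
  have hU : ∫ x, u x ^ 2 ∂μ = ‖U‖ ^ 2 := by
    rw [← real_inner_self_eq_norm_sq, L2.inner_def]
    refine integral_congr_ae ?_
    filter_upwards [hu.coeFn_toLp] with x h1
    simp [RCLike.inner_apply, U, h1, sq]
  have hH : ∫ x, h x ^ 2 ∂μ = ‖H‖ ^ 2 := by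
    rw [← real_inner_self_eq_norm_sq, L2.inner_def]
    refine integral_congr_ae ?_
    filter_upwards [hh.coeFn_toLp] with x h1
    simp [RCLike.inner_apply, H, h1, sq]
  rw [hUH, hU, hH, Real.sqrt_sq (norm_nonneg _), Real.sqrt_sq (norm_nonneg _)]
  exact abs_real_inner_le_norm U H

private lemma energy_increment_aux {Ω : Type}
    (m₁ m₂ : MeasurableSpace Ω) [mΩ : MeasurableSpace Ω]
    (μ : Measure Ω) [IsProbabilityMeasure μ]
    (hm1 : m₁ ≤ mΩ) (hm2 : m₂ ≤ mΩ) (h12 : m₁ ≤ m₂)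
    (X : Ω → ℝ) (hX : MemLp X 2 μ)
    (s : Set Ω) (hs2 : MeasurableSet[m₂] s)
    (δ : ℝ) (hδ : 0 < δ)
    (hirreg : δ < |∫ x, (X x - (μ[X|m₁]) x) * s.indicator (1 : Ω → ℝ) x ∂μ|) :
    (∫ x, ((μ[X|m₁]) x) ^ 2 ∂μ) + δ ^ 2 ≤ ∫ x, ((μ[X|m₂]) x) ^ 2 ∂μ := by
  haveI : SigmaFinite (μ.trim hm1) := inferInstance
  haveI : SigmaFinite (μ.trim hm2) := inferInstance
  set f := μ[X|m₁] with hfdef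
  set g := μ[X|m₂] with hgdef
  have hf2 : MemLp f 2 μ := memℒp_two_condexp' hm1 hX
  have hg2 : MemLp g 2 μ := memℒp_two_condexp' hm2 hX
  have hXint : Integrable X μ := hX.integrable one_le_two
  have hfint : Integrable f μ := integrable_condExp
  have hgint : Integrable g μ := integrable_condExp
  set h : Ω → ℝ := s.indicator (1 : Ω → ℝ) with hhdef
  have hh_sm : StronglyMeasurable[m₂] h :=
    StronglyMeasurable.indicator stronglyMeasurable_const hs2
  have hh_bd : ∀ x, ‖h x‖ ≤ 1 := by
    intro x
    by_cases hx : x ∈ s <;>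
      simp [hhdef, Set.indicator_of_mem, Set.indicator_of_notMem, hx]
  have hh_asm : AEStronglyMeasurable h μ := (hh_sm.mono hm2).aestronglyMeasurable
  have hh2 : MemLp h 2 μ := MemLp.of_bound hh_asm 1 (Filter.Eventually.of_forall hh_bd)
  -- step A : replace X by g in the integral against h
  have hXh_int : Integrable (fun x => h x * X x) μ := hXint.bdd_mul hh_asm (Filter.Eventually.of_forall hh_bd)
  have hgh_int : Integrable (fun x => h x * g x) μ := hgint.bdd_mul hh_asm (Filter.Eventually.of_forall hh_bd)
  have hfh_int : Integrable (fun x => h x * f x) μ := hfint.bdd_mul hh_asm (Filter.Eventually.of_forall hh_bd)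
  have hpullA : μ[(h * X)|m₂] =ᵐ[μ] h * μ[X|m₂] :=
    condExp_mul_of_stronglyMeasurable_left hh_sm hXh_int hXint
  have hA1 : ∫ x, h x * X x ∂μ = ∫ x, h x * g x ∂μ := by
    calc ∫ x, h x * X x ∂μ = ∫ x, (μ[(h * X)|m₂]) x ∂μ := (integral_condExp hm2).symm
      _ = ∫ x, h x * g x ∂μ := integral_congr_ae (hpullA.mono fun x hx => hx)
  have hstepA : ∫ x, (X x - f x) * h x ∂μ = ∫ x, (g x - f x) * h x ∂μ := by
    have e1 : ∫ x, (X x - f x) * h x ∂μ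
        = ∫ x, h x * X x ∂μ - ∫ x, h x * f x ∂μ := by
      rw [← integral_sub hXh_int hfh_int]
      refine integral_congr_ae (Filter.Eventually.of_forall fun x => ?_)
      ring
    have e2 : ∫ x, (g x - f x) * h x ∂μ
        = ∫ x, h x * g x ∂μ - ∫ x, h x * f x ∂μ := by
      rw [← integral_sub hgh_int hfh_int]
      refine integral_congr_ae (Filter.Eventually.of_forall fun x => ?_)
      ring
    rw [e1, e2, hA1]
  -- step B : ∫ f g = ∫ f f
  have hfg_int : Integrable (fun x => f x * g x) μ := integrable_mul_of_memℒp_two' hf2 hg2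
  have hff_int : Integrable (fun x => f x * f x) μ := integrable_mul_of_memℒp_two' hf2 hf2
  have hgg_int : Integrable (fun x => g x * g x) μ := integrable_mul_of_memℒp_two' hg2 hg2
  have hpullB : μ[(f * g)|m₁] =ᵐ[μ] f * μ[g|m₁] :=
    condExp_mul_of_stronglyMeasurable_left stronglyMeasurable_condExp hfg_int hgint
  have htower : μ[g|m₁] =ᵐ[μ] f := condExp_condExp_of_le h12 hm2
  have hB : ∫ x, f x * g x ∂μ = ∫ x, f x * f x ∂μ := by
    calc ∫ x, f x * g x ∂μ = ∫ x, (μ[(f * g)|m₁]) x ∂μ := (integral_condExp hm1).symm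
      _ = ∫ x, f x * f x ∂μ := by
        refine integral_congr_ae ?_
        filter_upwards [hpullB, htower] with x hx1 hx2
        simp only [Pi.mul_apply] at hx1 ⊢
        rw [hx1, hx2]
  -- Pythagoras
  have hG2 : Integrable (fun x => g x * g x - 2 * (f x * g x)) μ :=
    hgg_int.sub (hfg_int.const_mul 2)
  have hexp : ∫ x, (g x - f x) ^ 2 ∂μ = ∫ x, g x ^ 2 ∂μ - ∫ x, f x ^ 2 ∂μ := by
    have esq1 : ∫ x, g x ^ 2 ∂μ = ∫ x, g x * g x ∂μ := by
      refine integral_congr_ae (Filter.Eventually.of_forall fun x => ?_); ring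
    have esq2 : ∫ x, f x ^ 2 ∂μ = ∫ x, f x * f x ∂μ := by
      refine integral_congr_ae (Filter.Eventually.of_forall fun x => ?_); ring
    have i1 : ∫ x, (g x * g x - 2 * (f x * g x) + f x * f x) ∂μ
        = (∫ x, (g x * g x - 2 * (f x * g x)) ∂μ) + ∫ x, f x * f x ∂μ :=
      integral_add hG2 hff_int
    have i2 : ∫ x, (g x * g x - 2 * (f x * g x)) ∂μ
        = (∫ x, g x * g x ∂μ) - ∫ x, 2 * (f x * g x) ∂μ :=
      integral_sub hgg_int (hfg_int.const_mul 2)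
    have i3 : ∫ x, 2 * (f x * g x) ∂μ = 2 * ∫ x, f x * g x ∂μ :=
      integral_const_mul 2 _
    calc ∫ x, (g x - f x) ^ 2 ∂μ
        = ∫ x, (g x * g x - 2 * (f x * g x) + f x * f x) ∂μ :=
          integral_congr_ae (Filter.Eventually.of_forall fun x => by ring)
      _ = ∫ x, g x ^ 2 ∂μ - ∫ x, f x ^ 2 ∂μ := by
          rw [i1, i2, i3, hB, esq1, esq2]; ring
  -- Cauchy-Schwarz
  have hu2 : MemLp (fun x => g x - f x) 2 μ := hg2.sub hf2
  have hCS := abs_integral_mul_le' hu2 hh2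
  have hhsq : ∫ x, h x ^ 2 ∂μ ≤ 1 := by
    have e : ∀ x, h x ^ 2 = h x := by
      intro x
      by_cases hx : x ∈ s <;>
        simp [hhdef, Set.indicator_of_mem, Set.indicator_of_notMem, hx]
    have hs0 : MeasurableSet[mΩ] s := hm2 s hs2
    have : ∫ x, h x ^ 2 ∂μ = (μ s).toReal := by
      rw [integral_congr_ae (Filter.Eventually.of_forall e), hhdef,
        integral_indicator_one hs0]; rfl
    rw [this]
    exact ENNReal.toReal_le_of_le_ofReal zero_le_one (by simpa using prob_le_one)
  have hsqrt_h : Real.sqrt (∫ x, h x ^ 2 ∂μ) ≤ 1 := by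
    calc Real.sqrt (∫ x, h x ^ 2 ∂μ) ≤ Real.sqrt 1 := Real.sqrt_le_sqrt hhsq
      _ = 1 := Real.sqrt_one
  have hδlt : δ < Real.sqrt (∫ x, (g x - f x) ^ 2 ∂μ) := by
    have h1 : δ < |∫ x, (g x - f x) * h x ∂μ| := by rwa [hstepA] at hirreg
    calc δ < |∫ x, (g x - f x) * h x ∂μ| := h1
      _ ≤ Real.sqrt (∫ x, (g x - f x) ^ 2 ∂μ) * Real.sqrt (∫ x, h x ^ 2 ∂μ) := hCS
      _ ≤ Real.sqrt (∫ x, (g x - f x) ^ 2 ∂μ) * 1 :=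
          mul_le_mul_of_nonneg_left hsqrt_h (Real.sqrt_nonneg _)
      _ = Real.sqrt (∫ x, (g x - f x) ^ 2 ∂μ) := mul_one _
  have hδsq : δ ^ 2 < ∫ x, (g x - f x) ^ 2 ∂μ := (Real.lt_sqrt hδ.le).mp hδlt
  rw [hexp] at hδsq
  linarith

/-- Lack of regularity implies energy increment. -/
theorem lack_of_regularity_energy_increment
    (Ω : Type) [mΩ : MeasurableSpace Ω] (μ : Measure Ω) [IsProbabilityMeasure μ]
    (I : Type) [Fintype I]
    (X : Ω → ℝ) (hX : MemLp X 2 μ)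
    (Bmax B' : I → MeasurableSpace Ω)
    (hBmax : ∀ i, Bmax i ≤ mΩ) (hB' : ∀ i, B' i ≤ Bmax i)
    (hB'fin : ∀ i, {s : Set Ω | MeasurableSet[B' i] s}.Finite)
    (A : I → Set Ω) (hA : ∀ i, MeasurableSet[Bmax i] (A i))
    (δ : ℝ) (hδ : 0 < δ)
    (hirreg :
      δ < |∫ x, (X x - (μ[X| ⨆ i, B' i]) x) * ∏ i, (A i).indicator (1 : Ω → ℝ) x ∂μ|) :
    -- complexity increment
    (∀ i, complexity (B' i ⊔ MeasurableSpace.generateFrom {A i})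
        ≤ complexity (B' i) + 1) ∧
    -- energy increment
    (∫ x, ((μ[X| ⨆ i, B' i]) x) ^ 2 ∂μ) + δ ^ 2
      ≤ ∫ x, ((μ[X| ⨆ i, B' i ⊔ MeasurableSpace.generateFrom {A i}]) x) ^ 2 ∂μ := by
  classical
  constructor
  · -- complexity increment
    intro i
    have hmem : complexity (B' i) ∈
        {n : ℕ | ∃ S : Finset (Set Ω), S.card = n ∧
          MeasurableSpace.generateFrom (↑S) = B' i} := by
      apply Nat.sInf_mem
      refine ⟨(hB'fin i).toFinset.card, (hB'fin i).toFinset, rfl, ?_⟩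
      rw [Set.Finite.coe_toFinset]
      exact @MeasurableSpace.generateFrom_measurableSet Ω (B' i)
    obtain ⟨S, hScard, hSgen⟩ := hmem
    have hle : complexity (B' i ⊔ MeasurableSpace.generateFrom {A i})
        ≤ (insert (A i) S).card := by
      apply Nat.sInf_le
      refine ⟨insert (A i) S, rfl, ?_⟩
      rw [Finset.coe_insert, Set.insert_eq,
        ← MeasurableSpace.generateFrom_sup_generateFrom, hSgen, sup_comm]
    calc complexity (B' i ⊔ MeasurableSpace.generateFrom {A i})
        ≤ (insert (A i) S).card := hle
      _ ≤ S.card + 1 := Finset.card_insert_le _ _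
      _ = complexity (B' i) + 1 := by rw [hScard]
  · -- energy increment
    have hm1 : (⨆ i, B' i) ≤ mΩ := iSup_le fun i => (hB' i).trans (hBmax i)
    have hgen : ∀ i, MeasurableSpace.generateFrom {A i} ≤ Bmax i := fun i =>
      MeasurableSpace.generateFrom_le (by rintro t rfl; exact hA i)
    have hm2 : (⨆ i, B' i ⊔ MeasurableSpace.generateFrom {A i}) ≤ mΩ :=
      iSup_le fun i => sup_le ((hB' i).trans (hBmax i)) ((hgen i).trans (hBmax i))
    have h12 : (⨆ i, B' i) ≤ ⨆ i, B' i ⊔ MeasurableSpace.generateFrom {A i} :=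
      iSup_mono fun i => le_sup_left
    have hs2 : MeasurableSet[⨆ i, B' i ⊔ MeasurableSpace.generateFrom {A i}]
        (⋂ i, A i) := by
      refine MeasurableSet.iInter fun i => ?_
      have h1 : MeasurableSet[MeasurableSpace.generateFrom {A i}] (A i) :=
        MeasurableSpace.measurableSet_generateFrom rfl
      have h2 : B' i ⊔ MeasurableSpace.generateFrom {A i}
          ≤ ⨆ i, B' i ⊔ MeasurableSpace.generateFrom {A i} :=
        le_iSup (fun i => B' i ⊔ MeasurableSpace.generateFrom {A i}) i
      exact h2 _ (le_sup_right (a := B' i) _ h1)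
    have hprod : ∀ x, (∏ i, (A i).indicator (1 : Ω → ℝ) x)
        = (⋂ i, A i).indicator (1 : Ω → ℝ) x := by
      intro x
      by_cases hx : x ∈ ⋂ i, A i
      · have h1 : ∀ i, (A i).indicator (1 : Ω → ℝ) x = 1 := fun i =>
          Set.indicator_of_mem (Set.mem_iInter.mp hx i) _
        simp [Set.indicator_of_mem hx, h1]
      · obtain ⟨i, hi⟩ : ∃ i, x ∉ A i := by
          simpa [Set.mem_iInter] using hx
        rw [Set.indicator_of_notMem hx]
        exact Finset.prod_eq_zero (Finset.mem_univ i) (Set.indicator_of_notMem hi _)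
    have hirreg' : δ < |∫ x, (X x - (μ[X| ⨆ i, B' i]) x)
        * (⋂ i, A i).indicator (1 : Ω → ℝ) x ∂μ| := by
      have := hirreg
      simp only [hprod] at this
      exact this
    exact energy_increment_aux (⨆ i, B' i)
      (⨆ i, B' i ⊔ MeasurableSpace.generateFrom {A i}) μ hm1 hm2 h12 X hX
      (⋂ i, A i) hs2 δ hδ hirreg'
end

section
/- Relation between entropy and expectation (Lemma 4.5): Let X, Y, Y' be random variables on a probability space, each taking finitely many values, with Y ↦ Y' (Y' is determined by Y), and suppose X takes values in the interval [−1, 1]. Then E( |E(X | Y') − E(X | Y)| ) ≤ 2 · I(X : Y | Y')^{1/2}, where conditional expectations are taken with respect to the σ-algebras generated by Y' and Y respectively, and the conditional mutual information I(X : Y | Y') is computed with the natural logarithm. -/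
open MeasureTheory

/-- Shannon entropy (in nats) of a random variable taking finitely many values:
`H(X) = Σ_x P(X = x) log(1/P(X = x))`, with the convention `0·log(1/0) = 0`. -/
noncomputable def entNat {Ω S : Type*} [MeasurableSpace Ω] (μ : Measure Ω) (X : Ω → S) : ℝ :=
  ∑' s : S, (μ (X ⁻¹' {s})).toReal * Real.log (1 / (μ (X ⁻¹' {s})).toReal)

/-- Conditional entropy `H(X|Y) := H(X,Y) − H(Y)` (in nats). -/
noncomputable def condEntNat {Ω S T : Type*} [MeasurableSpace Ω] (μ : Measure Ω)
    (X : Ω → S) (Y : Ω → T) : ℝ :=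
  entNat μ (fun ω => (X ω, Y ω)) - entNat μ Y

/-- Conditional mutual information `I(X:Y|Z) := H(X|Z) − H(X|Y,Z)` (in nats). -/
noncomputable def condMINat {Ω S T U : Type*} [MeasurableSpace Ω] (μ : Measure Ω)
    (X : Ω → S) (Y : Ω → T) (Z : Ω → U) : ℝ :=
  condEntNat μ X Z - condEntNat μ X (fun ω => (Y ω, Z ω))

section helperLemmas

open Real


noncomputable def pinF (r : ℝ) : ℝ := r * Real.log r - r + 1 - 3/2 * ((r-1)^2 / (r+2))

noncomputable def pinF' (r : ℝ) : ℝ := Real.log r - 3/2 * ((r-1)*(r+5) / (r+2)^2)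

lemma pinF_hasDeriv {r : ℝ} (hr : 0 < r) : HasDerivAt pinF (pinF' r) r := by
  have h2 : r + 2 ≠ 0 := by positivity
  have h1 : HasDerivAt (fun y : ℝ => y * Real.log y) (Real.log r + r * r⁻¹) r := by
    simpa using (hasDerivAt_id r).fun_mul (Real.hasDerivAt_log hr.ne')
  have h3 : HasDerivAt (fun r : ℝ => (r-1)^2 / (r+2))
      ((2*(r-1)*(r+2) - (r-1)^2 * 1) / (r+2)^2) r := by
    have hn : HasDerivAt (fun r : ℝ => (r-1)^2) (2*(r-1)) r := by
      simpa using ((hasDerivAt_id r).sub_const 1).fun_pow 2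
    have hd : HasDerivAt (fun r : ℝ => r + 2) 1 r := (hasDerivAt_id r).add_const 2
    simpa using hn.fun_div hd h2
  have h4 := ((h1.sub (hasDerivAt_id r)).add_const 1).sub (h3.const_mul (3/2))
  unfold pinF
  refine h4.congr_deriv ?_
  have hr' : r ≠ 0 := hr.ne'
  unfold pinF'
  field_simp
  ring

lemma pinF'_hasDeriv {r : ℝ} (hr : 0 < r) : HasDerivAt pinF' (1/r - 27/(r+2)^3) r := by
  have h2 : (r + 2)^2 ≠ 0 := by positivity
  have h3 : HasDerivAt (fun r : ℝ => (r-1)*(r+5) / (r+2)^2)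
      (((1*(r+5) + (r-1)*1) * (r+2)^2 - (r-1)*(r+5) * (2*(r+2))) / ((r+2)^2)^2) r := by
    have hn : HasDerivAt (fun r : ℝ => (r-1)*(r+5)) (1*(r+5) + (r-1)*1) r := by
      simpa using ((hasDerivAt_id r).sub_const 1).fun_mul ((hasDerivAt_id r).add_const 5)
    have hd : HasDerivAt (fun r : ℝ => (r+2)^2) (2*(r+2)) r := by
      simpa using ((hasDerivAt_id r).add_const 2).fun_pow 2
    simpa using hn.fun_div hd h2
  have h5 := (Real.hasDerivAt_log hr.ne').sub (h3.const_mul (3/2))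
  refine h5.congr_deriv ?_
  have h4 : r + 2 ≠ 0 := by positivity
  field_simp
  ring

lemma pinF_nonneg {r : ℝ} (hr : 0 < r) : 0 ≤ pinF r := by
  have hdiff : ∀ x ∈ Set.Ioi (0:ℝ), DifferentiableAt ℝ pinF x :=
    fun x hx => (pinF_hasDeriv hx).differentiableAt
  have hdiff' : ∀ x ∈ Set.Ioi (0:ℝ), DifferentiableAt ℝ pinF' x :=
    fun x hx => (pinF'_hasDeriv hx).differentiableAt
  have hmono : MonotoneOn pinF' (Set.Ioi (0:ℝ)) := by
    apply monotoneOn_of_deriv_nonneg (convex_Ioi 0)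
    · exact fun x hx => (hdiff' x hx).continuousAt.continuousWithinAt
    · intro x hx
      rw [interior_Ioi] at hx
      exact ((hdiff' x hx).differentiableWithinAt)
    · intro x hx
      rw [interior_Ioi] at hx
      have hx' : (0:ℝ) < x := hx
      rw [(pinF'_hasDeriv hx').deriv]
      rw [sub_nonneg, div_le_div_iff₀ (pow_pos (by linarith) 3) hx']
      nlinarith [sq_nonneg (x-1), hx'.le]
  have hF'1 : pinF' 1 = 0 := by norm_num [pinF']
  have hF1 : pinF 1 = 0 := by norm_num [pinF]
  rcases le_or_gt r 1 with h | h
  · have hanti : AntitoneOn pinF (Set.Ioc (0:ℝ) 1) := by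
      apply antitoneOn_of_deriv_nonpos (convex_Ioc 0 1)
      · exact fun x hx => (hdiff x hx.1).continuousAt.continuousWithinAt
      · intro x hx
        rw [interior_Ioc] at hx
        exact (hdiff x hx.1).differentiableWithinAt
      · intro x hx
        rw [interior_Ioc] at hx
        rw [(pinF_hasDeriv hx.1).deriv]
        have := hmono (Set.mem_Ioi.2 hx.1) (Set.mem_Ioi.2 one_pos) hx.2.le
        rw [hF'1] at this; exact this
    have := hanti ⟨hr, h⟩ ⟨one_pos, le_refl 1⟩ h
    rw [hF1] at this; exact this
  · have hmono2 : MonotoneOn pinF (Set.Ici (1:ℝ)) := by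
      apply monotoneOn_of_deriv_nonneg (convex_Ici 1)
      · exact fun x hx => (hdiff x (show (0:ℝ) < x from lt_of_lt_of_le one_pos hx)).continuousAt.continuousWithinAt
      · intro x hx
        rw [interior_Ici] at hx
        exact (hdiff x (show (0:ℝ) < x from lt_trans one_pos hx)).differentiableWithinAt
      · intro x hx
        rw [interior_Ici] at hx
        rw [(pinF_hasDeriv (lt_trans one_pos hx)).deriv]
        have := hmono (Set.mem_Ioi.2 one_pos) (Set.mem_Ioi.2 (lt_trans one_pos hx)) hx.le
        rw [hF'1] at this; exact this
    have := hmono2 (Set.mem_Ici.2 le_rfl) (Set.mem_Ici.2 h.le) h.le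
    rw [hF1] at this; exact this

/-- Pointwise Pinsker bound. -/
lemma pointwise_pinsker {a b : ℝ} (ha : 0 ≤ a) (hb : 0 ≤ b) (hab : b = 0 → a = 0) :
    3 * (a - b)^2 / (2 * (a + 2*b)) ≤ a * Real.log (a / b) - a + b := by
  rcases eq_or_lt_of_le hb with hb0 | hb0
  · have ha0 := hab hb0.symm
    simp [← hb0, ha0]
  rcases eq_or_lt_of_le ha with ha0 | ha0
  · rw [← ha0]
    have h : 3 * (0 - b)^2 / (2 * (0 + 2*b)) = 3 * b / 4 := by
      field_simp; ring
    rw [h, zero_mul]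
    linarith
  · have hF := pinF_nonneg (r := a / b) (by positivity)
    unfold pinF at hF
    have hb' : b ≠ 0 := hb0.ne'
    have h5 : a + 2*b ≠ 0 := by positivity
    have h6 : a/b + 2 ≠ 0 := by positivity
    have key : b * (a/b * Real.log (a/b) - a/b + 1 - 3/2 * ((a/b-1)^2 / (a/b+2))) =
        (a * Real.log (a/b) - a + b) - 3 * (a - b)^2 / (2 * (a + 2*b)) := by
      field_simp
    nlinarith [mul_nonneg hb0.le hF]

lemma pinsker_finset {ι : Type*} (s : Finset ι) (a b : ι → ℝ)
    (ha : ∀ i, 0 ≤ a i) (hb : ∀ i, 0 ≤ b i) (hab : ∀ i, b i = 0 → a i = 0)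
    (ha1 : ∑ i ∈ s, a i = 1) (hb1 : ∑ i ∈ s, b i = 1) :
    0 ≤ ∑ i ∈ s, a i * Real.log (a i / b i) ∧
      ∑ i ∈ s, |a i - b i| ≤ Real.sqrt (2 * ∑ i ∈ s, a i * Real.log (a i / b i)) := by
  set K := ∑ i ∈ s, a i * Real.log (a i / b i) with hK
  set v : ι → ℝ := fun i => 3 * (a i - b i)^2 / (2 * (a i + 2 * b i)) with hv
  set u : ι → ℝ := fun i => 2 * (a i + 2 * b i) / 3 with hu
  have hv0 : ∀ i, 0 ≤ v i := fun i => by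
    apply div_nonneg (by positivity)
    have := ha i; have := hb i; linarith
  have hu0 : ∀ i, 0 ≤ u i := fun i => by
    have := ha i; have := hb i
    apply div_nonneg (by linarith) (by norm_num)
  have hvK : ∑ i ∈ s, v i ≤ K := by
    have : ∑ i ∈ s, v i ≤ ∑ i ∈ s, (a i * Real.log (a i / b i) - a i + b i) :=
      Finset.sum_le_sum fun i _ => pointwise_pinsker (ha i) (hb i) (hab i)
    simpa [Finset.sum_add_distrib, Finset.sum_sub_distrib, ha1, hb1] using this
  have hK0 : 0 ≤ K := le_trans (Finset.sum_nonneg fun i _ => hv0 i) hvK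
  refine ⟨hK0, ?_⟩
  have hpt : ∀ i ∈ s, |a i - b i| ≤ Real.sqrt (u i) * Real.sqrt (v i) := by
    intro i _
    rcases eq_or_lt_of_le (by have := ha i; have := hb i; linarith : (0:ℝ) ≤ a i + 2 * b i)
      with h0 | h0
    · have hbz : b i = 0 := by have := ha i; have := hb i; linarith
      have haz : a i = 0 := hab i hbz
      simp [haz, hbz, hu, hv]
    · have huv : u i * v i = (a i - b i)^2 := by
        have : a i + 2 * b i ≠ 0 := h0.ne'
        simp only [hu, hv]
        field_simp
      rw [← Real.sqrt_mul (hu0 i), huv, Real.sqrt_sq_eq_abs]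
  calc ∑ i ∈ s, |a i - b i| ≤ ∑ i ∈ s, Real.sqrt (u i) * Real.sqrt (v i) :=
        Finset.sum_le_sum hpt
    _ ≤ Real.sqrt (∑ i ∈ s, u i) * Real.sqrt (∑ i ∈ s, v i) :=
        Real.sum_sqrt_mul_sqrt_le s hu0 hv0
    _ ≤ Real.sqrt 2 * Real.sqrt K := by
        have h1 : ∑ i ∈ s, u i = 2 := by
          have h2 : ∑ i ∈ s, u i = 2 * ((∑ i ∈ s, a i) + 2 * (∑ i ∈ s, b i)) / 3 := by
            simp only [hu]
            rw [← Finset.sum_div, ← Finset.mul_sum, Finset.sum_add_distrib, ← Finset.mul_sum]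
          rw [h2, ha1, hb1]; norm_num
        rw [h1]
        exact mul_le_mul_of_nonneg_left (Real.sqrt_le_sqrt hvK) (Real.sqrt_nonneg 2)
    _ = Real.sqrt (2 * K) := (Real.sqrt_mul (by norm_num) K).symm

section measureHelpers
variable {Ω T S : Type*} [mΩ : MeasurableSpace Ω]

/-- Fiber decomposition of a measure along a finite-range map. -/
lemma measure_preimage_inter_sum (μ : Measure Ω) [IsFiniteMeasure μ] {Y : Ω → T}
    (hY : MeasurableSpace.comap Y ⊤ ≤ mΩ) (hfin : (Set.range Y).Finite)
    (S' : Set T) {A : Set Ω} (hA : MeasurableSet A) [DecidablePred (· ∈ S')] :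
    (μ (Y ⁻¹' S' ∩ A)).toReal
      = ∑ t ∈ hfin.toFinset.filter (· ∈ S'), (μ (Y ⁻¹' {t} ∩ A)).toReal := by
  classical
  have hunion : Y ⁻¹' S' ∩ A = ⋃ t ∈ hfin.toFinset.filter (· ∈ S'), (Y ⁻¹' {t} ∩ A) := by
    ext ω
    simp only [Set.mem_inter_iff, Set.mem_preimage, Set.mem_iUnion, Finset.mem_filter,
      Set.Finite.mem_toFinset, Set.mem_singleton_iff, exists_prop]
    constructor
    · rintro ⟨hS, hAω⟩
      exact ⟨Y ω, ⟨⟨Set.mem_range_self ω, hS⟩, rfl, hAω⟩⟩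
    · rintro ⟨t, ⟨-, ht⟩, rfl, hAω⟩
      exact ⟨ht, hAω⟩
  have hmeas : ∀ t ∈ hfin.toFinset.filter (· ∈ S'), MeasurableSet (Y ⁻¹' {t} ∩ A) := by
    intro t _
    exact (hY _ ⟨{t}, trivial, rfl⟩).inter hA
  have hdisj : Set.PairwiseDisjoint ↑(hfin.toFinset.filter (· ∈ S'))
      (fun t => Y ⁻¹' {t} ∩ A) := by
    intro t1 _ t2 _ hne
    apply Set.disjoint_left.2
    rintro ω ⟨h1, -⟩ ⟨h2, -⟩
    exact hne (h1.symm.trans h2)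
  rw [hunion, measure_biUnion_finset hdisj hmeas, ENNReal.toReal_sum]
  intro t _
  exact measure_ne_top μ _

/-- Integral over a set of a finite-range measurable function. -/
lemma setIntegral_fin_range (μ : Measure Ω) [IsFiniteMeasure μ] {X : Ω → ℝ}
    (hXm : Measurable X) (hXfin : (Set.range X).Finite) {A : Set Ω} (hA : MeasurableSet A) :
    ∫ ω in A, X ω ∂μ = ∑ x ∈ hXfin.toFinset, x * (μ (X ⁻¹' {x} ∩ A)).toReal := by
  classical
  have hrep : ∀ ω, X ω = ∑ x ∈ hXfin.toFinset,
      Set.indicator (X ⁻¹' {x}) (fun _ => x) ω := by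
    intro ω
    rw [Finset.sum_eq_single_of_mem (X ω) (hXfin.mem_toFinset.2 (Set.mem_range_self ω))]
    · exact (Set.indicator_of_mem (show ω ∈ X ⁻¹' {X ω} from rfl) (fun _ => X ω)).symm
    · intro x _ hx
      exact Set.indicator_of_notMem (s := X ⁻¹' {x})
        (fun h => hx (Set.mem_singleton_iff.1 h).symm) (fun _ => x)
  calc ∫ ω in A, X ω ∂μ
      = ∫ ω in A, (∑ x ∈ hXfin.toFinset, Set.indicator (X ⁻¹' {x}) (fun _ => x) ω) ∂μ := by
        exact integral_congr_ae (Filter.Eventually.of_forall (fun ω => hrep ω))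
    _ = ∑ x ∈ hXfin.toFinset, ∫ ω in A, Set.indicator (X ⁻¹' {x}) (fun _ => x) ω ∂μ := by
        apply integral_finset_sum
        intro x _
        exact (integrable_const x).indicator (hXm (measurableSet_singleton x))
    _ = ∑ x ∈ hXfin.toFinset, x * (μ (X ⁻¹' {x} ∩ A)).toReal := by
        apply Finset.sum_congr rfl
        intro x _
        rw [setIntegral_indicator (hXm (measurableSet_singleton x)), setIntegral_const,
          Set.inter_comm, smul_eq_mul, mul_comm, Measure.real_def]

/-- Integral of a function of a finite-range map. -/
lemma integral_comp_fin_range (μ : Measure Ω) [IsFiniteMeasure μ] {Y : Ω → T}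
    (hY : MeasurableSpace.comap Y ⊤ ≤ mΩ) (hfin : (Set.range Y).Finite) (h : T → ℝ) :
    ∫ ω, h (Y ω) ∂μ = ∑ t ∈ hfin.toFinset, (μ (Y ⁻¹' {t})).toReal * h t := by
  classical
  have hrep : ∀ ω, h (Y ω) = ∑ t ∈ hfin.toFinset,
      Set.indicator (Y ⁻¹' {t}) (fun _ => h t) ω := by
    intro ω
    rw [Finset.sum_eq_single_of_mem (Y ω) (hfin.mem_toFinset.2 (Set.mem_range_self ω))]
    · exact (Set.indicator_of_mem (show ω ∈ Y ⁻¹' {Y ω} from rfl) (fun _ => h (Y ω))).symm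
    · intro t _ ht
      exact Set.indicator_of_notMem (s := Y ⁻¹' {t})
        (fun h' => ht (Set.mem_singleton_iff.1 h').symm) (fun _ => h t)
  calc ∫ ω, h (Y ω) ∂μ
      = ∫ ω, (∑ t ∈ hfin.toFinset, Set.indicator (Y ⁻¹' {t}) (fun _ => h t) ω) ∂μ :=
        integral_congr_ae (Filter.Eventually.of_forall hrep)
    _ = ∑ t ∈ hfin.toFinset, ∫ ω, Set.indicator (Y ⁻¹' {t}) (fun _ => h t) ω ∂μ := by
        apply integral_finset_sum
        intro t _
        exact (integrable_const (h t)).indicator (hY _ ⟨{t}, trivial, rfl⟩)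
    _ = ∑ t ∈ hfin.toFinset, (μ (Y ⁻¹' {t})).toReal * h t := by
        apply Finset.sum_congr rfl
        intro t _
        rw [integral_indicator_const _ (hY _ ⟨{t}, trivial, rfl⟩), smul_eq_mul, Measure.real_def]

/-- entNat as a finite sum. -/
lemma entNat_eq_sum (μ : Measure Ω) {W : Ω → S} (s : Finset S)
    (hs : Set.range W ⊆ ↑s) :
    entNat μ W = ∑ w ∈ s, (μ (W ⁻¹' {w})).toReal * Real.log (1 / (μ (W ⁻¹' {w})).toReal) := by
  apply tsum_eq_sum
  intro w hw
  have : W ⁻¹' {w} = ∅ := by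
    ext ω
    simp only [Set.mem_preimage, Set.mem_singleton_iff, Set.mem_empty_iff_false, iff_false]
    intro h
    exact hw (hs (h ▸ Set.mem_range_self ω))
  rw [this]
  simp

/-- entNat is invariant under postcomposition with an injection. -/
lemma entNat_comp_inj (μ : Measure Ω) (W : Ω → S) {β : Type*} {e : S → β}
    (he : Function.Injective e) :
    entNat μ (fun ω => e (W ω)) = entNat μ W := by
  unfold entNat
  rw [← Function.Injective.tsum_eq he]
  · apply tsum_congr
    intro a
    have : (fun ω => e (W ω)) ⁻¹' {e a} = W ⁻¹' {a} := by
      ext ω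
      simp only [Set.mem_preimage, Set.mem_singleton_iff]
      exact ⟨fun h => he h, fun h => h ▸ rfl⟩
    rw [this]
  · intro b hb
    rcases Function.mem_support.1 hb with _
    by_contra hbe
    apply hb
    have : (fun ω => e (W ω)) ⁻¹' {b} = ∅ := by
      ext ω
      simp only [Set.mem_preimage, Set.mem_singleton_iff, Set.mem_empty_iff_false, iff_false]
      intro h
      exact hbe ⟨W ω, h⟩
    simp [this]

/-- Decomposition of a set integral of a finite-range function along fibers of `Y`. -/
lemma setIntegral_fiber_sum (μ : Measure Ω) [IsFiniteMeasure μ] {X : Ω → ℝ}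
    (hXm : Measurable X) (hXfin : (Set.range X).Finite) {Y : Ω → T}
    (hY : MeasurableSpace.comap Y ⊤ ≤ mΩ) (hYfin : (Set.range Y).Finite)
    (S' : Set T) [DecidablePred (· ∈ S')] :
    ∫ ω in Y ⁻¹' S', X ω ∂μ
      = ∑ t ∈ hYfin.toFinset.filter (· ∈ S'), ∫ ω in Y ⁻¹' {t}, X ω ∂μ := by
  rw [setIntegral_fin_range μ hXm hXfin (hY _ ⟨S', trivial, rfl⟩)]
  have h1 : ∀ t ∈ hYfin.toFinset.filter (· ∈ S'), ∫ ω in Y ⁻¹' {t}, X ω ∂μ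
      = ∑ x ∈ hXfin.toFinset, x * (μ (X ⁻¹' {x} ∩ Y ⁻¹' {t})).toReal := by
    intro t _
    exact setIntegral_fin_range μ hXm hXfin (hY _ ⟨{t}, trivial, rfl⟩)
  rw [Finset.sum_congr rfl h1, Finset.sum_comm]
  apply Finset.sum_congr rfl
  intro x _
  rw [← Finset.mul_sum]
  congr 1
  have := measure_preimage_inter_sum μ hY hYfin S'
    (hXm (measurableSet_singleton x) : MeasurableSet (X ⁻¹' {x}))
  rw [Set.inter_comm]
  rw [this]
  apply Finset.sum_congr rfl
  intro t _
  rw [Set.inter_comm]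

/-- Conditional expectation with respect to the σ-algebra generated by a
finite-range map, explicitly. -/
lemma condexp_comap_fin_range (μ : Measure Ω) [IsProbabilityMeasure μ] {X : Ω → ℝ}
    (hXm : Measurable X) (hXfin : (Set.range X).Finite) (hXint : Integrable X μ)
    {Y : Ω → T} (hY : MeasurableSpace.comap Y ⊤ ≤ mΩ) (hYfin : (Set.range Y).Finite) :
    μ[X | MeasurableSpace.comap Y ⊤]
      =ᵐ[μ] fun ω => (∫ a in Y ⁻¹' {Y ω}, X a ∂μ) / (μ (Y ⁻¹' {Y ω})).toReal := by
  classical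
  set G : T → ℝ := fun t => (∫ a in Y ⁻¹' {t}, X a ∂μ) / (μ (Y ⁻¹' {t})).toReal with hG
  have key : ∀ t, (μ (Y ⁻¹' {t})).toReal * G t = ∫ a in Y ⁻¹' {t}, X a ∂μ := by
    intro t
    rcases eq_or_ne (μ (Y ⁻¹' {t})) 0 with h0 | h0
    · rw [hG]
      simp only [h0, ENNReal.toReal_zero, zero_mul]
      rw [Measure.restrict_eq_zero.2 h0]
      simp
    · have : (μ (Y ⁻¹' {t})).toReal ≠ 0 :=
        ENNReal.toReal_ne_zero.2 ⟨h0, measure_ne_top μ _⟩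
      simp only [hG]
      field_simp
  refine (ae_eq_condExp_of_forall_setIntegral_eq hY hXint ?_ ?_ ?_).symm
  · -- integrable on finite measure sets
    intro s _ _
    apply Integrable.integrableOn
    -- (fun ω => G (Y ω)) is integrable: finite range within prob space
    have hrep : ∀ ω, G (Y ω) = ∑ t ∈ hYfin.toFinset,
        Set.indicator (Y ⁻¹' {t}) (fun _ => G t) ω := by
      intro ω
      rw [Finset.sum_eq_single_of_mem (Y ω) (hYfin.mem_toFinset.2 (Set.mem_range_self ω))]
      · exact (Set.indicator_of_mem (show ω ∈ Y ⁻¹' {Y ω} from rfl) (fun _ => G (Y ω))).symm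
      · intro t _ ht
        exact Set.indicator_of_notMem (s := Y ⁻¹' {t})
          (fun h' => ht (Set.mem_singleton_iff.1 h').symm) (fun _ => G t)
    rw [show (fun ω => G (Y ω)) = fun ω => ∑ t ∈ hYfin.toFinset,
        Set.indicator (Y ⁻¹' {t}) (fun _ => G t) ω from funext hrep]
    apply integrable_finset_sum
    intro t _
    exact (integrable_const (G t)).indicator (hY _ ⟨{t}, trivial, rfl⟩)
  · -- set integrals agree
    rintro s ⟨S', -, rfl⟩ -
    have hind : ∀ ω, Set.indicator (Y ⁻¹' S') (fun ω' => G (Y ω')) ω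
        = (fun t => if t ∈ S' then G t else 0) (Y ω) := by
      intro ω
      by_cases hω : ω ∈ Y ⁻¹' S'
      · rw [Set.indicator_of_mem hω]
        exact (if_pos hω).symm
      · rw [Set.indicator_of_notMem hω]
        exact (if_neg hω).symm
    have hS'meas : MeasurableSet (Y ⁻¹' S') := hY _ ⟨S', trivial, rfl⟩
    rw [← integral_indicator hS'meas, show (Set.indicator (Y ⁻¹' S') fun ω' => G (Y ω'))
        = fun ω => (fun t => if t ∈ S' then G t else 0) (Y ω) from funext hind,
      integral_comp_fin_range μ hY hYfin (fun t => if t ∈ S' then G t else 0),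
      setIntegral_fiber_sum μ hXm hXfin hY hYfin S']
    rw [Finset.sum_filter]
    apply Finset.sum_congr rfl
    intro t _
    by_cases ht : t ∈ S'
    · rw [if_pos ht, if_pos ht, key]
    · rw [if_neg ht, if_neg ht, mul_zero]
  · -- strongly measurable
    exact StronglyMeasurable.aestronglyMeasurable
      (Measurable.stronglyMeasurable
        ((measurable_from_top (f := G)).comp (Measurable.of_comap_le le_rfl)))

end measureHelpers

end helperLemmas

/-- Relation between entropy and expectation: if `Y ↦ Y'` and `X` takes finitely many
values in `[-1,1]`, then `E(|E(X|Y') − E(X|Y)|) ≤ 2 I(X:Y|Y')^{1/2}`. -/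
theorem abs_condexp_sub_condexp_le_sqrt_condMI
    (Ω : Type) [mΩ : MeasurableSpace Ω] (μ : Measure Ω) [IsProbabilityMeasure μ]
    (T T' : Type) (X : Ω → ℝ) (Y : Ω → T) (Y' : Ω → T')
    (hXfin : (Set.range X).Finite) (hYfin : (Set.range Y).Finite)
    (hY'fin : (Set.range Y').Finite)
    (hXmeas : MeasurableSpace.comap X ⊤ ≤ mΩ)
    (hYmeas : MeasurableSpace.comap Y ⊤ ≤ mΩ)
    (hY'meas : MeasurableSpace.comap Y' ⊤ ≤ mΩ)
    (hdet : MeasurableSpace.comap Y' ⊤ ≤ MeasurableSpace.comap Y ⊤)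
    (hXbd : ∀ ω, X ω ∈ Set.Icc (-1 : ℝ) 1) :
    ∫ ω, |(μ[X| MeasurableSpace.comap Y' ⊤]) ω - (μ[X| MeasurableSpace.comap Y ⊤]) ω| ∂μ
      ≤ 2 * Real.sqrt (condMINat μ X Y Y') := by
  classical
  -- Ω is nonempty
  have hΩne : Nonempty Ω := by
    rcases isEmpty_or_nonempty Ω with h | h
    · exfalso
      have h1 : μ Set.univ = 1 := measure_univ
      rw [Set.univ_eq_empty_iff.2 h, measure_empty] at h1
      exact zero_ne_one h1
    · exact h
  -- Y' is a function of Y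
  obtain ⟨f, hf⟩ : ∃ f : T → T', Y' = fun ω => f (Y ω) := by
    have hatom : ∀ t' : T', ∃ S : Set T, Y ⁻¹' S = Y' ⁻¹' {t'} := by
      intro t'
      rcases hdet _ ⟨{t'}, trivial, rfl⟩ with ⟨S, -, hS⟩
      exact ⟨S, hS⟩
    choose Sf hSf using hatom
    have hcongr : ∀ ω₁ ω₂, Y ω₁ = Y ω₂ → Y' ω₁ = Y' ω₂ := by
      intro ω₁ ω₂ h
      have h1 : ω₂ ∈ Y' ⁻¹' {Y' ω₂} := rfl
      rw [← hSf (Y' ω₂)] at h1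
      have h2 : ω₁ ∈ Y ⁻¹' Sf (Y' ω₂) := by
        rw [Set.mem_preimage, h]; exact h1
      rw [hSf (Y' ω₂)] at h2
      exact h2
    refine ⟨fun t => if h : ∃ ω, Y ω = t then Y' h.choose else Y' (Classical.arbitrary Ω),
      funext fun ω => ?_⟩
    have h : ∃ ω', Y ω' = Y ω := ⟨ω, rfl⟩
    show Y' ω = if h : ∃ ω', Y ω' = Y ω then Y' h.choose else Y' (Classical.arbitrary Ω)
    rw [dif_pos h]
    exact (hcongr _ _ h.choose_spec).symm
  subst hf
  -- basic measurability and integrability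
  have hXm : Measurable X := fun s _ => hXmeas _ ⟨s, trivial, rfl⟩
  have hYt : ∀ t : T, MeasurableSet (Y ⁻¹' {t}) := fun t => hYmeas _ ⟨{t}, trivial, rfl⟩
  have hY't : ∀ t' : T', MeasurableSet ((fun ω => f (Y ω)) ⁻¹' {t'}) :=
    fun t' => hY'meas _ ⟨{t'}, trivial, rfl⟩
  have hXint : Integrable X μ := by
    refine ⟨hXm.aestronglyMeasurable, ?_⟩
    apply HasFiniteIntegral.of_bounded (C := 1)
    exact Filter.Eventually.of_forall fun ω => by
      rw [Real.norm_eq_abs]; exact abs_le.2 ⟨(hXbd ω).1, (hXbd ω).2⟩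
  set sX : Finset ℝ := hXfin.toFinset with hsX
  set sY : Finset T := hYfin.toFinset with hsY
  set sY' : Finset T' := sY.image f with hsY'
  set p : ℝ → T → ℝ := fun x t => (μ (X ⁻¹' {x} ∩ Y ⁻¹' {t})).toReal with hp
  set q : T → ℝ := fun t => (μ (Y ⁻¹' {t})).toReal with hq
  set p' : ℝ → T' → ℝ :=
    fun x t' => (μ (X ⁻¹' {x} ∩ (fun ω => f (Y ω)) ⁻¹' {t'})).toReal with hp'
  set q' : T' → ℝ := fun t' => (μ ((fun ω => f (Y ω)) ⁻¹' {t'})).toReal with hq'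
  -- nonnegativity and comparisons
  have hq0 : ∀ t, 0 ≤ q t := fun t => ENNReal.toReal_nonneg
  have hp0 : ∀ x t, 0 ≤ p x t := fun x t => ENNReal.toReal_nonneg
  have hp'0 : ∀ x t', 0 ≤ p' x t' := fun x t' => ENNReal.toReal_nonneg
  have hq'0 : ∀ t', 0 ≤ q' t' := fun t' => ENNReal.toReal_nonneg
  have hple : ∀ x t, p x t ≤ q t := fun x t =>
    ENNReal.toReal_mono (measure_ne_top μ _) (measure_mono Set.inter_subset_right)
  have hpp' : ∀ x t, p x t ≤ p' x (f t) := fun x t =>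
    ENNReal.toReal_mono (measure_ne_top μ _) (measure_mono (by
      apply Set.inter_subset_inter_right
      intro ω hω
      simp only [Set.mem_preimage, Set.mem_singleton_iff] at hω ⊢
      rw [hω]))
  have hp'q' : ∀ x t', p' x t' ≤ q' t' := fun x t' =>
    ENNReal.toReal_mono (measure_ne_top μ _) (measure_mono Set.inter_subset_right)
  have hqq' : ∀ t, q t ≤ q' (f t) :=  fun t =>
    ENNReal.toReal_mono (measure_ne_top μ _) (measure_mono (by
      intro ω hω
      simp only [Set.mem_preimage, Set.mem_singleton_iff] at hω ⊢
      rw [hω]))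
  -- sum decompositions
  have hq1 : ∑ t ∈ sY, q t = 1 := by
    have h := measure_preimage_inter_sum μ hYmeas hYfin Set.univ MeasurableSet.univ
    simp only [Set.preimage_univ, Set.univ_inter, Set.inter_univ, measure_univ,
      ENNReal.toReal_one] at h
    rw [Finset.filter_true_of_mem (fun _ _ => Set.mem_univ _)] at h
    exact h.symm
  have hqp : ∀ t, ∑ x ∈ sX, p x t = q t := by
    intro t
    have h := measure_preimage_inter_sum μ hXmeas hXfin Set.univ (hYt t)
    simp only [Set.preimage_univ, Set.univ_inter] at h
    rw [Finset.filter_true_of_mem (fun _ _ => Set.mem_univ _)] at h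
    exact h.symm
  have hqp' : ∀ t', ∑ x ∈ sX, p' x t' = q' t' := by
    intro t'
    have h := measure_preimage_inter_sum μ hXmeas hXfin Set.univ (hY't t')
    simp only [Set.preimage_univ, Set.univ_inter] at h
    rw [Finset.filter_true_of_mem (fun _ _ => Set.mem_univ _)] at h
    exact h.symm
  have hq'sum : ∀ t', q' t' = ∑ t ∈ sY.filter (fun t => f t = t'), q t := by
    intro t'
    have h := measure_preimage_inter_sum μ hYmeas hYfin (f ⁻¹' {t'}) MeasurableSet.univ
    simp only [Set.inter_univ] at h
    calc q' t' = (μ (Y ⁻¹' (f ⁻¹' {t'}))).toReal := rfl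
      _ = ∑ t ∈ hYfin.toFinset.filter (· ∈ f ⁻¹' {t'}), (μ (Y ⁻¹' {t})).toReal := h
      _ = ∑ t ∈ sY.filter (fun t => f t = t'), q t := by
          apply Finset.sum_congr
          · exact Finset.filter_congr (fun t _ => Iff.rfl)
          · intro t _; rfl
  have hp'sum : ∀ x t', p' x t' = ∑ t ∈ sY.filter (fun t => f t = t'), p x t := by
    intro x t'
    have h := measure_preimage_inter_sum μ hYmeas hYfin (f ⁻¹' {t'})
      (hXm (measurableSet_singleton x))
    calc p' x t' = (μ (Y ⁻¹' (f ⁻¹' {t'}) ∩ X ⁻¹' {x})).toReal := by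
          rw [Set.inter_comm]
          rfl
      _ = ∑ t ∈ hYfin.toFinset.filter (· ∈ f ⁻¹' {t'}), (μ (Y ⁻¹' {t} ∩ X ⁻¹' {x})).toReal := h
      _ = ∑ t ∈ sY.filter (fun t => f t = t'), p x t := by
          apply Finset.sum_congr
          · exact Finset.filter_congr (fun t _ => Iff.rfl)
          · intro t _
            rw [Set.inter_comm]
  -- range facts
  have hrangeY : Set.range Y ⊆ ↑sY := fun a ha => Finset.mem_coe.2 (hYfin.mem_toFinset.2 ha)
  have hrangeY' : Set.range (fun ω => f (Y ω)) ⊆ ↑sY' := by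
    rintro _ ⟨ω, rfl⟩
    exact Finset.mem_coe.2 (Finset.mem_image_of_mem f (hYfin.mem_toFinset.2 ⟨ω, rfl⟩))
  have hrangeXY : Set.range (fun ω => (X ω, Y ω)) ⊆ ↑(sX ×ˢ sY) := by
    rintro _ ⟨ω, rfl⟩
    exact Finset.mem_coe.2 (Finset.mem_product.2
      ⟨hXfin.mem_toFinset.2 ⟨ω, rfl⟩, hYfin.mem_toFinset.2 ⟨ω, rfl⟩⟩)
  have hrangeXY' : Set.range (fun ω => (X ω, f (Y ω))) ⊆ ↑(sX ×ˢ sY') := by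
    rintro _ ⟨ω, rfl⟩
    refine Finset.mem_coe.2 (Finset.mem_product.2 ⟨hXfin.mem_toFinset.2 ⟨ω, rfl⟩, ?_⟩)
    exact Finset.mem_image_of_mem f (hYfin.mem_toFinset.2 ⟨ω, rfl⟩)
  have hpairXY : ∀ (x : ℝ) (t : T),
      (fun ω => (X ω, Y ω)) ⁻¹' {(x, t)} = X ⁻¹' {x} ∩ Y ⁻¹' {t} := by
    intro x t
    ext ω
    simp only [Set.mem_preimage, Set.mem_singleton_iff, Prod.mk.injEq, Set.mem_inter_iff]
  have hpairXY' : ∀ (x : ℝ) (t' : T'),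
      (fun ω => (X ω, f (Y ω))) ⁻¹' {(x, t')} = X ⁻¹' {x} ∩ (fun ω => f (Y ω)) ⁻¹' {t'} := by
    intro x t'
    ext ω
    simp only [Set.mem_preimage, Set.mem_singleton_iff, Prod.mk.injEq, Set.mem_inter_iff]
  -- entropy identities
  have HY : entNat μ Y = ∑ t ∈ sY, q t * Real.log (1 / q t) := entNat_eq_sum μ sY hrangeY
  have HY' : entNat μ (fun ω => f (Y ω)) = ∑ t' ∈ sY', q' t' * Real.log (1 / q' t') :=
    entNat_eq_sum μ sY' hrangeY'
  have HXY : entNat μ (fun ω => (X ω, Y ω))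
      = ∑ t ∈ sY, ∑ x ∈ sX, p x t * Real.log (1 / p x t) := by
    rw [entNat_eq_sum μ (sX ×ˢ sY) hrangeXY, Finset.sum_product, Finset.sum_comm]
    apply Finset.sum_congr rfl
    intro t _
    apply Finset.sum_congr rfl
    intro x _
    rw [hpairXY x t]
  have HXY' : entNat μ (fun ω => (X ω, f (Y ω)))
      = ∑ t' ∈ sY', ∑ x ∈ sX, p' x t' * Real.log (1 / p' x t') := by
    rw [entNat_eq_sum μ (sX ×ˢ sY') hrangeXY', Finset.sum_product, Finset.sum_comm]
    apply Finset.sum_congr rfl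
    intro t' _
    apply Finset.sum_congr rfl
    intro x _
    rw [hpairXY' x t']
  have hinj1 : Function.Injective (fun s : ℝ × T => (s.1, (s.2, f s.2))) := by
    intro u v h
    have h1 := congrArg Prod.fst h
    have h2 := congrArg (fun z : ℝ × (T × T') => z.2.1) h
    exact Prod.ext h1 h2
  have hinj2 : Function.Injective (fun t : T => (t, f t)) := fun u v h => congrArg Prod.fst h
  have HcondMI : condMINat μ X Y (fun ω => f (Y ω))
      = (entNat μ (fun ω => (X ω, f (Y ω))) - entNat μ (fun ω => f (Y ω)))
        - (entNat μ (fun ω => (X ω, Y ω)) - entNat μ Y) := by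
    have e1 : entNat μ (fun ω => (X ω, (Y ω, f (Y ω)))) = entNat μ (fun ω => (X ω, Y ω)) :=
      entNat_comp_inj μ (fun ω => (X ω, Y ω)) (e := fun s => (s.1, (s.2, f s.2))) hinj1
    have e2 : entNat μ (fun ω => (Y ω, f (Y ω))) = entNat μ Y :=
      entNat_comp_inj μ Y (e := fun t => (t, f t)) hinj2
    simp only [condMINat, condEntNat]
    rw [e1, e2]
  -- the key KL-divergence sum
  set k : T → ℝ :=
    fun t => ∑ x ∈ sX, p x t * Real.log (p x t * q' (f t) / (q t * p' x (f t))) with hkdef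
  have hlog4 : ∀ t, ∀ x, p x t * Real.log (p x t * q' (f t) / (q t * p' x (f t)))
      = (p x t * Real.log (p x t) - p x t * Real.log (q t))
        + (p x t * Real.log (q' (f t)) - p x t * Real.log (p' x (f t))) := by
    intro t x
    rcases eq_or_lt_of_le (hp0 x t) with h0 | h0
    · rw [← h0]; ring
    · have hqpos : 0 < q t := lt_of_lt_of_le h0 (hple x t)
      have hp'pos : 0 < p' x (f t) := lt_of_lt_of_le h0 (hpp' x t)
      have hq'pos : 0 < q' (f t) := lt_of_lt_of_le hp'pos (hp'q' x (f t))
      rw [Real.log_div (by positivity) (by positivity), Real.log_mul h0.ne' hq'pos.ne',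
        Real.log_mul hqpos.ne' hp'pos.ne']
      ring
  have hkexp : ∑ t ∈ sY, k t
      = ((∑ t ∈ sY, ∑ x ∈ sX, p x t * Real.log (p x t))
          - (∑ t ∈ sY, ∑ x ∈ sX, p x t * Real.log (q t)))
        + ((∑ t ∈ sY, ∑ x ∈ sX, p x t * Real.log (q' (f t)))
          - (∑ t ∈ sY, ∑ x ∈ sX, p x t * Real.log (p' x (f t)))) := by
    rw [show ∑ t ∈ sY, k t = ∑ t ∈ sY, ∑ x ∈ sX,
        ((p x t * Real.log (p x t) - p x t * Real.log (q t))
          + (p x t * Real.log (q' (f t)) - p x t * Real.log (p' x (f t)))) from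
      Finset.sum_congr rfl fun t _ => Finset.sum_congr rfl fun x _ => hlog4 t x]
    simp only [Finset.sum_add_distrib, Finset.sum_sub_distrib]
  have hA2 : ∑ t ∈ sY, ∑ x ∈ sX, p x t * Real.log (q t) = ∑ t ∈ sY, q t * Real.log (q t) :=
    Finset.sum_congr rfl fun t _ => by rw [← Finset.sum_mul, hqp t]
  have hA3 : ∑ t ∈ sY, ∑ x ∈ sX, p x t * Real.log (q' (f t))
      = ∑ t' ∈ sY', q' t' * Real.log (q' t') := by
    rw [show (∑ t ∈ sY, ∑ x ∈ sX, p x t * Real.log (q' (f t)))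
        = ∑ t ∈ sY, q t * Real.log (q' (f t)) from
      Finset.sum_congr rfl fun t _ => by rw [← Finset.sum_mul, hqp t]]
    rw [← Finset.sum_fiberwise_of_maps_to (g := f)
      (fun t ht => Finset.mem_image_of_mem f ht) (fun t => q t * Real.log (q' (f t)))]
    apply Finset.sum_congr rfl
    intro t' _
    have hcg : ∑ t ∈ sY.filter (fun t => f t = t'), q t * Real.log (q' (f t))
        = ∑ t ∈ sY.filter (fun t => f t = t'), q t * Real.log (q' t') :=
      Finset.sum_congr rfl (fun t ht => by rw [(Finset.mem_filter.1 ht).2])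
    rw [hcg, ← Finset.sum_mul, ← hq'sum t']
  have hA4 : ∑ t ∈ sY, ∑ x ∈ sX, p x t * Real.log (p' x (f t))
      = ∑ t' ∈ sY', ∑ x ∈ sX, p' x t' * Real.log (p' x t') := by
    rw [Finset.sum_comm]
    have h1 : ∀ x, ∑ t ∈ sY, p x t * Real.log (p' x (f t))
        = ∑ t' ∈ sY', p' x t' * Real.log (p' x t') := by
      intro x
      rw [← Finset.sum_fiberwise_of_maps_to (g := f)
        (fun t ht => Finset.mem_image_of_mem f ht) (fun t => p x t * Real.log (p' x (f t)))]
      apply Finset.sum_congr rfl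
      intro t' _
      have hcg : ∑ t ∈ sY.filter (fun t => f t = t'), p x t * Real.log (p' x (f t))
          = ∑ t ∈ sY.filter (fun t => f t = t'), p x t * Real.log (p' x t') :=
        Finset.sum_congr rfl (fun t ht => by rw [(Finset.mem_filter.1 ht).2])
      rw [hcg, ← Finset.sum_mul, ← hp'sum x t']
    rw [Finset.sum_congr rfl (fun x _ => h1 x), Finset.sum_comm]
  have hneg : ∀ a : ℝ, a * Real.log (1 / a) = -(a * Real.log a) := fun a => by
    rw [one_div, Real.log_inv, mul_neg]
  have hC1 : condMINat μ X Y (fun ω => f (Y ω)) = ∑ t ∈ sY, k t := by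
    rw [HcondMI, HXY, HY, HXY', HY']
    simp only [hneg, Finset.sum_neg_distrib]
    linarith [hkexp, hA2, hA3, hA4]
  -- conditional expectations as explicit functions
  set G : T → ℝ := fun t => (∫ a in Y ⁻¹' {t}, X a ∂μ) / (μ (Y ⁻¹' {t})).toReal with hGdef
  set G' : T' → ℝ := fun t' => (∫ a in (fun ω => f (Y ω)) ⁻¹' {t'}, X a ∂μ)
      / (μ ((fun ω => f (Y ω)) ⁻¹' {t'})).toReal with hG'def
  have hmean : ∀ t, ∫ a in Y ⁻¹' {t}, X a ∂μ = ∑ x ∈ sX, x * p x t :=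
    fun t => setIntegral_fin_range μ hXm hXfin (hYt t)
  have hmean' : ∀ t', ∫ a in (fun ω => f (Y ω)) ⁻¹' {t'}, X a ∂μ = ∑ x ∈ sX, x * p' x t' :=
    fun t' => setIntegral_fin_range μ hXm hXfin (hY't t')
  have hae1 := condexp_comap_fin_range μ hXm hXfin hXint hYmeas hYfin
  have hae2 := condexp_comap_fin_range μ hXm hXfin hXint hY'meas hY'fin
  have hstep1 : ∫ ω, |(μ[X| MeasurableSpace.comap (fun ω => f (Y ω)) ⊤]) ω
        - (μ[X| MeasurableSpace.comap Y ⊤]) ω| ∂μ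
      = ∫ ω, |G' (f (Y ω)) - G (Y ω)| ∂μ := by
    apply integral_congr_ae
    filter_upwards [hae1, hae2] with ω h1 h2
    rw [h1, h2]
  have hstep2 : ∫ ω, |G' (f (Y ω)) - G (Y ω)| ∂μ = ∑ t ∈ sY, q t * |G' (f t) - G t| :=
    integral_comp_fin_range μ hYmeas hYfin (fun t => |G' (f t) - G t|)
  -- per-atom bound
  have hmain : ∀ t, 0 ≤ k t ∧ q t * |G' (f t) - G t| ≤ Real.sqrt (q t) * Real.sqrt (2 * k t) := by
    intro t
    rcases eq_or_lt_of_le (hq0 t) with h | h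
    · have hpz : ∀ x, p x t = 0 := fun x => le_antisymm (h ▸ hple x t) (hp0 x t)
      have hkz : k t = 0 := Finset.sum_eq_zero (fun x _ => by rw [hpz x, zero_mul])
      refine ⟨le_of_eq hkz.symm, ?_⟩
      rw [← h, zero_mul]
      positivity
    · have hc'pos : 0 < q' (f t) := lt_of_lt_of_le h (hqq' t)
      set a : ℝ → ℝ := fun x => p x t / q t with hadef
      set b : ℝ → ℝ := fun x => p' x (f t) / q' (f t) with hbdef
      have ha0 : ∀ x, 0 ≤ a x := fun x => div_nonneg (hp0 x t) (hq0 t)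
      have hb0 : ∀ x, 0 ≤ b x := fun x => div_nonneg (hp'0 x (f t)) (hq'0 (f t))
      have hab : ∀ x, b x = 0 → a x = 0 := by
        intro x hbx
        have hp'z : p' x (f t) = 0 := by
          rcases div_eq_zero_iff.1 hbx with h' | h'
          · exact h'
          · exact absurd h' hc'pos.ne'
        have hpz : p x t = 0 := le_antisymm (hp'z ▸ hpp' x t) (hp0 x t)
        rw [hadef]
        simp only [hpz, zero_div]
      have ha1 : ∑ x ∈ sX, a x = 1 := by
        rw [hadef]
        simp only
        rw [← Finset.sum_div, hqp t, div_self h.ne']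
      have hb1 : ∑ x ∈ sX, b x = 1 := by
        rw [hbdef]
        simp only
        rw [← Finset.sum_div, hqp' (f t), div_self hc'pos.ne']
      have pins := pinsker_finset sX a b ha0 hb0 hab ha1 hb1
      set KL : ℝ := ∑ x ∈ sX, a x * Real.log (a x / b x) with hKLdef
      have hlink : k t = q t * KL := by
        rw [hkdef, hKLdef, Finset.mul_sum]
        apply Finset.sum_congr rfl
        intro x _
        rcases eq_or_lt_of_le (hp0 x t) with h0 | h0
        · have hax : a x = 0 := by rw [hadef]; simp only [← h0, zero_div]
          rw [← h0, hax]
          ring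
        · have hp'pos : 0 < p' x (f t) := lt_of_lt_of_le h0 (hpp' x t)
          have harg : a x / b x = p x t * q' (f t) / (q t * p' x (f t)) := by
            rw [hadef, hbdef]
            field_simp
          rw [harg, hadef]
          field_simp
      have hk0 : 0 ≤ k t := by rw [hlink]; exact mul_nonneg h.le pins.1
      refine ⟨hk0, ?_⟩
      have hGt : G t = ∑ x ∈ sX, x * a x := by
        rw [hGdef]
        simp only
        rw [hmean t, Finset.sum_div]
        apply Finset.sum_congr rfl
        intro x _
        rw [hadef, mul_div_assoc]
      have hG't : G' (f t) = ∑ x ∈ sX, x * b x := by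
        rw [hG'def]
        simp only
        rw [hmean' (f t), Finset.sum_div]
        apply Finset.sum_congr rfl
        intro x _
        rw [hbdef, mul_div_assoc]
      have habs : |G' (f t) - G t| ≤ ∑ x ∈ sX, |a x - b x| := by
        rw [hG't, hGt, ← Finset.sum_sub_distrib]
        refine le_trans (Finset.abs_sum_le_sum_abs _ _) (Finset.sum_le_sum ?_)
        intro x hx
        have hx1 : |x| ≤ 1 := by
          obtain ⟨ω, rfl⟩ := hXfin.mem_toFinset.1 hx
          exact abs_le.2 ⟨(hXbd ω).1, (hXbd ω).2⟩
        calc |x * b x - x * a x| = |x| * |b x - a x| := by rw [← mul_sub, abs_mul]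
          _ ≤ 1 * |b x - a x| := mul_le_mul_of_nonneg_right hx1 (abs_nonneg _)
          _ = |a x - b x| := by rw [one_mul, abs_sub_comm]
      calc q t * |G' (f t) - G t| ≤ q t * Real.sqrt (2 * KL) :=
            mul_le_mul_of_nonneg_left (habs.trans pins.2) h.le
        _ = Real.sqrt (q t) * Real.sqrt (q t) * Real.sqrt (2 * KL) := by
            rw [Real.mul_self_sqrt h.le]
        _ = Real.sqrt (q t) * Real.sqrt (2 * k t) := by
            rw [mul_assoc, ← Real.sqrt_mul h.le]
            congr 1
            rw [hlink]
            ring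
  calc ∫ ω, |(μ[X| MeasurableSpace.comap (fun ω => f (Y ω)) ⊤]) ω
        - (μ[X| MeasurableSpace.comap Y ⊤]) ω| ∂μ
      = ∑ t ∈ sY, q t * |G' (f t) - G t| := hstep1.trans hstep2
    _ ≤ ∑ t ∈ sY, Real.sqrt (q t) * Real.sqrt (2 * k t) :=
        Finset.sum_le_sum (fun t _ => (hmain t).2)
    _ ≤ Real.sqrt (∑ t ∈ sY, q t) * Real.sqrt (∑ t ∈ sY, 2 * k t) :=
        Real.sum_sqrt_mul_sqrt_le sY hq0 (fun t => by have := (hmain t).1; linarith)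
    _ = Real.sqrt (2 * condMINat μ X Y (fun ω => f (Y ω))) := by
        rw [hq1, Real.sqrt_one, one_mul, ← Finset.mul_sum, ← hC1]
    _ ≤ 2 * Real.sqrt (condMINat μ X Y (fun ω => f (Y ω))) := by
        rw [Real.sqrt_mul (by norm_num : (0:ℝ) ≤ 2)]
        have h2 : Real.sqrt 2 ≤ 2 := by
          have h4 := Real.sqrt_le_sqrt (show (2:ℝ) ≤ 4 by norm_num)
          rwa [show (4:ℝ) = 2^2 by norm_num, Real.sqrt_sq (by norm_num : (0:ℝ) ≤ 2)] at h4
        exact mul_le_mul_of_nonneg_right h2 (Real.sqrt_nonneg _)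
end

section
/- Unconditional entropy–expectation bound (special case of Lemma 4.5): Let X, Y be random variables on a probability space, each taking finitely many values, with X taking values in [−1, 1]. Then E( |E(X) − E(X | Y)| ) ≤ 2 · I(X : Y)^{1/2}, where E(X | Y) is the conditional expectation of X with respect to the σ-algebra generated by Y and the mutual information I(X : Y) := H(X) − H(X | Y) is computed with the natural logarithm. -/
set_option linter.unusedSectionVars false
set_option maxHeartbeats 1000000


open MeasureTheory

/-- Mutual information `I(X:Y) := H(X) − H(X|Y)` (in nats). -/
noncomputable def miNat {Ω S T : Type*} [MeasurableSpace Ω] (μ : Measure Ω)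
    (X : Ω → S) (Y : Ω → T) : ℝ :=
  entNat μ X - condEntNat μ X Y

lemma fKL_key (a b : ℝ) (ha : 0 ≤ a) (hb : 0 ≤ b) (hba : b = 0 → a = 0) :
    0 ≤ a * Real.log (a / b) + b - a ∧
      (a - b) ^ 2 ≤ 2 * (a + b) * (a * Real.log (a / b) + b - a) := by
  rcases hb.eq_or_lt with hb0 | hb0
  · have ha0 : a = 0 := hba hb0.symm
    subst ha0; rw [← hb0]; norm_num
  rcases ha.eq_or_lt with ha0 | ha0
  · rw [← ha0]
    simp only [zero_div, Real.log_zero, mul_zero, zero_add, zero_mul, sub_zero]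
    constructor <;> nlinarith
  set sa := Real.sqrt a with hsa
  set sb := Real.sqrt b with hsb
  have sa2 : sa ^ 2 = a := Real.sq_sqrt ha
  have sb2 : sb ^ 2 = b := Real.sq_sqrt hb
  have sapos : 0 < sa := Real.sqrt_pos.mpr ha0
  have sbpos : 0 < sb := Real.sqrt_pos.mpr hb0
  have hdiv : Real.sqrt (b / a) = sb / sa := Real.sqrt_div hb a
  have hlog1 : Real.log (Real.sqrt (b / a)) ≤ sb / sa - 1 := by
    rw [hdiv] at *
    exact Real.log_le_sub_one_of_pos (by positivity)
  have hlogeq : Real.log (a / b) = -(2 * Real.log (Real.sqrt (b / a))) := by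
    rw [Real.log_sqrt (by positivity), Real.log_div hb0.ne' ha0.ne',
      Real.log_div ha0.ne' hb0.ne']
    ring
  have hf : (sa - sb) ^ 2 ≤ a * Real.log (a / b) + b - a := by
    have h2 : a * Real.log (Real.sqrt (b/a)) ≤ a * (sb / sa - 1) :=
      mul_le_mul_of_nonneg_left hlog1 ha
    have h3 : a * (sb / sa) = sa * sb := by
      rw [← sa2]; field_simp
    rw [mul_sub, h3, mul_one] at h2
    rw [hlogeq]
    nlinarith [h2]
  constructor
  · nlinarith [sq_nonneg (sa - sb)]
  · have h2 : (sa + sb) ^ 2 ≤ 2 * (a + b) := by nlinarith [sq_nonneg (sa - sb)]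
    have h3 : (sa - sb) ^ 2 * (sa + sb) ^ 2 ≤ (a * Real.log (a / b) + b - a) * (2 * (a + b)) :=
      mul_le_mul hf h2 (sq_nonneg _) (by nlinarith [sq_nonneg (sa - sb)])
    nlinarith [h3]

section helpers

variable {Ω T : Type*} [mΩ : MeasurableSpace Ω] (μ : Measure Ω) [IsProbabilityMeasure μ]
  (Y : Ω → T)

/-- The sets `Y ⁻¹' {t}`, `t ∈ range Y`, are pairwise disjoint. -/
lemma pre_disj : Set.PairwiseDisjoint (Set.univ : Set T) (fun t => Y ⁻¹' {t}) := by
  intro t _ t' _ hne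
  refine Set.disjoint_left.mpr fun ω h1 h2 => ?_
  exact hne ((Set.mem_preimage.mp h1).symm.trans (Set.mem_preimage.mp h2))

/-- Partitioning the measure of a set along the finite fibers of `Y`. -/
lemma partition_meas (hYfin : (Set.range Y).Finite)
    (hB : ∀ t : T, MeasurableSet (Y ⁻¹' {t})) (s : Set Ω) (hs : MeasurableSet s) :
    (μ s).toReal = ∑ t ∈ hYfin.toFinset, (μ (s ∩ Y ⁻¹' {t})).toReal := by
  have hset : s = ⋃ t ∈ hYfin.toFinset, s ∩ Y ⁻¹' {t} := by
    ext ω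
    simp only [Set.mem_iUnion, Set.mem_inter_iff, Set.mem_preimage, Set.mem_singleton_iff,
      Set.Finite.mem_toFinset]
    constructor
    · intro h; exact ⟨Y ω, Set.mem_range_self ω, h, rfl⟩
    · rintro ⟨t, -, h, -⟩; exact h
  rw [← ENNReal.toReal_sum (fun t _ => measure_ne_top μ _)]
  congr 1
  conv_lhs => rw [hset]
  rw [measure_biUnion_finset ?_ (fun t _ => hs.inter (hB t))]
  intro t ht t' ht' hne
  exact Disjoint.mono Set.inter_subset_right Set.inter_subset_right
    (pre_disj Y (Set.mem_univ t) (Set.mem_univ t') hne)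

open scoped Classical

/-- Partitioning a set integral along the finite fibers of `Y`. -/
lemma partition_setIntegral (hYfin : (Set.range Y).Finite)
    (hB : ∀ t : T, MeasurableSet (Y ⁻¹' {t})) (f : Ω → ℝ) (hf : Integrable f μ) (A : Set T) :
    ∫ ω in Y ⁻¹' A, f ω ∂μ
      = ∑ t ∈ hYfin.toFinset.filter (· ∈ A), ∫ ω in Y ⁻¹' {t}, f ω ∂μ := by
  have hset : Y ⁻¹' A = ⋃ t ∈ hYfin.toFinset.filter (· ∈ A), Y ⁻¹' {t} := by
    ext ω
    simp only [Set.mem_iUnion, Set.mem_preimage, Set.mem_singleton_iff, Finset.mem_filter,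
      Set.Finite.mem_toFinset]
    constructor
    · intro h; exact ⟨Y ω, ⟨Set.mem_range_self ω, h⟩, rfl⟩
    · rintro ⟨t, ⟨-, h⟩, rfl⟩; exact h
  rw [hset, integral_biUnion_finset _ (fun t _ => hB t) ?_ (fun t _ => hf.integrableOn)]
  intro t ht t' ht' hne
  exact pre_disj Y (Set.mem_univ t) (Set.mem_univ t') hne

/-- Partitioning an integral along the finite fibers of `Y`. -/
lemma partition_integral (hYfin : (Set.range Y).Finite)
    (hB : ∀ t : T, MeasurableSet (Y ⁻¹' {t})) (f : Ω → ℝ) (hf : Integrable f μ) :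
    ∫ ω, f ω ∂μ = ∑ t ∈ hYfin.toFinset, ∫ ω in Y ⁻¹' {t}, f ω ∂μ := by
  have := partition_setIntegral μ Y hYfin hB f hf Set.univ
  simp only [Set.preimage_univ, Measure.restrict_univ, Set.mem_univ,
    Finset.filter_true] at this
  simpa using this

end helpers

/-- Pure algebra: rewriting `H(X)+H(Y)-H(X,Y)` as a sum of KL-type terms. -/
lemma sum_identity {ι κ : Type*} (s : Finset ι) (t : Finset κ) (p : ι → ℝ) (r : κ → ℝ)
    (j : ι → κ → ℝ)
    (hmargp : ∀ x ∈ s, ∑ y ∈ t, j x y = p x) (hmargr : ∀ y ∈ t, ∑ x ∈ s, j x y = r y)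
    (hp1 : ∑ x ∈ s, p x = 1) (hr1 : ∑ y ∈ t, r y = 1)
    (hj0 : ∀ x y, 0 ≤ j x y) (hjp : ∀ x ∈ s, ∀ y ∈ t, j x y ≤ p x)
    (hjr : ∀ x ∈ s, ∀ y ∈ t, j x y ≤ r y) :
    (∑ x ∈ s, p x * Real.log (1 / p x)) + (∑ y ∈ t, r y * Real.log (1 / r y))
      - (∑ x ∈ s, ∑ y ∈ t, j x y * Real.log (1 / j x y))
    = ∑ x ∈ s, ∑ y ∈ t, (j x y * Real.log (j x y / (p x * r y)) + p x * r y - j x y) := by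
  have h1 : ∑ x ∈ s, p x * Real.log (1 / p x)
      = ∑ x ∈ s, ∑ y ∈ t, j x y * Real.log (1 / p x) := by
    refine Finset.sum_congr rfl fun x hx => ?_
    rw [← Finset.sum_mul, hmargp x hx]
  have h2 : ∑ y ∈ t, r y * Real.log (1 / r y)
      = ∑ x ∈ s, ∑ y ∈ t, j x y * Real.log (1 / r y) := by
    rw [Finset.sum_comm]
    refine Finset.sum_congr rfl fun y hy => ?_
    rw [← Finset.sum_mul, hmargr y hy]
  have h3 : ∑ x ∈ s, ∑ y ∈ t, (j x y * Real.log (1 / p x) + j x y * Real.log (1 / r y)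
      - j x y * Real.log (1 / j x y))
      = ∑ x ∈ s, ∑ y ∈ t, j x y * Real.log (j x y / (p x * r y)) := by
    refine Finset.sum_congr rfl fun x hx => Finset.sum_congr rfl fun y hy => ?_
    by_cases hj : j x y = 0
    · simp [hj]
    have hjpos : 0 < j x y := lt_of_le_of_ne (hj0 x y) (Ne.symm hj)
    have hp0 : p x ≠ 0 := ne_of_gt (lt_of_lt_of_le hjpos (hjp x hx y hy))
    have hr0 : r y ≠ 0 := ne_of_gt (lt_of_lt_of_le hjpos (hjr x hx y hy))
    rw [one_div, one_div, one_div, Real.log_inv, Real.log_inv, Real.log_inv,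
      Real.log_div hj (mul_ne_zero hp0 hr0), Real.log_mul hp0 hr0]
    ring
  have hc1 : ∑ x ∈ s, ∑ y ∈ t, p x * r y = 1 := by
    rw [← Finset.sum_mul_sum, hp1, hr1, mul_one]
  have hc2 : ∑ x ∈ s, ∑ y ∈ t, j x y = 1 := by
    rw [Finset.sum_congr rfl hmargp, hp1]
  have hexp : ∑ x ∈ s, ∑ y ∈ t, (j x y * Real.log (j x y / (p x * r y)) + p x * r y - j x y)
      = (∑ x ∈ s, ∑ y ∈ t, j x y * Real.log (j x y / (p x * r y)))
        + (∑ x ∈ s, ∑ y ∈ t, p x * r y) - (∑ x ∈ s, ∑ y ∈ t, j x y) := by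
    simp only [Finset.sum_sub_distrib, Finset.sum_add_distrib]
  have hexp2 : (∑ x ∈ s, ∑ y ∈ t, (j x y * Real.log (1 / p x) + j x y * Real.log (1 / r y)
      - j x y * Real.log (1 / j x y)))
      = (∑ x ∈ s, ∑ y ∈ t, j x y * Real.log (1 / p x))
        + (∑ x ∈ s, ∑ y ∈ t, j x y * Real.log (1 / r y))
        - (∑ x ∈ s, ∑ y ∈ t, j x y * Real.log (1 / j x y)) := by
    simp only [Finset.sum_sub_distrib, Finset.sum_add_distrib]
  rw [h1, h2, hexp, hc1, hc2, ← h3, hexp2]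
  ring

/-- Integral of a finite-valued function over a set, as a finite sum. -/
lemma simple_setIntegral {Ω : Type} [mΩ : MeasurableSpace Ω] (μ : Measure Ω)
    [IsProbabilityMeasure μ] (X : Ω → ℝ) (hXfin : (Set.range X).Finite)
    (hA : ∀ x : ℝ, MeasurableSet (X ⁻¹' {x})) (s : Set Ω) :
    ∫ ω in s, X ω ∂μ = ∑ x ∈ hXfin.toFinset, x * (μ (X ⁻¹' {x} ∩ s)).toReal := by
  have hrepr : ∀ ω, X ω = ∑ x ∈ hXfin.toFinset, Set.indicator (X ⁻¹' {x}) (fun _ => x) ω := by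
    intro ω
    rw [Finset.sum_eq_single_of_mem (X ω) (hXfin.mem_toFinset.mpr (Set.mem_range_self ω))]
    · have hmem : ω ∈ X ⁻¹' {X ω} := Set.mem_preimage.mpr (Set.mem_singleton _)
      exact (Set.indicator_of_mem hmem (fun _ => X ω)).symm
    · intro b _ hb
      have hnm : ω ∉ X ⁻¹' {b} := fun h => hb (Set.mem_singleton_iff.mp h).symm
      exact Set.indicator_of_notMem hnm (fun _ => b)
  calc ∫ ω in s, X ω ∂μ
      = ∫ ω in s, (∑ x ∈ hXfin.toFinset, Set.indicator (X ⁻¹' {x}) (fun _ => x) ω) ∂μ :=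
        integral_congr_ae (Filter.Eventually.of_forall fun ω => hrepr ω)
    _ = ∑ x ∈ hXfin.toFinset, ∫ ω in s, Set.indicator (X ⁻¹' {x}) (fun _ => x) ω ∂μ :=
        integral_finset_sum _ (fun x _ => ((integrable_const x).indicator (hA x)).integrableOn)
    _ = ∑ x ∈ hXfin.toFinset, x * (μ (X ⁻¹' {x} ∩ s)).toReal := by
        refine Finset.sum_congr rfl fun x _ => ?_
        rw [setIntegral_indicator (hA x), setIntegral_const, Set.inter_comm, smul_eq_mul,
          mul_comm]
        rfl

/-- Unconditional entropy–expectation bound: if `X` takes finitely many values in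
`[-1,1]`, then `E(|E(X) − E(X|Y)|) ≤ 2 I(X:Y)^{1/2}`. -/
theorem abs_integral_sub_condexp_le_sqrt_MI
    (Ω : Type) [mΩ : MeasurableSpace Ω] (μ : Measure Ω) [IsProbabilityMeasure μ]
    (T : Type) (X : Ω → ℝ) (Y : Ω → T)
    (hXfin : (Set.range X).Finite) (hYfin : (Set.range Y).Finite)
    (hXmeas : MeasurableSpace.comap X ⊤ ≤ mΩ)
    (hYmeas : MeasurableSpace.comap Y ⊤ ≤ mΩ)
    (hXbd : ∀ ω, X ω ∈ Set.Icc (-1 : ℝ) 1) :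
    ∫ ω, |(∫ x, X x ∂μ) - (μ[X| MeasurableSpace.comap Y ⊤]) ω| ∂μ
      ≤ 2 * Real.sqrt (miNat μ X Y) := by
  classical
  have hB : ∀ t : T, MeasurableSet (Y ⁻¹' {t}) := fun t => hYmeas _ ⟨{t}, trivial, rfl⟩
  have hA : ∀ x : ℝ, MeasurableSet (X ⁻¹' {x}) := fun x => hXmeas _ ⟨{x}, trivial, rfl⟩
  have hXm : Measurable X := fun s _ => hXmeas _ ⟨s, trivial, rfl⟩
  haveI : SigmaFinite (μ.trim hYmeas) := by
    haveI := isFiniteMeasure_trim (μ := μ) hYmeas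
    infer_instance
  -- abbreviations (definitional, used only in `have` statements)
  set sX := hXfin.toFinset with hsX
  set sY := hYfin.toFinset with hsY
  have hp0 : ∀ x : ℝ, (0:ℝ) ≤ (μ (X ⁻¹' {x})).toReal := fun x => ENNReal.toReal_nonneg
  have hr0 : ∀ t : T, (0:ℝ) ≤ (μ (Y ⁻¹' {t})).toReal := fun t => ENNReal.toReal_nonneg
  have hj0 : ∀ (x : ℝ) (t : T), (0:ℝ) ≤ (μ (X ⁻¹' {x} ∩ Y ⁻¹' {t})).toReal :=
    fun x t => ENNReal.toReal_nonneg
  have hjp : ∀ (x : ℝ) (t : T),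
      (μ (X ⁻¹' {x} ∩ Y ⁻¹' {t})).toReal ≤ (μ (X ⁻¹' {x})).toReal := fun x t =>
    ENNReal.toReal_mono (measure_ne_top μ _) (measure_mono Set.inter_subset_left)
  have hjr : ∀ (x : ℝ) (t : T),
      (μ (X ⁻¹' {x} ∩ Y ⁻¹' {t})).toReal ≤ (μ (Y ⁻¹' {t})).toReal := fun x t =>
    ENNReal.toReal_mono (measure_ne_top μ _) (measure_mono Set.inter_subset_right)
  have hmargp : ∀ x : ℝ,
      ∑ t ∈ sY, (μ (X ⁻¹' {x} ∩ Y ⁻¹' {t})).toReal = (μ (X ⁻¹' {x})).toReal := fun x =>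
    (partition_meas μ Y hYfin hB (X ⁻¹' {x}) (hA x)).symm
  have hmargr : ∀ t : T,
      ∑ x ∈ sX, (μ (X ⁻¹' {x} ∩ Y ⁻¹' {t})).toReal = (μ (Y ⁻¹' {t})).toReal := by
    intro t
    calc ∑ x ∈ sX, (μ (X ⁻¹' {x} ∩ Y ⁻¹' {t})).toReal
        = ∑ x ∈ sX, (μ (Y ⁻¹' {t} ∩ X ⁻¹' {x})).toReal :=
          Finset.sum_congr rfl fun x _ => by rw [Set.inter_comm]
      _ = (μ (Y ⁻¹' {t})).toReal :=
          (partition_meas μ X hXfin hA (Y ⁻¹' {t}) (hB t)).symm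
  have hp1 : ∑ x ∈ sX, (μ (X ⁻¹' {x})).toReal = 1 := by
    have h := partition_meas μ X hXfin hA Set.univ MeasurableSet.univ
    simp only [measure_univ, ENNReal.toReal_one, Set.univ_inter] at h
    exact h.symm
  have hr1 : ∑ t ∈ sY, (μ (Y ⁻¹' {t})).toReal = 1 := by
    have h := partition_meas μ Y hYfin hB Set.univ MeasurableSet.univ
    simp only [measure_univ, ENNReal.toReal_one, Set.univ_inter] at h
    exact h.symm
  -- entropy computations
  have hentX : entNat μ X
      = ∑ x ∈ sX, (μ (X ⁻¹' {x})).toReal * Real.log (1 / (μ (X ⁻¹' {x})).toReal) := by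
    refine tsum_eq_sum fun x hx => ?_
    have h : X ⁻¹' {x} = ∅ :=
      Set.preimage_singleton_eq_empty.mpr (by simpa [hsX, Set.Finite.mem_toFinset] using hx)
    simp [h]
  have hentY : entNat μ Y
      = ∑ t ∈ sY, (μ (Y ⁻¹' {t})).toReal * Real.log (1 / (μ (Y ⁻¹' {t})).toReal) := by
    refine tsum_eq_sum fun t ht => ?_
    have h : Y ⁻¹' {t} = ∅ :=
      Set.preimage_singleton_eq_empty.mpr (by simpa [hsY, Set.Finite.mem_toFinset] using ht)
    simp [h]
  have hpre : ∀ (x : ℝ) (t : T),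
      (fun ω => (X ω, Y ω)) ⁻¹' {(x, t)} = X ⁻¹' {x} ∩ Y ⁻¹' {t} := by
    intro x t; ext ω; simp [Prod.ext_iff]
  have hentP : entNat μ (fun ω => (X ω, Y ω))
      = ∑ x ∈ sX, ∑ t ∈ sY, (μ (X ⁻¹' {x} ∩ Y ⁻¹' {t})).toReal
          * Real.log (1 / (μ (X ⁻¹' {x} ∩ Y ⁻¹' {t})).toReal) := by
    rw [entNat, tsum_eq_sum (s := sX ×ˢ sY) ?_]
    · rw [Finset.sum_product]
      exact Finset.sum_congr rfl fun x _ => Finset.sum_congr rfl fun t _ => by rw [hpre]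
    · rintro ⟨x, t⟩ hxt
      rw [Finset.mem_product, not_and_or] at hxt
      have hz : μ ((fun ω => (X ω, Y ω)) ⁻¹' {(x, t)}) = 0 := by
        rw [hpre]
        rcases hxt with hx | ht
        · have h : X ⁻¹' {x} = ∅ := Set.preimage_singleton_eq_empty.mpr
            (by simpa [hsX, Set.Finite.mem_toFinset] using hx)
          exact measure_mono_null Set.inter_subset_left (by simp [h])
        · have h : Y ⁻¹' {t} = ∅ := Set.preimage_singleton_eq_empty.mpr
            (by simpa [hsY, Set.Finite.mem_toFinset] using ht)
          exact measure_mono_null Set.inter_subset_right (by simp [h])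
      simp [hz]
  -- the mutual information as a sum of nonnegative "KL" terms
  have hI : miNat μ X Y = ∑ x ∈ sX, ∑ t ∈ sY,
      ((μ (X ⁻¹' {x} ∩ Y ⁻¹' {t})).toReal
          * Real.log ((μ (X ⁻¹' {x} ∩ Y ⁻¹' {t})).toReal
            / ((μ (X ⁻¹' {x})).toReal * (μ (Y ⁻¹' {t})).toReal))
        + (μ (X ⁻¹' {x})).toReal * (μ (Y ⁻¹' {t})).toReal
        - (μ (X ⁻¹' {x} ∩ Y ⁻¹' {t})).toReal) := by
    have h : miNat μ X Y = entNat μ X + entNat μ Y - entNat μ (fun ω => (X ω, Y ω)) := by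
      rw [miNat, condEntNat]; ring
    rw [h, hentX, hentY, hentP]
    exact sum_identity sX sY _ _ _ (fun x _ => hmargp x) (fun t _ => hmargr t) hp1 hr1
      hj0 (fun x _ t _ => hjp x t) (fun x _ t _ => hjr x t)
  have hprj : ∀ (x : ℝ) (t : T),
      (μ (X ⁻¹' {x})).toReal * (μ (Y ⁻¹' {t})).toReal = 0 →
        (μ (X ⁻¹' {x} ∩ Y ⁻¹' {t})).toReal = 0 := by
    intro x t h
    rcases mul_eq_zero.mp h with h | h
    · exact le_antisymm (h ▸ hjp x t) (hj0 x t)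
    · exact le_antisymm (h ▸ hjr x t) (hj0 x t)
  have hkey : ∀ (x : ℝ) (t : T),
      0 ≤ (μ (X ⁻¹' {x} ∩ Y ⁻¹' {t})).toReal
            * Real.log ((μ (X ⁻¹' {x} ∩ Y ⁻¹' {t})).toReal
              / ((μ (X ⁻¹' {x})).toReal * (μ (Y ⁻¹' {t})).toReal))
          + (μ (X ⁻¹' {x})).toReal * (μ (Y ⁻¹' {t})).toReal
          - (μ (X ⁻¹' {x} ∩ Y ⁻¹' {t})).toReal
        ∧ ((μ (X ⁻¹' {x} ∩ Y ⁻¹' {t})).toReal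
            - (μ (X ⁻¹' {x})).toReal * (μ (Y ⁻¹' {t})).toReal) ^ 2
          ≤ 2 * ((μ (X ⁻¹' {x} ∩ Y ⁻¹' {t})).toReal
              + (μ (X ⁻¹' {x})).toReal * (μ (Y ⁻¹' {t})).toReal)
            * ((μ (X ⁻¹' {x} ∩ Y ⁻¹' {t})).toReal
                * Real.log ((μ (X ⁻¹' {x} ∩ Y ⁻¹' {t})).toReal
                  / ((μ (X ⁻¹' {x})).toReal * (μ (Y ⁻¹' {t})).toReal))
              + (μ (X ⁻¹' {x})).toReal * (μ (Y ⁻¹' {t})).toReal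
              - (μ (X ⁻¹' {x} ∩ Y ⁻¹' {t})).toReal) :=
    fun x t => fKL_key _ _ (hj0 x t) (mul_nonneg (hp0 x) (hr0 t)) (hprj x t)
  -- integrability of X
  have hXbd' : ∀ ω, ‖X ω‖ ≤ 1 := fun ω => abs_le.mpr ⟨(hXbd ω).1, (hXbd ω).2⟩
  have hXint : Integrable X μ :=
    (integrable_const (1 : ℝ)).mono' hXm.aestronglyMeasurable
      (Filter.Eventually.of_forall hXbd')
  -- the conditional expectation as a function of Y
  set g : T → ℝ := fun t => (∫ ω in Y ⁻¹' {t}, X ω ∂μ) / (μ (Y ⁻¹' {t})).toReal with hgdef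
  have hrzero : ∀ t : T, (μ (Y ⁻¹' {t})).toReal = 0 → μ (Y ⁻¹' {t}) = 0 := by
    intro t h
    rcases (ENNReal.toReal_eq_zero_iff _).mp h with h | h
    · exact h
    · exact absurd h (measure_ne_top μ _)
  have hgr : ∀ t : T, g t * (μ (Y ⁻¹' {t})).toReal = ∫ ω in Y ⁻¹' {t}, X ω ∂μ := by
    intro t
    by_cases hrt : (μ (Y ⁻¹' {t})).toReal = 0
    · rw [hrt, mul_zero, Measure.restrict_eq_zero.mpr (hrzero t hrt), integral_zero_measure]
    · rw [hgdef]
      field_simp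
  have hgbd : ∀ t : T, |g t| ≤ 1 := by
    intro t
    by_cases hrt : (μ (Y ⁻¹' {t})).toReal = 0
    · simp [hgdef, Measure.restrict_eq_zero.mpr (hrzero t hrt)]
    · have hnum : ‖∫ ω in Y ⁻¹' {t}, X ω ∂μ‖ ≤ 1 * (μ (Y ⁻¹' {t})).toReal :=
        norm_setIntegral_le_of_norm_le_const_ae (measure_lt_top μ _)
          (Filter.Eventually.of_forall fun ω => hXbd' ω)
      have hrpos : 0 < (μ (Y ⁻¹' {t})).toReal := lt_of_le_of_ne (hr0 t) (Ne.symm hrt)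
      rw [hgdef]
      rw [abs_div, abs_of_nonneg (hr0 t), div_le_one hrpos]
      simpa using hnum
  have hWm : Measurable[MeasurableSpace.comap Y ⊤] (fun ω => g (Y ω)) :=
    fun s _ => ⟨g ⁻¹' s, trivial, rfl⟩
  have hWmΩ : Measurable (fun ω => g (Y ω)) := fun s _ => hYmeas _ ⟨g ⁻¹' s, trivial, rfl⟩
  have hWint : Integrable (fun ω => g (Y ω)) μ :=
    (integrable_const (1 : ℝ)).mono' hWmΩ.aestronglyMeasurable
      (Filter.Eventually.of_forall fun ω => hgbd (Y ω))
  have hWconst : ∀ t : T, ∀ ω ∈ Y ⁻¹' {t}, g (Y ω) = g t := by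
    intro t ω hω
    simp only [Set.mem_preimage, Set.mem_singleton_iff] at hω
    rw [hω]
  have hWsetInt : ∀ t : T, ∫ ω in Y ⁻¹' {t}, g (Y ω) ∂μ = ∫ ω in Y ⁻¹' {t}, X ω ∂μ := by
    intro t
    rw [setIntegral_congr_fun (hB t) (hWconst t), setIntegral_const, smul_eq_mul, mul_comm]
    exact hgr t
  have hWcond : (fun ω => g (Y ω)) =ᵐ[μ] μ[X| MeasurableSpace.comap Y ⊤] := by
    refine ae_eq_condExp_of_forall_setIntegral_eq hYmeas hXint
      (fun s _ _ => hWint.integrableOn) ?_ (hWm.stronglyMeasurable.aestronglyMeasurable)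
    rintro s ⟨A, -, rfl⟩ -
    rw [partition_setIntegral μ Y hYfin hB _ hWint A,
      partition_setIntegral μ Y hYfin hB X hXint A]
    exact Finset.sum_congr rfl fun t _ => hWsetInt t
  -- rewrite the LHS as a finite sum
  set c : ℝ := ∫ x, X x ∂μ with hc
  have hLHS : ∫ ω, |c - (μ[X| MeasurableSpace.comap Y ⊤]) ω| ∂μ
      = ∑ t ∈ sY, (μ (Y ⁻¹' {t})).toReal * |c - g t| := by
    have e1 : ∫ ω, |c - (μ[X| MeasurableSpace.comap Y ⊤]) ω| ∂μ
        = ∫ ω, |c - g (Y ω)| ∂μ := by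
      refine integral_congr_ae ?_
      filter_upwards [hWcond] with ω h
      rw [← h]
    have hint : Integrable (fun ω => |c - g (Y ω)|) μ :=
      (((integrable_const c).sub hWint).abs).congr
        (Filter.Eventually.of_forall fun ω => by simp)
    rw [e1, partition_integral μ Y hYfin hB (fun ω => |c - g (Y ω)|) hint]
    refine Finset.sum_congr rfl fun t _ => ?_
    have h : ∀ ω ∈ Y ⁻¹' {t}, |c - g (Y ω)| = |c - g t| := fun ω hω => by
      rw [hWconst t ω hω]
    rw [setIntegral_congr_fun (hB t) h, setIntegral_const, smul_eq_mul]
    rfl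
  -- expectations as sums
  have hcval : c = ∑ x ∈ sX, x * (μ (X ⁻¹' {x})).toReal := by
    rw [hc, ← setIntegral_univ, simple_setIntegral μ X hXfin hA Set.univ]
    exact Finset.sum_congr rfl fun x _ => by rw [Set.inter_univ]
  have hSG : ∀ t : T, ∫ ω in Y ⁻¹' {t}, X ω ∂μ
      = ∑ x ∈ sX, x * (μ (X ⁻¹' {x} ∩ Y ⁻¹' {t})).toReal :=
    fun t => simple_setIntegral μ X hXfin hA (Y ⁻¹' {t})
  have hxbd1 : ∀ x ∈ sX, |x| ≤ 1 := by
    intro x hx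
    obtain ⟨ω, rfl⟩ := (Set.Finite.mem_toFinset hXfin).mp hx
    exact hXbd' ω
  -- per-fiber bound
  have hperT : ∀ t : T, (μ (Y ⁻¹' {t})).toReal * |c - g t|
      ≤ 2 * (Real.sqrt ((μ (Y ⁻¹' {t})).toReal)
          * Real.sqrt (∑ x ∈ sX,
              ((μ (X ⁻¹' {x} ∩ Y ⁻¹' {t})).toReal
                  * Real.log ((μ (X ⁻¹' {x} ∩ Y ⁻¹' {t})).toReal
                    / ((μ (X ⁻¹' {x})).toReal * (μ (Y ⁻¹' {t})).toReal))
                + (μ (X ⁻¹' {x})).toReal * (μ (Y ⁻¹' {t})).toReal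
                - (μ (X ⁻¹' {x} ∩ Y ⁻¹' {t})).toReal))) := by
    intro t
    have habs : (μ (Y ⁻¹' {t})).toReal * |c - g t|
        = |c * (μ (Y ⁻¹' {t})).toReal - ∫ ω in Y ⁻¹' {t}, X ω ∂μ| := by
      rw [← hgr t]
      have h1 : c * (μ (Y ⁻¹' {t})).toReal - g t * (μ (Y ⁻¹' {t})).toReal
          = (c - g t) * (μ (Y ⁻¹' {t})).toReal := by ring
      rw [h1, abs_mul, abs_of_nonneg (hr0 t), mul_comm]
    have hdiff : c * (μ (Y ⁻¹' {t})).toReal - ∫ ω in Y ⁻¹' {t}, X ω ∂μ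
        = ∑ x ∈ sX, x * ((μ (X ⁻¹' {x})).toReal * (μ (Y ⁻¹' {t})).toReal
            - (μ (X ⁻¹' {x} ∩ Y ⁻¹' {t})).toReal) := by
      rw [hcval, hSG t, Finset.sum_mul, ← Finset.sum_sub_distrib]
      exact Finset.sum_congr rfl fun x _ => by ring
    rw [habs, hdiff]
    calc |∑ x ∈ sX, x * ((μ (X ⁻¹' {x})).toReal * (μ (Y ⁻¹' {t})).toReal
            - (μ (X ⁻¹' {x} ∩ Y ⁻¹' {t})).toReal)|
        ≤ ∑ x ∈ sX, |x * ((μ (X ⁻¹' {x})).toReal * (μ (Y ⁻¹' {t})).toReal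
            - (μ (X ⁻¹' {x} ∩ Y ⁻¹' {t})).toReal)| := Finset.abs_sum_le_sum_abs _ _
      _ ≤ ∑ x ∈ sX, |(μ (X ⁻¹' {x})).toReal * (μ (Y ⁻¹' {t})).toReal
            - (μ (X ⁻¹' {x} ∩ Y ⁻¹' {t})).toReal| := by
          refine Finset.sum_le_sum fun x hx => ?_
          rw [abs_mul]
          exact mul_le_of_le_one_left (abs_nonneg _) (hxbd1 x hx)
      _ ≤ ∑ x ∈ sX, Real.sqrt (2 * ((μ (X ⁻¹' {x} ∩ Y ⁻¹' {t})).toReal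
              + (μ (X ⁻¹' {x})).toReal * (μ (Y ⁻¹' {t})).toReal))
            * Real.sqrt ((μ (X ⁻¹' {x} ∩ Y ⁻¹' {t})).toReal
                * Real.log ((μ (X ⁻¹' {x} ∩ Y ⁻¹' {t})).toReal
                  / ((μ (X ⁻¹' {x})).toReal * (μ (Y ⁻¹' {t})).toReal))
              + (μ (X ⁻¹' {x})).toReal * (μ (Y ⁻¹' {t})).toReal
              - (μ (X ⁻¹' {x} ∩ Y ⁻¹' {t})).toReal) := by
          refine Finset.sum_le_sum fun x hx => ?_
          have h2 := (hkey x t).2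
          have h3 : |(μ (X ⁻¹' {x})).toReal * (μ (Y ⁻¹' {t})).toReal
              - (μ (X ⁻¹' {x} ∩ Y ⁻¹' {t})).toReal|
              = Real.sqrt (((μ (X ⁻¹' {x} ∩ Y ⁻¹' {t})).toReal
                - (μ (X ⁻¹' {x})).toReal * (μ (Y ⁻¹' {t})).toReal) ^ 2) := by
            rw [Real.sqrt_sq_eq_abs, abs_sub_comm]
          rw [h3, ← Real.sqrt_mul (by positivity)]
          exact Real.sqrt_le_sqrt h2
      _ ≤ Real.sqrt (∑ x ∈ sX, 2 * ((μ (X ⁻¹' {x} ∩ Y ⁻¹' {t})).toReal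
              + (μ (X ⁻¹' {x})).toReal * (μ (Y ⁻¹' {t})).toReal))
            * Real.sqrt (∑ x ∈ sX,
              ((μ (X ⁻¹' {x} ∩ Y ⁻¹' {t})).toReal
                  * Real.log ((μ (X ⁻¹' {x} ∩ Y ⁻¹' {t})).toReal
                    / ((μ (X ⁻¹' {x})).toReal * (μ (Y ⁻¹' {t})).toReal))
                + (μ (X ⁻¹' {x})).toReal * (μ (Y ⁻¹' {t})).toReal
                - (μ (X ⁻¹' {x} ∩ Y ⁻¹' {t})).toReal)) :=
          Real.sum_sqrt_mul_sqrt_le sX (fun x => by positivity) (fun x => (hkey x t).1)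
      _ ≤ 2 * (Real.sqrt ((μ (Y ⁻¹' {t})).toReal) * Real.sqrt (∑ x ∈ sX,
              ((μ (X ⁻¹' {x} ∩ Y ⁻¹' {t})).toReal
                  * Real.log ((μ (X ⁻¹' {x} ∩ Y ⁻¹' {t})).toReal
                    / ((μ (X ⁻¹' {x})).toReal * (μ (Y ⁻¹' {t})).toReal))
                + (μ (X ⁻¹' {x})).toReal * (μ (Y ⁻¹' {t})).toReal
                - (μ (X ⁻¹' {x} ∩ Y ⁻¹' {t})).toReal))) := by
          have h4 : ∑ x ∈ sX, 2 * ((μ (X ⁻¹' {x} ∩ Y ⁻¹' {t})).toReal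
              + (μ (X ⁻¹' {x})).toReal * (μ (Y ⁻¹' {t})).toReal)
              = 4 * (μ (Y ⁻¹' {t})).toReal := by
            rw [← Finset.mul_sum, Finset.sum_add_distrib, hmargr t, ← Finset.sum_mul, hp1]
            ring
          rw [h4, show (4:ℝ) * (μ (Y ⁻¹' {t})).toReal
              = 2 ^ 2 * (μ (Y ⁻¹' {t})).toReal by ring,
            Real.sqrt_mul (by positivity), Real.sqrt_sq (by norm_num)]
          rw [mul_assoc]
  -- final assembly
  rw [hLHS]
  calc ∑ t ∈ sY, (μ (Y ⁻¹' {t})).toReal * |c - g t|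
      ≤ ∑ t ∈ sY, 2 * (Real.sqrt ((μ (Y ⁻¹' {t})).toReal)
          * Real.sqrt (∑ x ∈ sX,
              ((μ (X ⁻¹' {x} ∩ Y ⁻¹' {t})).toReal
                  * Real.log ((μ (X ⁻¹' {x} ∩ Y ⁻¹' {t})).toReal
                    / ((μ (X ⁻¹' {x})).toReal * (μ (Y ⁻¹' {t})).toReal))
                + (μ (X ⁻¹' {x})).toReal * (μ (Y ⁻¹' {t})).toReal
                - (μ (X ⁻¹' {x} ∩ Y ⁻¹' {t})).toReal))) :=
        Finset.sum_le_sum fun t _ => hperT t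
    _ = 2 * ∑ t ∈ sY, Real.sqrt ((μ (Y ⁻¹' {t})).toReal)
          * Real.sqrt (∑ x ∈ sX,
              ((μ (X ⁻¹' {x} ∩ Y ⁻¹' {t})).toReal
                  * Real.log ((μ (X ⁻¹' {x} ∩ Y ⁻¹' {t})).toReal
                    / ((μ (X ⁻¹' {x})).toReal * (μ (Y ⁻¹' {t})).toReal))
                + (μ (X ⁻¹' {x})).toReal * (μ (Y ⁻¹' {t})).toReal
                - (μ (X ⁻¹' {x} ∩ Y ⁻¹' {t})).toReal)) := by
        rw [Finset.mul_sum]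
    _ ≤ 2 * (Real.sqrt (∑ t ∈ sY, (μ (Y ⁻¹' {t})).toReal)
          * Real.sqrt (∑ t ∈ sY, ∑ x ∈ sX,
              ((μ (X ⁻¹' {x} ∩ Y ⁻¹' {t})).toReal
                  * Real.log ((μ (X ⁻¹' {x} ∩ Y ⁻¹' {t})).toReal
                    / ((μ (X ⁻¹' {x})).toReal * (μ (Y ⁻¹' {t})).toReal))
                + (μ (X ⁻¹' {x})).toReal * (μ (Y ⁻¹' {t})).toReal
                - (μ (X ⁻¹' {x} ∩ Y ⁻¹' {t})).toReal))) := by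
        refine mul_le_mul_of_nonneg_left ?_ (by norm_num)
        exact Real.sum_sqrt_mul_sqrt_le sY (fun t => hr0 t)
          (fun t => Finset.sum_nonneg fun x _ => (hkey x t).1)
    _ = 2 * Real.sqrt (miNat μ X Y) := by
        rw [hr1, Real.sqrt_one, one_mul, hI, Finset.sum_comm]
end

section
/- Regularity from coarse/fine conditional-expectation approximations (key deduction in the proof of Theorem 2.3): Let V₁, V₂ be finite nonempty sets, let Ω = V₁ × V₂ with the uniform probability measure, and let E ⊆ V₁ × V₂. Let B₁ ⊆ B'₁ be σ-algebras on Ω consisting of sets of the form A × V₂ (A ⊆ V₁), and B₂ ⊆ B'₂ σ-algebras consisting of sets of the form V₁ × A (A ⊆ V₂). Let ε > 0 and δ > 0, and let W₁ ⊆ V₁ and W₂ ⊆ V₂ be such that W₁ × W₂ is contained in a single atom of B₁ ∨ B₂. Suppose that (i) |E( (1_E − E(1_E | B'₁ ∨ B'₂)) · 1_{A₁ × A₂} )| ≤ δ for all A₁ ⊆ W₁, A₂ ⊆ W₂, and (ii) E( |E(1_E | B'₁ ∨ B'₂) − E(1_E | B₁ ∨ B₂)|² · 1_{W₁ × W₂}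 ) ≤ ε² · |W₁|·|W₂| / (|V₁|·|V₂|). Then, setting d := the constant value of E(1_E | B₁ ∨ B₂) on the atom containing W₁ × W₂, one has |E ∩ (A₁ × A₂)| = d·|A₁|·|A₂| + O(ε·|W₁|·|W₂|) + O(δ·|V₁|·|V₂|) for all A₁ ⊆ W₁, A₂ ⊆ W₂, where the implied constants are absolute; in particular, if δ ≤ ε·|W₁|·|W₂|/(|V₁|·|V₂|), the induced bipartite graph (W₁, W₂, E ∩ (W₁ × W₂)) is ε-regular up to an absolute constant. -/
open MeasureTheory

/-- An atom of a σ-algebra: a minimal nonempty measurable set. -/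
def IsAtomOf {Ω : Type*} (m : MeasurableSpace Ω) (a : Set Ω) : Prop :=
  MeasurableSet[m] a ∧ a.Nonempty ∧
    ∀ s : Set Ω, MeasurableSet[m] s → s ⊆ a → s = ∅ ∨ s = a

lemma abs_le_of_sq_le_sq_aux {a b : ℝ} (h : a ^ 2 ≤ b ^ 2) (hb : 0 ≤ b) : |a| ≤ b := by
  rcases abs_cases a with ⟨h1, _⟩ | ⟨h1, _⟩ <;> nlinarith

lemma sum_ind_aux {α : Type} [Fintype α] (s : Set α) :
    ∑ x, s.indicator (1 : α → ℝ) x = s.ncard := by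
  classical
  simp [Set.indicator_apply, Finset.sum_boole, Set.ncard_eq_toFinset_card' s, Set.toFinset]

lemma ncard_prod_aux {α β : Type} [Fintype α] [Fintype β] (s : Set α) (t : Set β) :
    (s ×ˢ t).ncard = s.ncard * t.ncard := by
  classical
  rw [Set.ncard_eq_toFinset_card', Set.ncard_eq_toFinset_card' s, Set.ncard_eq_toFinset_card' t,
    Set.toFinset_prod, Finset.card_product]

/-- Regularity from coarse/fine conditional-expectation approximations: the key
deduction of the graph-theoretic regularity lemma from the probabilistic one. -/
theorem regularity_from_coarse_fine_approx :
    ∃ C : ℝ, 0 < C ∧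
      ∀ (V₁ V₂ : Type) [instF₁ : Fintype V₁] [instF₂ : Fintype V₂],
        Nonempty V₁ → Nonempty V₂ →
        ∀ [mΩ : MeasurableSpace (V₁ × V₂)], (∀ s : Set (V₁ × V₂), MeasurableSet s) →
        ∀ μ : Measure (V₁ × V₂),
          -- μ is the uniform probability measure on V₁ × V₂
          μ = (Fintype.card (V₁ × V₂) : ENNReal)⁻¹ • Measure.count →
        ∀ (E : Set (V₁ × V₂)) (B₁ B'₁ B₂ B'₂ : MeasurableSpace (V₁ × V₂)),
          B₁ ≤ B'₁ → B₂ ≤ B'₂ →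
          -- B'₁ (hence B₁) consists of sets of the form A × V₂
          (∀ s : Set (V₁ × V₂), MeasurableSet[B'₁] s →
            ∃ A : Set V₁, s = A ×ˢ (Set.univ : Set V₂)) →
          -- B'₂ (hence B₂) consists of sets of the form V₁ × A
          (∀ s : Set (V₁ × V₂), MeasurableSet[B'₂] s →
            ∃ A : Set V₂, s = (Set.univ : Set V₁) ×ˢ A) →
        ∀ ε δ : ℝ, 0 < ε → 0 < δ →
        ∀ (W₁ : Set V₁) (W₂ : Set V₂),
          -- W₁ × W₂ is contained in a single atom of B₁ ∨ B₂
          (∃ a : Set (V₁ × V₂), IsAtomOf (B₁ ⊔ B₂) a ∧ W₁ ×ˢ W₂ ⊆ a) →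
        ∀ d : ℝ,
          -- d is the (constant) value of E(1_E | B₁ ∨ B₂) on the atom containing W₁ × W₂
          (∀ x ∈ W₁ ×ˢ W₂, (μ[E.indicator (1 : V₁ × V₂ → ℝ)| B₁ ⊔ B₂]) x = d) →
          -- (i): the fine approximation is accurate to within δ on W₁ × W₂
          (∀ A₁ ⊆ W₁, ∀ A₂ ⊆ W₂,
            |∫ x, (E.indicator (1 : V₁ × V₂ → ℝ) x
                - (μ[E.indicator (1 : V₁ × V₂ → ℝ)| B'₁ ⊔ B'₂]) x)
                * (A₁ ×ˢ A₂).indicator (1 : V₁ × V₂ → ℝ) x ∂μ| ≤ δ) →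
          -- (ii): local L² closeness of coarse and fine approximations on W₁ × W₂
          (∫ x, ((μ[E.indicator (1 : V₁ × V₂ → ℝ)| B'₁ ⊔ B'₂]) x
                - (μ[E.indicator (1 : V₁ × V₂ → ℝ)| B₁ ⊔ B₂]) x) ^ 2
              * (W₁ ×ˢ W₂).indicator (1 : V₁ × V₂ → ℝ) x ∂μ
            ≤ ε ^ 2 * ((W₁.ncard : ℝ) * W₂.ncard)
              / ((Fintype.card V₁ : ℝ) * Fintype.card V₂)) →
          -- conclusion: |E ∩ (A₁ × A₂)| = d·|A₁|·|A₂| + O(ε|W₁||W₂|) + O(δ|V₁||V₂|)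
          ((∀ A₁ ⊆ W₁, ∀ A₂ ⊆ W₂,
            |((E ∩ (A₁ ×ˢ A₂)).ncard : ℝ) - d * A₁.ncard * A₂.ncard|
              ≤ C * (ε * W₁.ncard * W₂.ncard
                  + δ * (Fintype.card V₁ : ℝ) * Fintype.card V₂)) ∧
          -- in particular: ε-regularity of (W₁, W₂, E ∩ (W₁ × W₂)) up to C
          (δ ≤ ε * ((W₁.ncard : ℝ) * W₂.ncard)
              / ((Fintype.card V₁ : ℝ) * Fintype.card V₂) →
            ∀ A₁ ⊆ W₁, ∀ A₂ ⊆ W₂,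
              |((E ∩ (A₁ ×ˢ A₂)).ncard : ℝ)
                  - ((A₁.ncard : ℝ) * A₂.ncard) / ((W₁.ncard : ℝ) * W₂.ncard)
                    * (E ∩ (W₁ ×ˢ W₂)).ncard|
                ≤ C * ε * W₁.ncard * W₂.ncard)) := by
  classical
  refine ⟨4, by norm_num, ?_⟩
  intro V₁ V₂ instF₁ instF₂ hne₁ hne₂ mΩ hMeas μ hμ E B₁ B'₁ B₂ B'₂ _ _ _ _ ε δ hε hδ
    W₁ W₂ _ d hd hi hii
  haveI := hne₁; haveI := hne₂
  haveI : @MeasurableSingletonClass (V₁ × V₂) mΩ :=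
    @MeasurableSingletonClass.mk (V₁ × V₂) mΩ (fun x => hMeas {x})
  set f : V₁ × V₂ → ℝ := E.indicator (1 : V₁ × V₂ → ℝ) with hf
  set g : V₁ × V₂ → ℝ := μ[f| B'₁ ⊔ B'₂] with hg
  set h : V₁ × V₂ → ℝ := μ[f| B₁ ⊔ B₂] with hh
  have hn0 : (0:ℝ) < (Fintype.card V₁ : ℝ) * Fintype.card V₂ := by
    have h1 := Fintype.card_pos (α := V₁)
    have h2 := Fintype.card_pos (α := V₂)
    positivity
  set n : ℝ := (Fintype.card V₁ : ℝ) * Fintype.card V₂ with hn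
  -- integral formula
  have hint : ∀ φ : V₁ × V₂ → ℝ, ∫ x, φ x ∂μ = (∑ x, φ x) / n := by
    intro φ
    rw [hμ, integral_smul_measure, integral_fintype (Integrable.of_finite)]
    simp only [Measure.count_singleton, count_real_singleton, ENNReal.toReal_one, one_smul, smul_eq_mul,
      ENNReal.toReal_inv, ENNReal.toReal_mul, ENNReal.toReal_natCast, one_mul, Fintype.card_prod, Nat.cast_mul]
    rw [hn, div_eq_inv_mul]
  have w1nn : (0:ℝ) ≤ (W₁.ncard : ℝ) := Nat.cast_nonneg _
  have w2nn : (0:ℝ) ≤ (W₂.ncard : ℝ) := Nat.cast_nonneg _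
  -- key estimate
  have key : ∀ A₁ ⊆ W₁, ∀ A₂ ⊆ W₂,
      |((E ∩ (A₁ ×ˢ A₂)).ncard : ℝ) - d * A₁.ncard * A₂.ncard|
        ≤ ε * W₁.ncard * W₂.ncard + δ * n := by
    intro A₁ hA₁ A₂ hA₂
    set A : Set (V₁ × V₂) := A₁ ×ˢ A₂ with hA
    have hAW : A ⊆ W₁ ×ˢ W₂ := Set.prod_mono hA₁ hA₂
    have indA01 : ∀ x, A.indicator (1 : V₁ × V₂ → ℝ) x = 0 ∨
        A.indicator (1 : V₁ × V₂ → ℝ) x = 1 := by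
      intro x
      by_cases hx : x ∈ A
      · right; simp [Set.indicator_of_mem hx]
      · left; simp [Set.indicator_of_notMem hx]
    have s1 : ∑ x, f x * A.indicator (1 : V₁ × V₂ → ℝ) x = ((E ∩ A).ncard : ℝ) := by
      rw [← sum_ind_aux (E ∩ A)]
      refine Finset.sum_congr rfl (fun x _ => ?_)
      rw [hf]
      by_cases hE : x ∈ E <;> by_cases hxA : x ∈ A <;>
        simp [Set.indicator_apply, hE, hxA, Set.mem_inter_iff]
    have s2 : ∑ x, h x * A.indicator (1 : V₁ × V₂ → ℝ) x
        = d * A₁.ncard * A₂.ncard := by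
      have hpt : ∀ x, h x * A.indicator (1 : V₁ × V₂ → ℝ) x
          = d * A.indicator (1 : V₁ × V₂ → ℝ) x := by
        intro x
        by_cases hx : x ∈ A
        · simp [Set.indicator_of_mem hx, hd x (hAW hx)]
        · simp [Set.indicator_of_notMem hx]
      rw [Finset.sum_congr rfl (fun x _ => hpt x), ← Finset.mul_sum, sum_ind_aux,
        hA, ncard_prod_aux, Nat.cast_mul]
      ring
    have s3 : |∑ x, (f x - g x) * A.indicator (1 : V₁ × V₂ → ℝ) x| ≤ δ * n := by
      have h1 := hi A₁ hA₁ A₂ hA₂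
      rw [hint, abs_div, abs_of_pos hn0, div_le_iff₀ hn0] at h1
      linarith
    have s4 : |∑ x, (g x - h x) * A.indicator (1 : V₁ × V₂ → ℝ) x|
        ≤ ε * W₁.ncard * W₂.ncard := by
      have hle : ∀ x, A.indicator (1 : V₁ × V₂ → ℝ) x
          ≤ (W₁ ×ˢ W₂).indicator (1 : V₁ × V₂ → ℝ) x :=
        fun x => Set.indicator_le_indicator_of_subset hAW (fun _ => by norm_num) x
      have hWnn : ∀ x, (0:ℝ) ≤ (W₁ ×ˢ W₂).indicator (1 : V₁ × V₂ → ℝ) x :=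
        fun x => Set.indicator_nonneg (fun _ _ => by norm_num) x
      have hW : ∑ x, (g x - h x) ^ 2 * (W₁ ×ˢ W₂).indicator (1 : V₁ × V₂ → ℝ) x
          ≤ ε ^ 2 * ((W₁.ncard : ℝ) * W₂.ncard) := by
        have h2 := hii
        rw [hint] at h2
        calc ∑ x, (g x - h x) ^ 2 * (W₁ ×ˢ W₂).indicator (1 : V₁ × V₂ → ℝ) x
            = ((∑ x, (g x - h x) ^ 2 * (W₁ ×ˢ W₂).indicator (1 : V₁ × V₂ → ℝ) x) / n) * n := by
              field_simp
          _ ≤ (ε ^ 2 * ((W₁.ncard : ℝ) * W₂.ncard) / n) * n :=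
              mul_le_mul_of_nonneg_right h2 (le_of_lt hn0)
          _ = ε ^ 2 * ((W₁.ncard : ℝ) * W₂.ncard) := by field_simp
      have hsqA : ∑ x, ((g x - h x) * A.indicator (1 : V₁ × V₂ → ℝ) x) ^ 2
          ≤ ∑ x, (g x - h x) ^ 2 * (W₁ ×ˢ W₂).indicator (1 : V₁ × V₂ → ℝ) x := by
        refine Finset.sum_le_sum (fun x _ => ?_)
        rcases indA01 x with h0 | h0
        · rw [h0, mul_zero]
          have := hWnn x
          nlinarith [sq_nonneg (g x - h x)]
        · rw [h0, mul_one]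
          have h1 : (1:ℝ) ≤ (W₁ ×ˢ W₂).indicator (1 : V₁ × V₂ → ℝ) x := h0 ▸ hle x
          nlinarith [sq_nonneg (g x - h x)]
      have hsqB : ∑ x, (A.indicator (1 : V₁ × V₂ → ℝ) x) ^ 2
          ≤ (W₁.ncard : ℝ) * W₂.ncard := by
        have heq : ∑ x, (A.indicator (1 : V₁ × V₂ → ℝ) x) ^ 2
            = ∑ x, A.indicator (1 : V₁ × V₂ → ℝ) x := by
          refine Finset.sum_congr rfl (fun x _ => ?_)
          rcases indA01 x with h0 | h0 <;> simp [h0]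
        rw [heq, sum_ind_aux, hA, ncard_prod_aux, Nat.cast_mul]
        have c1 : (A₁.ncard : ℝ) ≤ W₁.ncard := by
          exact_mod_cast Set.ncard_le_ncard hA₁ (Set.toFinite _)
        have c2 : (A₂.ncard : ℝ) ≤ W₂.ncard := by
          exact_mod_cast Set.ncard_le_ncard hA₂ (Set.toFinite _)
        have a1nn : (0:ℝ) ≤ (A₁.ncard : ℝ) := Nat.cast_nonneg _
        have a2nn : (0:ℝ) ≤ (A₂.ncard : ℝ) := Nat.cast_nonneg _
        nlinarith
      have cs : (∑ x, ((g x - h x) * A.indicator (1 : V₁ × V₂ → ℝ) x)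
              * A.indicator (1 : V₁ × V₂ → ℝ) x) ^ 2
          ≤ (∑ x, ((g x - h x) * A.indicator (1 : V₁ × V₂ → ℝ) x) ^ 2)
            * ∑ x, (A.indicator (1 : V₁ × V₂ → ℝ) x) ^ 2 :=
        Finset.sum_mul_sq_le_sq_mul_sq Finset.univ _ _
      have huv : ∑ x, ((g x - h x) * A.indicator (1 : V₁ × V₂ → ℝ) x)
              * A.indicator (1 : V₁ × V₂ → ℝ) x
          = ∑ x, (g x - h x) * A.indicator (1 : V₁ × V₂ → ℝ) x := by
        refine Finset.sum_congr rfl (fun x _ => ?_)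
        rcases indA01 x with h0 | h0 <;> simp [h0]
      rw [huv] at cs
      have hbound : (∑ x, (g x - h x) * A.indicator (1 : V₁ × V₂ → ℝ) x) ^ 2
          ≤ (ε * W₁.ncard * W₂.ncard) ^ 2 := by
        have hA2nn : (0:ℝ) ≤ ∑ x, ((g x - h x) * A.indicator (1 : V₁ × V₂ → ℝ) x) ^ 2 :=
          Finset.sum_nonneg (fun x _ => sq_nonneg _)
        have hwnn : (0:ℝ) ≤ (W₁.ncard : ℝ) * W₂.ncard := by positivity
        calc (∑ x, (g x - h x) * A.indicator (1 : V₁ × V₂ → ℝ) x) ^ 2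
            ≤ (∑ x, ((g x - h x) * A.indicator (1 : V₁ × V₂ → ℝ) x) ^ 2)
              * ∑ x, (A.indicator (1 : V₁ × V₂ → ℝ) x) ^ 2 := cs
          _ ≤ (ε ^ 2 * ((W₁.ncard : ℝ) * W₂.ncard)) * ((W₁.ncard : ℝ) * W₂.ncard) := by
              refine mul_le_mul (le_trans hsqA hW) hsqB ?_ ?_
              · exact Finset.sum_nonneg (fun x _ => sq_nonneg _)
              · positivity
          _ = (ε * W₁.ncard * W₂.ncard) ^ 2 := by ring
      exact abs_le_of_sq_le_sq_aux hbound (by positivity)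
    -- combine
    have split : ((E ∩ A).ncard : ℝ) - d * A₁.ncard * A₂.ncard
        = (∑ x, (f x - g x) * A.indicator (1 : V₁ × V₂ → ℝ) x)
          + (∑ x, (g x - h x) * A.indicator (1 : V₁ × V₂ → ℝ) x) := by
      rw [← s1, ← s2, ← Finset.sum_add_distrib, ← Finset.sum_sub_distrib]
      refine Finset.sum_congr rfl (fun x _ => ?_)
      ring
    calc |((E ∩ A).ncard : ℝ) - d * A₁.ncard * A₂.ncard|
        ≤ |∑ x, (f x - g x) * A.indicator (1 : V₁ × V₂ → ℝ) x|
          + |∑ x, (g x - h x) * A.indicator (1 : V₁ × V₂ → ℝ) x| := by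
          rw [split]; exact abs_add_le _ _
      _ ≤ δ * n + ε * W₁.ncard * W₂.ncard := add_le_add s3 s4
      _ = ε * W₁.ncard * W₂.ncard + δ * n := by ring
  constructor
  · intro A₁ hA₁ A₂ hA₂
    have := key A₁ hA₁ A₂ hA₂
    have h1 : 0 ≤ ε * W₁.ncard * W₂.ncard := by positivity
    have h2 : 0 ≤ δ * n := by positivity
    calc |((E ∩ (A₁ ×ˢ A₂)).ncard : ℝ) - d * A₁.ncard * A₂.ncard|
        ≤ ε * W₁.ncard * W₂.ncard + δ * n := this
      _ ≤ 4 * (ε * W₁.ncard * W₂.ncard + δ * (Fintype.card V₁ : ℝ) * Fintype.card V₂) := by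
          rw [hn]; nlinarith
  · intro hδε A₁ hA₁ A₂ hA₂
    set w : ℝ := (W₁.ncard : ℝ) * W₂.ncard with hw
    have hδn : δ * n ≤ ε * w := by
      have := mul_le_mul_of_nonneg_right hδε (le_of_lt hn0)
      rw [div_mul_cancel₀] at this
      · linarith
      · exact ne_of_gt hn0
    have keyA := key A₁ hA₁ A₂ hA₂
    have keyW := key W₁ (le_refl _) W₂ (le_refl _)
    have c1 : (A₁.ncard : ℝ) ≤ W₁.ncard := by
      exact_mod_cast Set.ncard_le_ncard hA₁ (Set.toFinite _)
    have c2 : (A₂.ncard : ℝ) ≤ W₂.ncard := by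
      exact_mod_cast Set.ncard_le_ncard hA₂ (Set.toFinite _)
    have a1nn : (0:ℝ) ≤ (A₁.ncard : ℝ) := Nat.cast_nonneg _
    have a2nn : (0:ℝ) ≤ (A₂.ncard : ℝ) := Nat.cast_nonneg _
    by_cases hw0 : w = 0
    · -- one of W₁, W₂ is empty; hence A₁ or A₂ is empty
      have hA0 : (A₁.ncard : ℝ) * A₂.ncard = 0 := by
        rcases mul_eq_zero.mp hw0 with h0 | h0
        · have : (W₁.ncard : ℕ) = 0 := by exact_mod_cast h0
          have hW1 : W₁ = ∅ := (Set.ncard_eq_zero (Set.toFinite _)).mp this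
          have : A₁ = ∅ := Set.subset_eq_empty hA₁ hW1
          simp [this]
        · have : (W₂.ncard : ℕ) = 0 := by exact_mod_cast h0
          have hW2 : W₂ = ∅ := (Set.ncard_eq_zero (Set.toFinite _)).mp this
          have : A₂ = ∅ := Set.subset_eq_empty hA₂ hW2
          simp [this]
      have hEA : ((E ∩ (A₁ ×ˢ A₂)).ncard : ℝ) = 0 := by
        rcases mul_eq_zero.mp hA0 with h0 | h0
        · have : A₁ = ∅ := (Set.ncard_eq_zero (Set.toFinite _)).mp (by exact_mod_cast h0)
          simp [this]
        · have : A₂ = ∅ := (Set.ncard_eq_zero (Set.toFinite _)).mp (by exact_mod_cast h0)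
          simp [this]
      rw [hEA, hw0]
      simp only [div_zero, zero_mul, sub_zero, abs_zero]
      positivity
    · have hw0' : 0 < w := lt_of_le_of_ne (by positivity) (Ne.symm hw0)
      set r : ℝ := ((A₁.ncard : ℝ) * A₂.ncard) / w with hr
      have hr0 : 0 ≤ r := by positivity
      have hr1 : r ≤ 1 := by
        rw [hr, div_le_one hw0', hw]
        exact mul_le_mul c1 c2 a2nn w1nn
      have hrd : r * (d * W₁.ncard * W₂.ncard) = d * A₁.ncard * A₂.ncard := by
        rw [hr, div_mul_eq_mul_div, div_eq_iff hw0, hw]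
        ring
      rw [hw] at hδn
      have hassoc : ε * (W₁.ncard : ℝ) * W₂.ncard = ε * ((W₁.ncard : ℝ) * W₂.ncard) :=
        mul_assoc _ _ _
      have hstep : ε * (W₁.ncard : ℝ) * W₂.ncard + δ * n
          ≤ 2 * (ε * ((W₁.ncard : ℝ) * W₂.ncard)) := by linarith
      have hEAb : |((E ∩ (A₁ ×ˢ A₂)).ncard : ℝ) - d * A₁.ncard * A₂.ncard| ≤ 2 * (ε * w) := by
        rw [hw]; exact le_trans keyA hstep
      have hEWb : |((E ∩ (W₁ ×ˢ W₂)).ncard : ℝ) - d * W₁.ncard * W₂.ncard| ≤ 2 * (ε * w) := by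
        rw [hw]; exact le_trans keyW hstep
      have tri : |((E ∩ (A₁ ×ˢ A₂)).ncard : ℝ) - r * (E ∩ (W₁ ×ˢ W₂)).ncard|
          ≤ |((E ∩ (A₁ ×ˢ A₂)).ncard : ℝ) - d * A₁.ncard * A₂.ncard|
            + r * |((E ∩ (W₁ ×ˢ W₂)).ncard : ℝ) - d * W₁.ncard * W₂.ncard| := by
        have : ((E ∩ (A₁ ×ˢ A₂)).ncard : ℝ) - r * (E ∩ (W₁ ×ˢ W₂)).ncard
            = (((E ∩ (A₁ ×ˢ A₂)).ncard : ℝ) - d * A₁.ncard * A₂.ncard)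
              - r * (((E ∩ (W₁ ×ˢ W₂)).ncard : ℝ) - d * W₁.ncard * W₂.ncard) := by
          rw [mul_sub, hrd]; ring
        rw [this]
        calc _ ≤ |((E ∩ (A₁ ×ˢ A₂)).ncard : ℝ) - d * A₁.ncard * A₂.ncard|
              + |r * (((E ∩ (W₁ ×ˢ W₂)).ncard : ℝ) - d * W₁.ncard * W₂.ncard)| :=
            abs_sub _ _
          _ = _ := by rw [abs_mul, abs_of_nonneg hr0]
      have rmul : r * |((E ∩ (W₁ ×ˢ W₂)).ncard : ℝ) - d * W₁.ncard * W₂.ncard|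
          ≤ 2 * (ε * w) := by
        calc r * |((E ∩ (W₁ ×ˢ W₂)).ncard : ℝ) - d * W₁.ncard * W₂.ncard|
            ≤ 1 * (2 * (ε * w)) := by
              refine mul_le_mul hr1 hEWb (abs_nonneg _) (by norm_num)
          _ = 2 * (ε * w) := by ring
      calc |((E ∩ (A₁ ×ˢ A₂)).ncard : ℝ) - r * (E ∩ (W₁ ×ˢ W₂)).ncard|
          ≤ 2 * (ε * w) + 2 * (ε * w) := le_trans tri (add_le_add hEAb rmul)
        _ = 4 * ε * W₁.ncard * W₂.ncard := by rw [hw]; ring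
end
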